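/- arXiv:2302.03363 — 5 statements merged into one kernel-verified Lean document; each statement's English description precedes it below -/
import Mathlib

section
/- Let α, β, γ be real numbers with α > -1/2, γ > -1 and α + β + γ > -3/2. For t ≥ 1 define F(t) = ∫₀¹ s^{2α} (∫ₛ¹ u^β (u−s)^γ du) (∫ₜ^{t+1} v^β (v−s)^γ dv) ds. Then lim_{t→+∞} t^{−(β+γ)} F(t) = B(2α+1, γ+1) / (2α+β+γ+2), where B(a,b) = Γ(a)Γ(b)/Γ(a+b) is the Beta function. -/
open MeasureTheory Filter intervalIntegral Set
open scoped Topology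

lemma rbeta (a b : ℝ) (ha : 0 < a) (hb : 0 < b) {u : ℝ} (hu : 0 < u) :
    ∫ s in (0:ℝ)..u, s ^ (a-1) * (u - s) ^ (b-1)
      = u ^ (a+b-1) * (Real.Gamma a * Real.Gamma b / Real.Gamma (a+b)) := by
  have h1 : ((∫ s in (0:ℝ)..u, s ^ (a-1) * (u - s) ^ (b-1) : ℝ) : ℂ)
      = ∫ s in (0:ℝ)..u, ((s:ℂ) ^ ((a:ℂ)-1) * ((u:ℂ) - s) ^ ((b:ℂ)-1)) := by
    rw [← intervalIntegral.integral_ofReal]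
    refine intervalIntegral.integral_congr fun x hx => ?_
    rw [Set.uIcc_of_le hu.le] at hx
    rw [Complex.ofReal_mul, Complex.ofReal_cpow hx.1,
      Complex.ofReal_cpow (by linarith [hx.2] : (0:ℝ) ≤ u - x)]
    push_cast; ring
  have h2 := Complex.betaIntegral_scaled (a:ℂ) (b:ℂ) hu
  have hre : 0 < Complex.re (a:ℂ) := by simpa using ha
  have hre' : 0 < Complex.re (b:ℂ) := by simpa using hb
  have h3 := Complex.Gamma_mul_Gamma_eq_betaIntegral hre hre'
  have hG : Complex.Gamma ((a:ℂ) + b) ≠ 0 := by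
    apply Complex.Gamma_ne_zero_of_re_pos; simpa using by positivity
  have hbeta : Complex.betaIntegral a b
      = ((Real.Gamma a * Real.Gamma b / Real.Gamma (a+b) : ℝ) : ℂ) := by
    have : Complex.betaIntegral a b
        = Complex.Gamma a * Complex.Gamma b / Complex.Gamma ((a:ℂ)+b) := by
      rw [h3]; field_simp
    rw [this, (by push_cast; ring : ((a:ℂ)+b) = ((a+b : ℝ) : ℂ)),
      Complex.Gamma_ofReal, Complex.Gamma_ofReal, Complex.Gamma_ofReal]
    push_cast; ring
  have h4 : ((∫ s in (0:ℝ)..u, s ^ (a-1) * (u - s) ^ (b-1) : ℝ) : ℂ)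
      = ((u ^ (a+b-1) * (Real.Gamma a * Real.Gamma b / Real.Gamma (a+b)) : ℝ) : ℂ) := by
    rw [h1, h2, hbeta, Complex.ofReal_mul,
      (show ((a:ℂ)+(b:ℂ)-1) = ((a+b-1:ℝ):ℂ) by push_cast; ring),
      ← Complex.ofReal_cpow hu.le]
  exact_mod_cast h4

lemma intInt {a b : ℝ} (ha : -1 < a) (hb : -1 < b) {u : ℝ} (hu : 0 < u) :
    IntervalIntegrable (fun s => s ^ a * (u - s) ^ b) volume 0 u := by
  have h1 : IntervalIntegrable (fun s => s ^ a * (u - s) ^ b) volume 0 (u/2) := by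
    apply (intervalIntegrable_rpow' ha).mul_continuousOn
    apply ContinuousOn.rpow_const (continuousOn_const.sub continuousOn_id)
    intro x hx
    rw [uIcc_of_le (by linarith)] at hx
    exact Or.inl (by intro h; simp only [Pi.sub_apply, id] at h; nlinarith [hx.1, hx.2])
  have h2 : IntervalIntegrable (fun s => s ^ a * (u - s) ^ b) volume (u/2) u := by
    have hb' : IntervalIntegrable (fun s => (u - s) ^ b) volume (u/2) u := by
      have := (intervalIntegrable_rpow' (a := 0) (b := u/2) hb).comp_sub_left u
      simpa [sub_half] using this.symm
    apply hb'.continuousOn_mul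
    apply ContinuousOn.rpow_const continuousOn_id
    intro x hx
    rw [uIcc_of_le (by linarith)] at hx
    exact Or.inl (by simp only [id]; intro h; nlinarith [hx.1, hx.2])
  exact h1.trans h2

lemma intInner {β γ : ℝ} (hγ : -1 < γ) {s : ℝ} (hs : 0 < s) (hs1 : s ≤ 1) :
    IntervalIntegrable (fun u => u ^ β * (u - s) ^ γ) volume s 1 := by
  have h1 : IntervalIntegrable (fun u => (u - s) ^ γ) volume s 1 := by
    have := (intervalIntegrable_rpow' (a := 0) (b := 1 - s) hγ).comp_sub_right s
    simpa using this
  refine h1.continuousOn_mul (ContinuousOn.rpow_const continuousOn_id fun x hx => Or.inl ?_)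
  rw [uIcc_of_le hs1] at hx
  exact ne_of_gt (lt_of_lt_of_le hs hx.1)

lemma G_nonneg {β γ : ℝ} {s : ℝ} (hs : 0 ≤ s) (hs1 : s ≤ 1) :
    0 ≤ ∫ u in s..1, u ^ β * (u - s) ^ γ :=
  intervalIntegral.integral_nonneg hs1 fun u hu =>
    mul_nonneg (Real.rpow_nonneg (le_trans hs hu.1) _)
      (Real.rpow_nonneg (by linarith [hu.1]) _)

lemma fubini_C {a β γ : ℝ} (ha : -1 < a) (hγ : -1 < γ) (habγ : -2 < a + β + γ) :
    IntegrableOn (fun s => s ^ a * ∫ u in s..1, u ^ β * (u - s) ^ γ) (Ioo (0:ℝ) 1) volume ∧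
    ∫ s in Ioo (0:ℝ) 1, s ^ a * ∫ u in s..1, u ^ β * (u - s) ^ γ
      = Real.Gamma (a+1) * Real.Gamma (γ+1) / Real.Gamma (a+γ+2) / (a+β+γ+2) := by
  set B : ℝ := Real.Gamma (a+1) * Real.Gamma (γ+1) / Real.Gamma (a+γ+2) with hB
  have hBpos : 0 < B :=
    div_pos (mul_pos (Real.Gamma_pos_of_pos (by linarith)) (Real.Gamma_pos_of_pos (by linarith)))
      (Real.Gamma_pos_of_pos (by linarith))
  have hcpos : 0 < a + β + γ + 2 := by linarith
  set φ : ℝ → ℝ := fun s => s ^ a * ∫ u in s..1, u ^ β * (u - s) ^ γ with hφ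
  set H : ℝ × ℝ → ℝ :=
    fun p => if p.1 < p.2 then p.1 ^ a * (p.2 ^ β * (p.2 - p.1) ^ γ) else 0 with hH
  have hHm : Measurable H := by
    apply Measurable.ite (measurableSet_lt measurable_fst measurable_snd) _ measurable_const
    exact (measurable_fst.pow_const a).mul
      ((measurable_snd.pow_const β).mul ((measurable_snd.sub measurable_fst).pow_const γ))
  set μ := volume.restrict (Ioo (0:ℝ) 1) with hμ
  -- the u-inner integral, for fixed s
  have keyu : ∀ s : ℝ, (fun u => H (s, u))
      = (Ioi s).indicator (fun u => s ^ a * (u ^ β * (u - s) ^ γ)) := by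
    intro s; funext u
    simp only [hH, Set.indicator_apply, mem_Ioi]
  have hset1 : ∀ s ∈ Ioo (0:ℝ) 1, Ioi s ∩ Ioo (0:ℝ) 1 = Ioo s 1 := by
    intro s hs; ext x
    simp only [mem_inter_iff, mem_Ioi, mem_Ioo]
    constructor
    · rintro ⟨h1, _, h3⟩; exact ⟨h1, h3⟩
    · rintro ⟨h1, h2⟩; exact ⟨h1, lt_trans hs.1 h1, h2⟩
  have hint2 : ∀ s ∈ Ioo (0:ℝ) 1,
      IntegrableOn (fun u => s ^ a * (u ^ β * (u - s) ^ γ)) (Ioo s 1) volume := by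
    intro s hs
    have h0 := (intInner (β := β) hγ hs.1 hs.2.le).const_mul (s ^ a)
    rw [intervalIntegrable_iff_integrableOn_Ioo_of_le hs.2.le] at h0
    exact h0
  have hBoch : ∀ s ∈ Ioo (0:ℝ) 1, ∫ u, H (s, u) ∂μ = φ s := by
    intro s hs
    rw [keyu s, hμ, MeasureTheory.integral_indicator measurableSet_Ioi,
      Measure.restrict_restrict measurableSet_Ioi, hset1 s hs,
      ← integral_Ioc_eq_integral_Ioo, ← intervalIntegral.integral_of_le hs.2.le,
      intervalIntegral.integral_const_mul]
  have hLint : ∀ s ∈ Ioo (0:ℝ) 1,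
      ∫⁻ u, ENNReal.ofReal (H (s, u)) ∂μ = ENNReal.ofReal (φ s) := by
    intro s hs
    have e1 : (fun u => ENNReal.ofReal (H (s, u)))
        = (Ioi s).indicator (fun u => ENNReal.ofReal (s ^ a * (u ^ β * (u - s) ^ γ))) := by
      funext u
      rw [show ENNReal.ofReal (H (s, u)) = ENNReal.ofReal ((fun u => H (s, u)) u) from rfl, keyu s]
      simp only [Set.indicator_apply]
      split <;> simp
    rw [e1, hμ, lintegral_indicator measurableSet_Ioi,
      Measure.restrict_restrict measurableSet_Ioi, hset1 s hs,
      ← ofReal_integral_eq_lintegral_ofReal (hint2 s hs) ?_]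
    · congr 1
      rw [← integral_Ioc_eq_integral_Ioo, ← intervalIntegral.integral_of_le hs.2.le,
        intervalIntegral.integral_const_mul]
    · filter_upwards [self_mem_ae_restrict measurableSet_Ioo] with u hu
      have h1 : (0:ℝ) < s := hs.1
      have h2 : (0:ℝ) < u - s := sub_pos.2 hu.1
      have h3 : (0:ℝ) < u := lt_trans h1 hu.1
      positivity
  -- the s-inner integral, for fixed u
  have keys : ∀ u : ℝ, (fun s => H (s, u))
      = (Iio u).indicator (fun s => s ^ a * (u ^ β * (u - s) ^ γ)) := by
    intro u; funext s
    simp only [hH, Set.indicator_apply, mem_Iio]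
  have hset2 : ∀ u ∈ Ioo (0:ℝ) 1, Iio u ∩ Ioo (0:ℝ) 1 = Ioo 0 u := by
    intro u hu; ext x
    simp only [mem_inter_iff, mem_Iio, mem_Ioo]
    constructor
    · rintro ⟨h1, h2, _⟩; exact ⟨h2, h1⟩
    · rintro ⟨h1, h2⟩; exact ⟨h2, h1, lt_trans h2 hu.2⟩
  have hint3 : ∀ u ∈ Ioo (0:ℝ) 1,
      IntegrableOn (fun s => s ^ a * (u ^ β * (u - s) ^ γ)) (Ioo 0 u) volume := by
    intro u hu
    have h0 := (intInt ha hγ hu.1).const_mul (u ^ β)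
    rw [intervalIntegrable_iff_integrableOn_Ioo_of_le hu.1.le] at h0
    exact h0.congr_fun (fun s _ => by ring) measurableSet_Ioo
  have hval : ∀ u ∈ Ioo (0:ℝ) 1,
      ∫ s in Ioo (0:ℝ) u, s ^ a * (u ^ β * (u - s) ^ γ) = u ^ β * (u ^ (a+γ+1) * B) := by
    intro u hu
    have hb := rbeta (a+1) (γ+1) (by linarith) (by linarith) hu.1
    rw [show a+1-1 = a by ring, show γ+1-1 = γ by ring, show a+1+(γ+1)-1 = a+γ+1 by ring,
      show a+1+(γ+1) = a+γ+2 by ring] at hb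
    rw [← integral_Ioc_eq_integral_Ioo, ← intervalIntegral.integral_of_le hu.1.le]
    calc ∫ s in (0:ℝ)..u, s ^ a * (u ^ β * (u - s) ^ γ)
        = ∫ s in (0:ℝ)..u, u ^ β * (s ^ a * (u - s) ^ γ) := by
          congr 1; funext s; ring
      _ = u ^ β * ∫ s in (0:ℝ)..u, s ^ a * (u - s) ^ γ := intervalIntegral.integral_const_mul _ _
      _ = u ^ β * (u ^ (a+γ+1) * B) := by rw [hb]
  have hLintS : ∀ u ∈ Ioo (0:ℝ) 1,
      ∫⁻ s, ENNReal.ofReal (H (s, u)) ∂μ = ENNReal.ofReal (u ^ β * (u ^ (a+γ+1) * B)) := by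
    intro u hu
    have e1 : (fun s => ENNReal.ofReal (H (s, u)))
        = (Iio u).indicator (fun s => ENNReal.ofReal (s ^ a * (u ^ β * (u - s) ^ γ))) := by
      funext s
      rw [show ENNReal.ofReal (H (s, u)) = ENNReal.ofReal ((fun s => H (s, u)) s) by rfl, keys u]
      simp only [Set.indicator_apply]
      split <;> simp
    rw [e1, hμ, lintegral_indicator measurableSet_Iio,
      Measure.restrict_restrict measurableSet_Iio, hset2 u hu,
      ← ofReal_integral_eq_lintegral_ofReal (hint3 u hu) ?_, hval u hu]
    filter_upwards [self_mem_ae_restrict measurableSet_Ioo] with s hsu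
    have h1 : (0:ℝ) < s := hsu.1
    have h2 : (0:ℝ) < u - s := sub_pos.2 hsu.2
    have h3 : (0:ℝ) < u := lt_trans h1 hsu.2
    positivity
  -- Tonelli
  have swap : ∫⁻ s, ∫⁻ u, ENNReal.ofReal (H (s, u)) ∂μ ∂μ
      = ∫⁻ u, ∫⁻ s, ENNReal.ofReal (H (s, u)) ∂μ ∂μ :=
    lintegral_lintegral_swap ((ENNReal.measurable_ofReal.comp hHm).aemeasurable)
  -- compute the RHS
  have hRint : IntegrableOn (fun u : ℝ => u ^ β * (u ^ (a+γ+1) * B)) (Ioo (0:ℝ) 1) volume := by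
    have h0 := (intervalIntegrable_rpow' (a := 0) (b := 1)
      (show (-1:ℝ) < a+β+γ+1 by linarith)).const_mul B
    rw [intervalIntegrable_iff_integrableOn_Ioo_of_le zero_le_one] at h0
    refine h0.congr_fun (fun u hu => ?_) measurableSet_Ioo
    show B * u ^ (a+β+γ+1) = u ^ β * (u ^ (a+γ+1) * B)
    have e2 : u ^ (a+β+γ+1) = u ^ β * u ^ (a+γ+1) := by
      rw [← Real.rpow_add hu.1]; congr 1; ring
    rw [e2]; ring
  have hRval : ∫ u in Ioo (0:ℝ) 1, u ^ β * (u ^ (a+γ+1) * B) = B / (a+β+γ+2) := by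
    have e1 : ∫ u in Ioo (0:ℝ) 1, u ^ β * (u ^ (a+γ+1) * B)
        = ∫ u in Ioo (0:ℝ) 1, B * u ^ (a+β+γ+1) := by
      apply setIntegral_congr_fun measurableSet_Ioo
      intro u hu
      show u ^ β * (u ^ (a+γ+1) * B) = B * u ^ (a+β+γ+1)
      have e2 : u ^ (a+β+γ+1) = u ^ β * u ^ (a+γ+1) := by
        rw [← Real.rpow_add hu.1]; congr 1; ring
      rw [e2]; ring
    rw [e1, ← integral_Ioc_eq_integral_Ioo, ← intervalIntegral.integral_of_le zero_le_one,
      intervalIntegral.integral_const_mul, integral_rpow (Or.inl (by linarith)),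
      Real.one_rpow, Real.zero_rpow (by linarith), show a+β+γ+1+1 = a+β+γ+2 by ring]
    field_simp
    norm_num
  have hR : ∫⁻ u, ∫⁻ s, ENNReal.ofReal (H (s, u)) ∂μ ∂μ = ENNReal.ofReal (B / (a+β+γ+2)) := by
    rw [lintegral_congr_ae (g := fun u => ENNReal.ofReal (u ^ β * (u ^ (a+γ+1) * B)))]
    · rw [hμ, ← ofReal_integral_eq_lintegral_ofReal hRint ?_, hRval]
      filter_upwards [self_mem_ae_restrict measurableSet_Ioo] with u hu
      have h1 : (0:ℝ) < u := hu.1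
      positivity
    · filter_upwards [self_mem_ae_restrict measurableSet_Ioo] with u hu
      exact hLintS u hu
  have E : ∫⁻ s, ENNReal.ofReal (φ s) ∂μ = ENNReal.ofReal (B / (a+β+γ+2)) := by
    rw [← hR, ← swap]
    apply lintegral_congr_ae
    filter_upwards [self_mem_ae_restrict measurableSet_Ioo] with s hs
    exact (hLint s hs).symm
  -- measurability of φ
  have hφae : AEStronglyMeasurable φ μ := by
    have hsm : StronglyMeasurable (fun s => ∫ u, H (s, u) ∂μ) :=
      hHm.stronglyMeasurable.integral_prod_right'
    apply hsm.aestronglyMeasurable.congr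
    filter_upwards [self_mem_ae_restrict measurableSet_Ioo] with s hs
    exact hBoch s hs
  have hφnn : 0 ≤ᵐ[μ] φ := by
    filter_upwards [self_mem_ae_restrict measurableSet_Ioo] with s hs
    exact mul_nonneg (Real.rpow_nonneg hs.1.le _) (G_nonneg hs.1.le hs.2.le)
  have hφint : IntegrableOn φ (Ioo (0:ℝ) 1) volume := by
    refine ⟨hφae, ?_⟩
    rw [hasFiniteIntegral_iff_ofReal hφnn, E]
    exact ENNReal.ofReal_lt_top
  refine ⟨hφint, ?_⟩
  have := integral_eq_lintegral_of_nonneg_ae hφnn hφae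
  rw [hμ] at this ⊢
  rw [this, E, ENNReal.toReal_ofReal (by positivity)]

lemma rpow_bounds {lo hi x : ℝ} (hlo : 0 < lo) (h1 : lo ≤ x) (h2 : x ≤ hi) (e : ℝ) :
    min (lo ^ e) (hi ^ e) ≤ x ^ e ∧ x ^ e ≤ max (lo ^ e) (hi ^ e) := by
  rcases le_or_gt 0 e with he | he
  · exact ⟨le_trans (min_le_left _ _) (Real.rpow_le_rpow hlo.le h1 he),
      le_trans (Real.rpow_le_rpow (hlo.trans_le h1).le h2 he) (le_max_right _ _)⟩
  · exact ⟨le_trans (min_le_right _ _) (Real.rpow_le_rpow_of_nonpos (hlo.trans_le h1) h2 he.le),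
      le_trans (Real.rpow_le_rpow_of_nonpos hlo h1 he.le) (le_max_left _ _)⟩

lemma Hbounds {β γ : ℝ} {t s : ℝ} (ht : 2 ≤ t) (hs0 : 0 ≤ s) (hs1 : s ≤ 1) :
    min (t ^ β) ((t+1) ^ β) * min ((t-1) ^ γ) ((t+1) ^ γ)
      ≤ (∫ v in t..(t+1), v ^ β * (v - s) ^ γ) ∧
    (∫ v in t..(t+1), v ^ β * (v - s) ^ γ)
      ≤ max (t ^ β) ((t+1) ^ β) * max ((t-1) ^ γ) ((t+1) ^ γ) := by
  have ht0 : (0:ℝ) < t := by linarith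
  have hcont : ContinuousOn (fun v : ℝ => v ^ β * (v - s) ^ γ) (Set.uIcc t (t+1)) := by
    rw [uIcc_of_le (by linarith)]
    apply ContinuousOn.mul
    · exact ContinuousOn.rpow_const continuousOn_id fun x hx => Or.inl (fun h => by
        rw [h] at hx; have := hx.1; linarith)
    · exact ContinuousOn.rpow_const (continuousOn_id.sub continuousOn_const)
        fun x hx => Or.inl (fun h => by
          have h1 := hx.1; have h2 := hx.2; nlinarith)
  have hii : IntervalIntegrable (fun v : ℝ => v ^ β * (v - s) ^ γ) volume t (t+1) :=
    hcont.intervalIntegrable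
  have hpt : ∀ v ∈ Icc t (t+1),
      min (t ^ β) ((t+1) ^ β) * min ((t-1) ^ γ) ((t+1) ^ γ) ≤ v ^ β * (v - s) ^ γ ∧
      v ^ β * (v - s) ^ γ ≤ max (t ^ β) ((t+1) ^ β) * max ((t-1) ^ γ) ((t+1) ^ γ) := by
    intro v hv
    have hb1 := rpow_bounds ht0 hv.1 hv.2 β
    have hb2 := rpow_bounds (show (0:ℝ) < t - 1 by linarith) (by linarith [hv.1] : t - 1 ≤ v - s)
      (by linarith [hv.2] : v - s ≤ t + 1) γ
    constructor
    · apply mul_le_mul hb1.1 hb2.1 (le_min (Real.rpow_nonneg (by linarith) _)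
        (Real.rpow_nonneg (by linarith) _))
      exact Real.rpow_nonneg (by linarith [hv.1]) _
    · apply mul_le_mul hb1.2 hb2.2 (Real.rpow_nonneg (by linarith [hv.1, hs1]) _)
      exact le_trans (Real.rpow_nonneg ht0.le _) (le_max_left _ _)
  constructor
  · calc min (t ^ β) ((t+1) ^ β) * min ((t-1) ^ γ) ((t+1) ^ γ)
        = ∫ _ in t..(t+1), min (t ^ β) ((t+1) ^ β) * min ((t-1) ^ γ) ((t+1) ^ γ) := by
          simp
      _ ≤ ∫ v in t..(t+1), v ^ β * (v - s) ^ γ := by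
          apply intervalIntegral.integral_mono_on (by linarith) (by simp) hii
          intro v hv; exact (hpt v hv).1
  · calc (∫ v in t..(t+1), v ^ β * (v - s) ^ γ)
        ≤ ∫ _ in t..(t+1), max (t ^ β) ((t+1) ^ β) * max ((t-1) ^ γ) ((t+1) ^ γ) := by
          apply intervalIntegral.integral_mono_on (by linarith) hii (by simp)
          intro v hv; exact (hpt v hv).2
      _ = max (t ^ β) ((t+1) ^ β) * max ((t-1) ^ γ) ((t+1) ^ γ) := by simp

lemma tendsto_ratio_rpow (c e : ℝ) :
    Tendsto (fun t : ℝ => ((t+c)/t) ^ e) atTop (𝓝 1) := by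
  have h1 : Tendsto (fun t : ℝ => (t+c)/t) atTop (𝓝 1) := by
    have h2 : Tendsto (fun t : ℝ => 1 + c * t⁻¹) atTop (𝓝 1) := by
      have := (tendsto_inv_atTop_zero (𝕜 := ℝ)).const_mul c
      have h3 := tendsto_const_nhds (α := ℝ) (x := (1:ℝ)) (f := atTop).add this
      simpa using h3
    apply Tendsto.congr' _ h2
    filter_upwards [eventually_gt_atTop (0:ℝ)] with t ht
    field_simp
  have h4 := (Real.continuousAt_rpow_const 1 e (Or.inl one_ne_zero)).tendsto.comp h1
  simpa [Function.comp_def] using h4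

/-- Theorem 3.3 (first part): asymptotics of the covariance
`E[X₁ (X_{t+1} - X_t)]` for the Gaussian Volterra process. -/
theorem stmt_1 (α β γ : ℝ) (hα : -(1/2 : ℝ) < α) (hγ : -1 < γ)
    (hαβγ : -(3/2 : ℝ) < α + β + γ)
    (F : ℝ → ℝ)
    (hF : ∀ t : ℝ, F t = ∫ s in (0:ℝ)..1, s ^ (2*α) *
      (∫ u in s..1, u ^ β * (u - s) ^ γ) *
      (∫ v in t..(t+1), v ^ β * (v - s) ^ γ)) :
    Tendsto (fun t : ℝ => t ^ (-(β + γ)) * F t) atTop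
      (nhds (Real.Gamma (2*α+1) * Real.Gamma (γ+1) / Real.Gamma (2*α+γ+2)
        / (2*α+β+γ+2))) := by
  have ha : (-1:ℝ) < 2*α := by linarith
  have habγ : (-2:ℝ) < 2*α + β + γ := by linarith
  obtain ⟨hφint, hφval⟩ := fubini_C (a := 2*α) (β := β) (γ := γ) ha hγ habγ
  set φ : ℝ → ℝ := fun s => s ^ (2*α) * ∫ u in s..1, u ^ β * (u - s) ^ γ with hφdef
  set C : ℝ := ∫ s in Ioo (0:ℝ) 1, φ s with hC
  rw [show Real.Gamma (2*α+1) * Real.Gamma (γ+1) / Real.Gamma (2*α+γ+2) / (2*α+β+γ+2) = C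
    from hφval.symm]
  set Ht : ℝ → ℝ → ℝ := fun t s => ∫ v in t..(t+1), v ^ β * (v - s) ^ γ with hHt
  set P : ℝ → ℝ := fun t => min (t ^ β) ((t+1) ^ β) * min ((t-1) ^ γ) ((t+1) ^ γ) with hP
  set Q : ℝ → ℝ := fun t => max (t ^ β) ((t+1) ^ β) * max ((t-1) ^ γ) ((t+1) ^ γ) with hQ
  -- basics
  have hφnn : ∀ s ∈ Ioo (0:ℝ) 1, 0 ≤ φ s := fun s hs =>
    mul_nonneg (Real.rpow_nonneg hs.1.le _) (G_nonneg hs.1.le hs.2.le)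
  have hPnn : ∀ t : ℝ, 2 ≤ t → 0 ≤ P t := by
    intro t ht
    exact mul_nonneg (le_min (Real.rpow_nonneg (by linarith) _) (Real.rpow_nonneg (by linarith) _))
      (le_min (Real.rpow_nonneg (by linarith) _) (Real.rpow_nonneg (by linarith) _))
  -- measurability of Ht t
  have hHtm : ∀ t : ℝ, StronglyMeasurable (fun s => Ht t s) := by
    intro t
    have hK : Measurable (fun p : ℝ × ℝ => p.2 ^ β * (p.2 - p.1) ^ γ) :=
      (measurable_snd.pow_const β).mul ((measurable_snd.sub measurable_fst).pow_const γ)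
    have hsm := hK.stronglyMeasurable.integral_prod_right'
      (ν := volume.restrict (Ioc t (t+1)))
    have heq : (fun s => Ht t s) = fun s => ∫ v in Ioc t (t+1), v ^ β * (v - s) ^ γ := by
      funext s
      exact intervalIntegral.integral_of_le (by linarith)
    rw [heq]
    exact hsm
  -- main bounds
  have hmain : ∀ t : ℝ, 2 ≤ t → C * P t ≤ F t ∧ F t ≤ C * Q t := by
    intro t ht
    have hQnn : 0 ≤ Q t :=
      mul_nonneg (le_trans (Real.rpow_nonneg (by linarith : (0:ℝ) ≤ t) β) (le_max_left _ _))
        (le_trans (Real.rpow_nonneg (by linarith : (0:ℝ) ≤ t-1) γ) (le_max_left _ _))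
    have hFt : F t = ∫ s in Ioo (0:ℝ) 1, φ s * Ht t s := by
      rw [hF t, intervalIntegral.integral_of_le zero_le_one, integral_Ioc_eq_integral_Ioo]
    have hprod : IntegrableOn (fun s => φ s * Ht t s) (Ioo (0:ℝ) 1) volume := by
      apply Integrable.mono (hφint.mul_const (Q t)) (hφint.1.mul (hHtm t).aestronglyMeasurable)
      filter_upwards [self_mem_ae_restrict measurableSet_Ioo] with s hs
      have h1 := hφnn s hs
      have hb := Hbounds (β := β) (γ := γ) ht hs.1.le hs.2.le
      have hH0 : 0 ≤ Ht t s := le_trans (hPnn t ht) hb.1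
      simp only [Pi.mul_apply, Real.norm_eq_abs]
      rw [abs_of_nonneg (mul_nonneg h1 hH0), abs_of_nonneg (mul_nonneg h1 hQnn)]
      exact mul_le_mul_of_nonneg_left hb.2 h1
    have e1 : ∫ s in Ioo (0:ℝ) 1, φ s * P t = C * P t :=
      MeasureTheory.integral_mul_const (P t) φ
    have e2 : ∫ s in Ioo (0:ℝ) 1, φ s * Q t = C * Q t :=
      MeasureTheory.integral_mul_const (Q t) φ
    rw [hFt]
    constructor
    · rw [← e1]
      apply integral_mono_ae (hφint.mul_const _) hprod
      filter_upwards [self_mem_ae_restrict measurableSet_Ioo] with s hs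
      exact mul_le_mul_of_nonneg_left (Hbounds (β := β) (γ := γ) ht hs.1.le hs.2.le).1
        (hφnn s hs)
    · rw [← e2]
      apply integral_mono_ae hprod (hφint.mul_const _)
      filter_upwards [self_mem_ae_restrict measurableSet_Ioo] with s hs
      exact mul_le_mul_of_nonneg_left (Hbounds (β := β) (γ := γ) ht hs.1.le hs.2.le).2
        (hφnn s hs)
  -- normalized bound functions
  have hform : ∀ t : ℝ, 2 ≤ t →
      t ^ (-(β+γ)) * P t
        = min 1 (((t+1)/t) ^ β) * min (((t-1)/t) ^ γ) (((t+1)/t) ^ γ) ∧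
      t ^ (-(β+γ)) * Q t
        = max 1 (((t+1)/t) ^ β) * max (((t-1)/t) ^ γ) (((t+1)/t) ^ γ) := by
    intro t ht
    have ht0 : (0:ℝ) < t := by linarith
    have e0 : t ^ (-(β+γ)) = t ^ (-β) * t ^ (-γ) := by
      rw [← Real.rpow_add ht0]; congr 1; ring
    have eb : ∀ x e : ℝ, 0 ≤ x → t ^ (-e) * x ^ e = (x/t) ^ e := by
      intro x e hx
      rw [Real.div_rpow hx ht0.le, Real.rpow_neg ht0.le, div_eq_mul_inv]; ring
    have e1 : ∀ e : ℝ, t ^ (-e) * t ^ e = 1 := by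
      intro e; rw [← Real.rpow_add ht0]; simp
    constructor
    · show t ^ (-(β+γ)) * (min (t ^ β) ((t+1) ^ β) * min ((t-1) ^ γ) ((t+1) ^ γ)) = _
      rw [e0, show t ^ (-β) * t ^ (-γ) * (min (t ^ β) ((t+1) ^ β) * min ((t-1) ^ γ) ((t+1) ^ γ))
          = (t ^ (-β) * min (t ^ β) ((t+1) ^ β)) * (t ^ (-γ) * min ((t-1) ^ γ) ((t+1) ^ γ))
          by ring,
        mul_min_of_nonneg _ _ (Real.rpow_nonneg ht0.le (-β)),
        mul_min_of_nonneg _ _ (Real.rpow_nonneg ht0.le (-γ)),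
        e1 β, eb (t+1) β (by linarith), eb (t-1) γ (by linarith), eb (t+1) γ (by linarith)]
    · show t ^ (-(β+γ)) * (max (t ^ β) ((t+1) ^ β) * max ((t-1) ^ γ) ((t+1) ^ γ)) = _
      rw [e0, show t ^ (-β) * t ^ (-γ) * (max (t ^ β) ((t+1) ^ β) * max ((t-1) ^ γ) ((t+1) ^ γ))
          = (t ^ (-β) * max (t ^ β) ((t+1) ^ β)) * (t ^ (-γ) * max ((t-1) ^ γ) ((t+1) ^ γ))
          by ring,
        mul_max_of_nonneg _ _ (Real.rpow_nonneg ht0.le (-β)),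
        mul_max_of_nonneg _ _ (Real.rpow_nonneg ht0.le (-γ)),
        e1 β, eb (t+1) β (by linarith), eb (t-1) γ (by linarith), eb (t+1) γ (by linarith)]
  -- limits of the bound functions
  have hsub : (fun t : ℝ => ((t-1)/t) ^ γ) = fun t : ℝ => ((t + (-1))/t) ^ γ := by
    funext t; rw [sub_eq_add_neg]
  have hminlim : Tendsto (fun t : ℝ =>
      min 1 (((t+1)/t) ^ β) * min (((t-1)/t) ^ γ) (((t+1)/t) ^ γ)) atTop (𝓝 1) := by
    have h1 := tendsto_ratio_rpow 1 β
    have h2 : Tendsto (fun t : ℝ => ((t-1)/t) ^ γ) atTop (𝓝 1) := by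
      rw [hsub]; exact tendsto_ratio_rpow (-1) γ
    have h3 := (tendsto_const_nhds (x := (1:ℝ))).min h1
    have h4 := h2.min (tendsto_ratio_rpow 1 γ)
    have h5 := h3.mul h4
    simpa using h5
  have hmaxlim : Tendsto (fun t : ℝ =>
      max 1 (((t+1)/t) ^ β) * max (((t-1)/t) ^ γ) (((t+1)/t) ^ γ)) atTop (𝓝 1) := by
    have h1 := tendsto_ratio_rpow 1 β
    have h2 : Tendsto (fun t : ℝ => ((t-1)/t) ^ γ) atTop (𝓝 1) := by
      rw [hsub]; exact tendsto_ratio_rpow (-1) γ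
    have h3 := (tendsto_const_nhds (x := (1:ℝ))).max h1
    have h4 := h2.max (tendsto_ratio_rpow 1 γ)
    have h5 := h3.mul h4
    simpa using h5
  have hlow : Tendsto (fun t : ℝ => t ^ (-(β+γ)) * P t * C) atTop (𝓝 C) := by
    have h6 := hminlim.mul_const C
    rw [one_mul] at h6
    apply Tendsto.congr' _ h6
    filter_upwards [eventually_ge_atTop (2:ℝ)] with t ht
    rw [(hform t ht).1]
  have hupp : Tendsto (fun t : ℝ => t ^ (-(β+γ)) * Q t * C) atTop (𝓝 C) := by
    have h6 := hmaxlim.mul_const C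
    rw [one_mul] at h6
    apply Tendsto.congr' _ h6
    filter_upwards [eventually_ge_atTop (2:ℝ)] with t ht
    rw [(hform t ht).2]
  apply tendsto_of_tendsto_of_tendsto_of_le_of_le' hlow hupp
  · filter_upwards [eventually_ge_atTop (2:ℝ)] with t ht
    have ht0 : (0:ℝ) < t := by linarith
    calc t ^ (-(β+γ)) * P t * C = t ^ (-(β+γ)) * (C * P t) := by ring
      _ ≤ t ^ (-(β+γ)) * F t :=
          mul_le_mul_of_nonneg_left (hmain t ht).1 (Real.rpow_nonneg ht0.le _)
  · filter_upwards [eventually_ge_atTop (2:ℝ)] with t ht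
    have ht0 : (0:ℝ) < t := by linarith
    calc t ^ (-(β+γ)) * F t ≤ t ^ (-(β+γ)) * (C * Q t) :=
          mul_le_mul_of_nonneg_left (hmain t ht).2 (Real.rpow_nonneg ht0.le _)
      _ = t ^ (-(β+γ)) * Q t * C := by ring
end

section
/- Let α, β, γ be real numbers with α > -1/2, γ > -1 and α + β + γ > -3/2, and suppose β + γ < −1. For t ≥ 1 define F(t) = ∫₀¹ s^{2α} (∫ₛ¹ u^β (u−s)^γ du) (∫ₜ^{t+1} v^β (v−s)^γ dv) ds. Then the series ∑_{n=1}^∞ F(n) converges and the integral ∫₁^∞ F(t) dt is finite. -/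
open MeasureTheory Filter intervalIntegral Set

lemma measA (β γ : ℝ) : ∃ M : ℝ → ℝ, Measurable M ∧
    ∀ s ∈ Set.Ioc (0:ℝ) 1, M s = ∫ u in s..1, u ^ β * (u - s) ^ γ := by
  set f : ℝ × ℝ → ℝ := fun q =>
    ({q : ℝ × ℝ | q.1 < q.2 ∧ q.2 ≤ 1}).indicator (fun q => q.2 ^ β * (q.2 - q.1) ^ γ) q with hf
  have hfm : Measurable f := by
    apply Measurable.indicator
    · fun_prop
    · exact (measurableSet_lt measurable_fst measurable_snd).inter
        (measurableSet_le measurable_snd measurable_const)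
  refine ⟨fun s => ∫ u, f (s, u), ?_, ?_⟩
  · exact (hfm.stronglyMeasurable.integral_prod_right').measurable
  · intro s hs
    rw [intervalIntegral.integral_of_le hs.2]
    rw [← MeasureTheory.integral_indicator measurableSet_Ioc]
    have heq : (fun u => f (s, u)) = (Set.Ioc s 1).indicator (fun u => u ^ β * (u - s) ^ γ) := by
      funext u
      have hiff : u ∈ Set.Ioc s 1 ↔ (s, u) ∈ {q : ℝ × ℝ | q.1 < q.2 ∧ q.2 ≤ 1} := Iff.rfl
      by_cases h : u ∈ Set.Ioc s 1
      · rw [Set.indicator_of_mem h]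
        exact Set.indicator_of_mem (hiff.1 h) _
      · rw [Set.indicator_of_notMem h]
        exact Set.indicator_of_notMem (fun hc => h (hiff.2 hc)) _
    exact congrArg _ heq

lemma measB (β γ t : ℝ) : Measurable (fun s : ℝ => ∫ v in t..(t+1), v ^ β * (v - s) ^ γ) := by
  have : ∀ s : ℝ, (∫ v in t..(t+1), v ^ β * (v - s) ^ γ)
      = ∫ v in Set.Ioc t (t+1), v ^ β * (v - s) ^ γ := by
    intro s; rw [intervalIntegral.integral_of_le (by linarith)]
  simp_rw [this]
  have hfm : Measurable fun q : ℝ × ℝ => q.2 ^ β * (q.2 - q.1) ^ γ := by fun_prop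
  exact (hfm.stronglyMeasurable.integral_prod_right'
    (ν := volume.restrict (Set.Ioc t (t+1)))).measurable
lemma II1 (γ : ℝ) (hγ : -1 < γ) (s a b : ℝ) :
    IntervalIntegrable (fun x => (x - s) ^ γ) volume a b := by
  have h := (intervalIntegral.intervalIntegrable_rpow' (a := a - s) (b := b - s) hγ).comp_sub_right s
  simpa using h

lemma II2 (β γ : ℝ) (hγ : -1 < γ) (s a b : ℝ) (ha : 0 < a) (hab : a ≤ b) :
    IntervalIntegrable (fun u => u ^ β * (u - s) ^ γ) volume a b := by
  apply (II1 γ hγ s a b).continuousOn_mul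
  intro x hx
  rw [Set.uIcc_of_le hab] at hx
  exact (Real.continuousAt_rpow_const x β (Or.inl (by linarith [hx.1]))).continuousWithinAt

lemma int_shift_rpow (γ : ℝ) (hγ : -1 < γ) (s a b : ℝ) :
    (∫ v in a..b, (v - s) ^ γ) = ((b - s) ^ (γ+1) - (a - s) ^ (γ+1)) / (γ+1) := by
  have := intervalIntegral.integral_comp_sub_right (fun x : ℝ => x ^ γ) s (a := a) (b := b)
  rw [this, integral_rpow (Or.inl hγ)]

lemma A_bound (β γ : ℝ) (hγ : -1 < γ) (hβγ : β + γ < -1) :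
    ∃ C : ℝ, 0 < C ∧ ∀ s : ℝ, s ∈ Set.Ioc (0:ℝ) 1 →
      (∫ u in s..1, u ^ β * (u - s) ^ γ) ≤ C * s ^ (β + γ + 1) := by
  have hγ1 : (0:ℝ) < γ + 1 := by linarith
  have hq0 : β + γ + 1 < 0 := by linarith
  have hnq : (0:ℝ) < -(β + γ + 1) := by linarith
  set c₁ : ℝ := max 1 (2 ^ β) with hc₁
  set c₂ : ℝ := max 1 (2 ^ (-γ)) with hc₂
  set c₃ : ℝ := max 1 (2 ^ (-β)) with hc₃
  have hc₁p : (0:ℝ) < c₁ := lt_of_lt_of_le one_pos (le_max_left _ _)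
  have hc₂p : (0:ℝ) < c₂ := lt_of_lt_of_le one_pos (le_max_left _ _)
  have hc₃p : (0:ℝ) < c₃ := lt_of_lt_of_le one_pos (le_max_left _ _)
  have h2q : (0:ℝ) < 2 ^ (β + γ + 1) := Real.rpow_pos_of_pos two_pos _
  have hCpos : (0:ℝ) < c₃/(γ+1) + c₁/(γ+1) + c₂ * 2 ^ (β+γ+1) / (-(β+γ+1)) := by
    have h1 : (0:ℝ) < c₃/(γ+1) := div_pos hc₃p hγ1
    have h2 : (0:ℝ) < c₁/(γ+1) := div_pos hc₁p hγ1
    have h3 : (0:ℝ) < c₂ * 2 ^ (β+γ+1) / (-(β+γ+1)) := div_pos (mul_pos hc₂p h2q) hnq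
    linarith
  refine ⟨c₃/(γ+1) + c₁/(γ+1) + c₂ * 2 ^ (β+γ+1) / (-(β+γ+1)), hCpos, ?_⟩
  intro s hs
  obtain ⟨hs0, hs1⟩ := hs
  have hsq0 : (0:ℝ) < s ^ (β+γ+1) := Real.rpow_pos_of_pos hs0 _
  have hsq1 : (1:ℝ) ≤ s ^ (β+γ+1) := by
    have := Real.rpow_le_rpow_of_nonpos hs0 hs1 hq0.le
    simpa using this
  rcases le_or_gt (1/2 : ℝ) s with hhalf | hhalf
  · -- s ≥ 1/2 : single piece
    have hmono : (∫ u in s..1, u ^ β * (u - s) ^ γ) ≤ ∫ u in s..1, c₃ * (u - s) ^ γ := by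
      apply intervalIntegral.integral_mono_on hs1 (II2 β γ hγ s s 1 hs0 hs1)
        ((II1 γ hγ s s 1).const_mul c₃)
      intro u hu
      have hu0 : 0 < u := lt_of_lt_of_le hs0 hu.1
      have husγ : 0 ≤ (u - s) ^ γ := Real.rpow_nonneg (by linarith [hu.1]) γ
      have hub : u ^ β ≤ c₃ := by
        rcases le_or_gt 0 β with hb | hb
        · exact le_trans (Real.rpow_le_one hu0.le hu.2 hb) (le_max_left _ _)
        · have h1 : u ^ β ≤ s ^ β := Real.rpow_le_rpow_of_nonpos hs0 hu.1 hb.le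
          have h2 : s ^ β ≤ (1/2 : ℝ) ^ β :=
            Real.rpow_le_rpow_of_nonpos (by norm_num) hhalf hb.le
          have h3 : (1/2 : ℝ) ^ β = 2 ^ (-β) := by
            rw [Real.rpow_neg (by norm_num), ← Real.inv_rpow (by norm_num)]
            norm_num
          calc u ^ β ≤ (1/2:ℝ) ^ β := le_trans h1 h2
            _ = 2 ^ (-β) := h3
            _ ≤ c₃ := le_max_right _ _
      exact mul_le_mul_of_nonneg_right hub husγ
    have hval : (∫ u in s..1, c₃ * (u - s) ^ γ) ≤ c₃ / (γ+1) := by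
      rw [intervalIntegral.integral_const_mul, int_shift_rpow γ hγ, sub_self,
        Real.zero_rpow (by linarith : γ + 1 ≠ 0), sub_zero]
      have h1 : (1 - s) ^ (γ+1) ≤ 1 := Real.rpow_le_one (by linarith) (by linarith) hγ1.le
      calc c₃ * ((1-s) ^ (γ+1) / (γ+1)) ≤ c₃ * (1 / (γ+1)) := by gcongr
        _ = c₃ / (γ+1) := by ring
    calc (∫ u in s..1, u ^ β * (u - s) ^ γ) ≤ c₃/(γ+1) := le_trans hmono hval
      _ = (c₃/(γ+1)) * 1 := (mul_one _).symm
      _ ≤ (c₃/(γ+1) + c₁/(γ+1) + c₂ * 2 ^ (β+γ+1) / (-(β+γ+1))) * s ^ (β+γ+1) := by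
          apply mul_le_mul _ hsq1 zero_le_one hCpos.le
          have h2 : (0:ℝ) < c₁/(γ+1) := div_pos hc₁p hγ1
          have h3 : (0:ℝ) < c₂ * 2 ^ (β+γ+1) / (-(β+γ+1)) := div_pos (mul_pos hc₂p h2q) hnq
          linarith
  · -- s < 1/2 : two pieces
    have h2s1 : 2*s ≤ 1 := by linarith
    have hs2s : s ≤ 2*s := by linarith
    have h2s0 : 0 < 2*s := by linarith
    have hsplit : (∫ u in s..1, u ^ β * (u - s) ^ γ)
        = (∫ u in s..(2*s), u ^ β * (u - s) ^ γ) + ∫ u in (2*s)..1, u ^ β * (u - s) ^ γ :=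
      (intervalIntegral.integral_add_adjacent_intervals
        (II2 β γ hγ s s (2*s) hs0 hs2s) (II2 β γ hγ s (2*s) 1 h2s0 h2s1)).symm
    have hP1 : (∫ u in s..(2*s), u ^ β * (u - s) ^ γ) ≤ (c₁/(γ+1)) * s ^ (β+γ+1) := by
      have hmono : (∫ u in s..(2*s), u ^ β * (u - s) ^ γ)
          ≤ ∫ u in s..(2*s), (c₁ * s ^ β) * (u - s) ^ γ := by
        apply intervalIntegral.integral_mono_on hs2s (II2 β γ hγ s s (2*s) hs0 hs2s)
          ((II1 γ hγ s s (2*s)).const_mul _)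
        intro u hu
        have hu0 : 0 < u := lt_of_lt_of_le hs0 hu.1
        have husγ : 0 ≤ (u - s) ^ γ := Real.rpow_nonneg (by linarith [hu.1]) γ
        have hub : u ^ β ≤ c₁ * s ^ β := by
          rcases le_or_gt 0 β with hb | hb
          · calc u ^ β ≤ (2*s) ^ β := Real.rpow_le_rpow hu0.le hu.2 hb
              _ = 2 ^ β * s ^ β := Real.mul_rpow (by norm_num) hs0.le
              _ ≤ c₁ * s ^ β :=
                  mul_le_mul_of_nonneg_right (le_max_right _ _) (Real.rpow_nonneg hs0.le β)
          · have h1 : u ^ β ≤ s ^ β := Real.rpow_le_rpow_of_nonpos hs0 hu.1 hb.le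
            calc u ^ β ≤ s ^ β := h1
              _ = 1 * s ^ β := (one_mul _).symm
              _ ≤ c₁ * s ^ β :=
                  mul_le_mul_of_nonneg_right (le_max_left _ _) (Real.rpow_nonneg hs0.le β)
        exact mul_le_mul_of_nonneg_right hub husγ
      rw [intervalIntegral.integral_const_mul, int_shift_rpow γ hγ, sub_self,
        Real.zero_rpow (by linarith : γ + 1 ≠ 0), sub_zero,
        (show (2*s - s : ℝ) = s by ring)] at hmono
      calc (∫ u in s..(2*s), u ^ β * (u - s) ^ γ) ≤ c₁ * s ^ β * (s ^ (γ+1) / (γ+1)) := hmono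
        _ = (c₁/(γ+1)) * (s ^ β * s ^ (γ+1)) := by ring
        _ = (c₁/(γ+1)) * s ^ (β + (γ+1)) := by rw [← Real.rpow_add hs0]
        _ = (c₁/(γ+1)) * s ^ (β+γ+1) := by ring_nf
    have hP2 : (∫ u in (2*s)..1, u ^ β * (u - s) ^ γ)
        ≤ (c₂ * 2 ^ (β+γ+1) / (-(β+γ+1))) * s ^ (β+γ+1) := by
      have hRHSint : IntervalIntegrable (fun u => c₂ * u ^ (β+γ)) volume (2*s) 1 := by
        apply IntervalIntegrable.const_mul
        apply intervalIntegrable_rpow (Or.inr ?_)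
        rw [Set.uIcc_of_le h2s1]
        intro hc
        exact absurd hc.1 (by linarith)
      have hmono : (∫ u in (2*s)..1, u ^ β * (u - s) ^ γ)
          ≤ ∫ u in (2*s)..1, c₂ * u ^ (β+γ) := by
        apply intervalIntegral.integral_mono_on h2s1 (II2 β γ hγ s (2*s) 1 h2s0 h2s1) hRHSint
        intro u hu
        have hu0 : 0 < u := lt_of_lt_of_le h2s0 hu.1
        have hsu2 : s ≤ u/2 := by linarith [hu.1]
        have hus0 : 0 < u - s := by linarith [half_pos hu0]
        have hubβ : (0:ℝ) ≤ u ^ β := Real.rpow_nonneg hu0.le β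
        have hγb : (u - s) ^ γ ≤ c₂ * u ^ γ := by
          rcases le_or_gt 0 γ with hg | hg
          · calc (u-s)^γ ≤ u^γ := Real.rpow_le_rpow hus0.le (by linarith) hg
              _ = 1 * u^γ := (one_mul _).symm
              _ ≤ c₂ * u^γ :=
                  mul_le_mul_of_nonneg_right (le_max_left _ _) (Real.rpow_nonneg hu0.le γ)
          · have h1 : (u-s)^γ ≤ (u/2)^γ :=
              Real.rpow_le_rpow_of_nonpos (by linarith) (by linarith) hg.le
            have h2 : (u/2:ℝ)^γ = 2^(-γ) * u^γ := by
              rw [Real.div_rpow hu0.le (by norm_num), Real.rpow_neg (by norm_num)]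
              ring
            calc (u-s)^γ ≤ (u/2)^γ := h1
              _ = 2^(-γ) * u^γ := h2
              _ ≤ c₂ * u^γ :=
                  mul_le_mul_of_nonneg_right (le_max_right _ _) (Real.rpow_nonneg hu0.le γ)
        calc u ^ β * (u-s)^γ ≤ u^β * (c₂ * u^γ) := mul_le_mul_of_nonneg_left hγb hubβ
          _ = c₂ * (u^β * u^γ) := by ring
          _ = c₂ * u^(β+γ) := by rw [← Real.rpow_add hu0]
      have hval : (∫ u in (2*s)..1, c₂ * u ^ (β+γ))
          = c₂ * ((1 - (2*s) ^ (β+γ+1)) / (β+γ+1)) := by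
        rw [intervalIntegral.integral_const_mul, integral_rpow (Or.inr ⟨by linarith, ?_⟩),
          Real.one_rpow]
        rw [Set.uIcc_of_le h2s1]
        intro hc
        exact absurd hc.1 (by linarith)
      have hfin : c₂ * ((1 - (2*s) ^ (β+γ+1)) / (β+γ+1))
          ≤ (c₂ * 2 ^ (β+γ+1) / (-(β+γ+1))) * s ^ (β+γ+1) := by
        have h2s : ((2*s) : ℝ) ^ (β+γ+1) = 2 ^ (β+γ+1) * s ^ (β+γ+1) :=
          Real.mul_rpow (by norm_num) hs0.le
        have h1 : (1 - (2*s) ^ (β+γ+1)) / (β+γ+1) ≤ (2*s) ^ (β+γ+1) / (-(β+γ+1)) := by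
          have hq1 : 1/(β+γ+1) ≤ 0 := le_of_lt (div_neg_of_pos_of_neg one_pos hq0)
          generalize (2*s) ^ (β+γ+1) = X
          generalize hY : (β+γ+1 : ℝ) = Y at hq1 hq0 ⊢
          have e1 : (1 - X) / Y = 1/Y - X/Y := by ring
          have e2 : X / (-Y) = -(X/Y) := by
            rw [div_neg]
          rw [e1, e2]; linarith
        calc c₂ * ((1 - (2*s) ^ (β+γ+1)) / (β+γ+1))
            ≤ c₂ * ((2*s) ^ (β+γ+1) / (-(β+γ+1))) := mul_le_mul_of_nonneg_left h1 hc₂p.le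
          _ = (c₂ * 2 ^ (β+γ+1) / (-(β+γ+1))) * s ^ (β+γ+1) := by rw [h2s]; ring
      exact le_trans hmono (le_trans (le_of_eq hval) hfin)
    calc (∫ u in s..1, u ^ β * (u - s) ^ γ)
        = _ + _ := hsplit
      _ ≤ (c₁/(γ+1)) * s ^ (β+γ+1) + (c₂ * 2 ^ (β+γ+1) / (-(β+γ+1))) * s ^ (β+γ+1) :=
          add_le_add hP1 hP2
      _ ≤ (c₃/(γ+1) + c₁/(γ+1) + c₂ * 2 ^ (β+γ+1) / (-(β+γ+1))) * s ^ (β+γ+1) := by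
          have h1 : (0:ℝ) ≤ c₃/(γ+1) := (div_pos hc₃p hγ1).le
          nlinarith [hsq0]
lemma B_bound (β γ : ℝ) (hγ : -1 < γ) (hβγ : β + γ < -1) :
    ∃ C : ℝ, 0 < C ∧ ∀ t s : ℝ, 1 ≤ t → 0 ≤ s → s ≤ 1 →
      (∫ v in t..(t+1), v ^ β * (v - s) ^ γ) ≤ C * t ^ (β + γ) := by
  have hγ1 : (0:ℝ) < γ + 1 := by linarith
  set K₁ : ℝ := max 1 (2 ^ β) * max (2 ^ γ) (2 ^ (-γ)) with hK₁
  set K₂ : ℝ := max 1 (3 ^ β) * (3 ^ (γ+1) / (γ+1)) * 2 ^ (-(β+γ)) with hK₂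
  have hK₁p : 0 < K₁ :=
    mul_pos (lt_of_lt_of_le one_pos (le_max_left _ _))
      (lt_of_lt_of_le (Real.rpow_pos_of_pos two_pos γ) (le_max_left _ _))
  have hK₂p : 0 < K₂ :=
    mul_pos (mul_pos (lt_of_lt_of_le one_pos (le_max_left _ _))
      (div_pos (Real.rpow_pos_of_pos (by norm_num) _) hγ1)) (Real.rpow_pos_of_pos two_pos _)
  refine ⟨K₁ + K₂, by linarith, ?_⟩
  intro t s ht hs0 hs1
  have ht0 : (0:ℝ) < t := lt_of_lt_of_le one_pos ht
  have htp : (0:ℝ) < t ^ (β+γ) := Real.rpow_pos_of_pos ht0 _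
  have htt1 : t ≤ t + 1 := by linarith
  rcases le_or_gt 2 t with h2 | h2
  · -- t ≥ 2
    have hmono : (∫ v in t..(t+1), v ^ β * (v - s) ^ γ)
        ≤ ∫ _v in t..(t+1), K₁ * t ^ (β+γ) := by
      apply intervalIntegral.integral_mono_on htt1 (II2 β γ hγ s t (t+1) ht0 htt1)
        intervalIntegrable_const
      intro v hv
      have hv0 : 0 < v := lt_of_lt_of_le ht0 hv.1
      have hvs0 : (0:ℝ) ≤ v - s := by linarith [hv.1]
      have hb1 : v ^ β ≤ max 1 (2 ^ β) * t ^ β := by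
        rcases le_or_gt 0 β with hb | hb
        · calc v ^ β ≤ (2*t) ^ β := Real.rpow_le_rpow hv0.le (by linarith [hv.2]) hb
            _ = 2 ^ β * t ^ β := Real.mul_rpow (by norm_num) ht0.le
            _ ≤ max 1 (2 ^ β) * t ^ β :=
                mul_le_mul_of_nonneg_right (le_max_right _ _) (Real.rpow_nonneg ht0.le β)
        · calc v ^ β ≤ t ^ β := Real.rpow_le_rpow_of_nonpos ht0 hv.1 hb.le
            _ = 1 * t ^ β := (one_mul _).symm
            _ ≤ max 1 (2 ^ β) * t ^ β :=
                mul_le_mul_of_nonneg_right (le_max_left _ _) (Real.rpow_nonneg ht0.le β)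
      have hb2 : (v - s) ^ γ ≤ max (2 ^ γ) (2 ^ (-γ)) * t ^ γ := by
        rcases le_or_gt 0 γ with hg | hg
        · calc (v-s) ^ γ ≤ (2*t) ^ γ := Real.rpow_le_rpow hvs0 (by linarith [hv.2]) hg
            _ = 2 ^ γ * t ^ γ := Real.mul_rpow (by norm_num) ht0.le
            _ ≤ max (2 ^ γ) (2 ^ (-γ)) * t ^ γ :=
                mul_le_mul_of_nonneg_right (le_max_left _ _) (Real.rpow_nonneg ht0.le γ)
        · have hts : t/2 ≤ v - s := by linarith [hv.1]
          calc (v-s) ^ γ ≤ (t/2) ^ γ :=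
              Real.rpow_le_rpow_of_nonpos (by linarith) hts hg.le
            _ = 2 ^ (-γ) * t ^ γ := by
                rw [Real.div_rpow ht0.le (by norm_num), Real.rpow_neg (by norm_num)]
                ring
            _ ≤ max (2 ^ γ) (2 ^ (-γ)) * t ^ γ :=
                mul_le_mul_of_nonneg_right (le_max_right _ _) (Real.rpow_nonneg ht0.le γ)
      calc v ^ β * (v-s) ^ γ
          ≤ (max 1 (2 ^ β) * t ^ β) * (max (2 ^ γ) (2 ^ (-γ)) * t ^ γ) :=
            mul_le_mul hb1 hb2 (Real.rpow_nonneg hvs0 γ)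
              (by positivity)
        _ = K₁ * (t ^ β * t ^ γ) := by rw [hK₁]; ring
        _ = K₁ * t ^ (β+γ) := by rw [← Real.rpow_add ht0]
    have hconst : (∫ _v in t..(t+1), K₁ * t ^ (β+γ)) = K₁ * t ^ (β+γ) := by
      rw [intervalIntegral.integral_const]
      simp
    calc (∫ v in t..(t+1), v ^ β * (v - s) ^ γ) ≤ K₁ * t ^ (β+γ) := by
          rw [← hconst]; exact hmono
      _ ≤ (K₁ + K₂) * t ^ (β+γ) := by nlinarith
  · -- 1 ≤ t < 2
    set c₄ : ℝ := max 1 (3 ^ β) with hc₄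
    have hc₄p : (0:ℝ) < c₄ := lt_of_lt_of_le one_pos (le_max_left _ _)
    have hmono : (∫ v in t..(t+1), v ^ β * (v - s) ^ γ)
        ≤ ∫ v in t..(t+1), c₄ * (v - s) ^ γ := by
      apply intervalIntegral.integral_mono_on htt1 (II2 β γ hγ s t (t+1) ht0 htt1)
        ((II1 γ hγ s t (t+1)).const_mul _)
      intro v hv
      have hv1 : (1:ℝ) ≤ v := le_trans ht hv.1
      have hv0 : 0 < v := lt_of_lt_of_le one_pos hv1
      have hvs0 : (0:ℝ) ≤ v - s := by linarith [hv.1]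
      have hb : v ^ β ≤ c₄ := by
        rcases le_or_gt 0 β with hb | hb
        · calc v ^ β ≤ (3:ℝ) ^ β := Real.rpow_le_rpow hv0.le (by linarith [hv.2]) hb
            _ ≤ c₄ := le_max_right _ _
        · calc v ^ β ≤ (1:ℝ) ^ β := Real.rpow_le_rpow_of_nonpos one_pos hv1 hb.le
            _ = 1 := Real.one_rpow β
            _ ≤ c₄ := le_max_left _ _
      exact mul_le_mul_of_nonneg_right hb (Real.rpow_nonneg hvs0 γ)
    have hval : (∫ v in t..(t+1), c₄ * (v - s) ^ γ) ≤ c₄ * (3 ^ (γ+1) / (γ+1)) := by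
      rw [intervalIntegral.integral_const_mul, int_shift_rpow γ hγ]
      apply mul_le_mul_of_nonneg_left _ hc₄p.le
      have h1 : (t + 1 - s) ^ (γ+1) ≤ 3 ^ (γ+1) :=
        Real.rpow_le_rpow (by linarith) (by linarith) hγ1.le
      have h2 : (0:ℝ) ≤ (t - s) ^ (γ+1) := Real.rpow_nonneg (by linarith) _
      calc ((t+1-s) ^ (γ+1) - (t-s) ^ (γ+1)) / (γ+1) ≤ (t+1-s) ^ (γ+1) / (γ+1) :=
            div_le_div_of_nonneg_right (by linarith) hγ1.le
          _ ≤ 3 ^ (γ+1) / (γ+1) := div_le_div_of_nonneg_right h1 hγ1.le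
    have h2p : (2:ℝ) ^ (β+γ) ≤ t ^ (β+γ) :=
      Real.rpow_le_rpow_of_nonpos ht0 h2.le (by linarith)
    have hK2t : c₄ * (3 ^ (γ+1) / (γ+1)) ≤ K₂ * t ^ (β+γ) := by
      have e1 : c₄ * (3 ^ (γ+1) / (γ+1)) = K₂ * 2 ^ (β+γ) := by
        rw [hK₂, mul_assoc, ← Real.rpow_add two_pos,
          show -(β+γ) + (β+γ) = (0:ℝ) by ring, Real.rpow_zero, mul_one]
      rw [e1]
      exact mul_le_mul_of_nonneg_left h2p hK₂p.le
    calc (∫ v in t..(t+1), v ^ β * (v - s) ^ γ) ≤ c₄ * (3 ^ (γ+1) / (γ+1)) :=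
          le_trans hmono hval
      _ ≤ K₂ * t ^ (β+γ) := hK2t
      _ ≤ (K₁ + K₂) * t ^ (β+γ) := by nlinarith

/-- Theorem 3.3 (short-range dependence): if `β + γ < -1` then the series
`∑_{n≥1} cov(X₁, X_{n+1} - X_n)` converges and `∫₁^∞ cov(X₁, X_{t+1} - X_t) dt`
is finite. -/
theorem stmt_2 (α β γ : ℝ) (hα : -(1/2 : ℝ) < α) (hγ : -1 < γ)
    (hαβγ : -(3/2 : ℝ) < α + β + γ) (hβγ : β + γ < -1)
    (F : ℝ → ℝ)
    (hF : ∀ t : ℝ, F t = ∫ s in (0:ℝ)..1, s ^ (2*α) *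
      (∫ u in s..1, u ^ β * (u - s) ^ γ) *
      (∫ v in t..(t+1), v ^ β * (v - s) ^ γ)) :
    (Summable fun n : ℕ => F (n + 1)) ∧
    (∫⁻ t in Set.Ici (1:ℝ), ENNReal.ofReal (F t)) < ⊤ := by
  have hγ1 : (0:ℝ) < γ + 1 := by linarith
  obtain ⟨Ca, hCa, hA⟩ := A_bound β γ hγ hβγ
  obtain ⟨Cb, hCb, hB⟩ := B_bound β γ hγ hβγ
  obtain ⟨M, hMmeas, hM⟩ := measA β γ
  have hexp : -1 < 2*α + (β+γ+1) := by linarith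
  have hgint : IntegrableOn (fun s : ℝ => s ^ (2*α + (β+γ+1))) (Set.Ioc (0:ℝ) 1) := by
    rw [← intervalIntegrable_iff_integrableOn_Ioc_of_le zero_le_one]
    exact intervalIntegral.intervalIntegrable_rpow' hexp
  set D : ℝ := ∫ s in Set.Ioc (0:ℝ) 1, s ^ (2*α + (β+γ+1)) with hD
  have hD0 : 0 ≤ D :=
    setIntegral_nonneg measurableSet_Ioc (fun s hs => Real.rpow_nonneg hs.1.le _)
  set K : ℝ := Ca * Cb * D with hK
  have hK0 : 0 ≤ K := by positivity
  have key : ∀ t : ℝ, 1 ≤ t → 0 ≤ F t ∧ F t ≤ K * t ^ (β+γ) := by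
    intro t ht
    have ht0 : (0:ℝ) < t := by linarith
    have htp : (0:ℝ) < t ^ (β+γ) := Real.rpow_pos_of_pos ht0 _
    have hFset : F t = ∫ s in Set.Ioc (0:ℝ) 1, s ^ (2*α) *
        (∫ u in s..1, u ^ β * (u - s) ^ γ) * (∫ v in t..(t+1), v ^ β * (v - s) ^ γ) := by
      rw [hF t, intervalIntegral.integral_of_le zero_le_one]
    have hnn : ∀ s ∈ Set.Ioc (0:ℝ) 1, 0 ≤ s ^ (2*α) *
        (∫ u in s..1, u ^ β * (u - s) ^ γ) * (∫ v in t..(t+1), v ^ β * (v - s) ^ γ) := by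
      intro s hs
      have hA0 : 0 ≤ ∫ u in s..1, u ^ β * (u - s) ^ γ := by
        apply intervalIntegral.integral_nonneg hs.2
        intro u hu
        exact mul_nonneg (Real.rpow_nonneg (le_trans hs.1.le hu.1) _)
          (Real.rpow_nonneg (by linarith [hu.1]) _)
      have hB0 : 0 ≤ ∫ v in t..(t+1), v ^ β * (v - s) ^ γ := by
        apply intervalIntegral.integral_nonneg (by linarith : t ≤ t+1)
        intro v hv
        exact mul_nonneg (Real.rpow_nonneg (by linarith [hv.1]) _)
          (Real.rpow_nonneg (by linarith [hv.1, hs.2]) _)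
      exact mul_nonneg (mul_nonneg (Real.rpow_nonneg hs.1.le _) hA0) hB0
    have hub : ∀ s ∈ Set.Ioc (0:ℝ) 1, s ^ (2*α) *
        (∫ u in s..1, u ^ β * (u - s) ^ γ) * (∫ v in t..(t+1), v ^ β * (v - s) ^ γ)
        ≤ (Ca * Cb * t ^ (β+γ)) * s ^ (2*α + (β+γ+1)) := by
      intro s hs
      have hA0 : 0 ≤ ∫ u in s..1, u ^ β * (u - s) ^ γ := by
        apply intervalIntegral.integral_nonneg hs.2
        intro u hu
        exact mul_nonneg (Real.rpow_nonneg (le_trans hs.1.le hu.1) _)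
          (Real.rpow_nonneg (by linarith [hu.1]) _)
      have hB0 : 0 ≤ ∫ v in t..(t+1), v ^ β * (v - s) ^ γ := by
        apply intervalIntegral.integral_nonneg (by linarith : t ≤ t+1)
        intro v hv
        exact mul_nonneg (Real.rpow_nonneg (by linarith [hv.1]) _)
          (Real.rpow_nonneg (by linarith [hv.1, hs.2]) _)
      have h1 := hA s hs
      have h2 := hB t s ht hs.1.le hs.2
      have hs2a : (0:ℝ) ≤ s ^ (2*α) := Real.rpow_nonneg hs.1.le _
      calc s ^ (2*α) * (∫ u in s..1, u ^ β * (u - s) ^ γ)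
            * (∫ v in t..(t+1), v ^ β * (v - s) ^ γ)
          ≤ s ^ (2*α) * (Ca * s ^ (β+γ+1)) * (Cb * t ^ (β+γ)) := by
            apply mul_le_mul (mul_le_mul_of_nonneg_left h1 hs2a) h2 hB0
            exact mul_nonneg hs2a (mul_nonneg hCa.le (Real.rpow_nonneg hs.1.le _))
        _ = (Ca * Cb * t ^ (β+γ)) * (s ^ (2*α) * s ^ (β+γ+1)) := by ring
        _ = (Ca * Cb * t ^ (β+γ)) * s ^ (2*α + (β+γ+1)) := by
            rw [← Real.rpow_add hs.1]
    have hgint2 : IntegrableOn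
        (fun s : ℝ => (Ca * Cb * t ^ (β+γ)) * s ^ (2*α + (β+γ+1))) (Set.Ioc (0:ℝ) 1) :=
      hgint.const_mul _
    have hfmeas : AEStronglyMeasurable
        (fun s : ℝ => s ^ (2*α) * (∫ u in s..1, u ^ β * (u - s) ^ γ)
          * (∫ v in t..(t+1), v ^ β * (v - s) ^ γ))
        (volume.restrict (Set.Ioc (0:ℝ) 1)) := by
      have hMme : Measurable (fun s : ℝ => s ^ (2*α) * M s
          * (∫ v in t..(t+1), v ^ β * (v - s) ^ γ)) := by
        exact ((by fun_prop : Measurable fun s : ℝ => s ^ (2*α)).mul hMmeas).mul (measB β γ t)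
      apply (hMme.aestronglyMeasurable.restrict).congr
      rw [Filter.EventuallyEq, ae_restrict_iff' measurableSet_Ioc]
      filter_upwards with s hs
      rw [hM s hs]
    have hfint : IntegrableOn
        (fun s : ℝ => s ^ (2*α) * (∫ u in s..1, u ^ β * (u - s) ^ γ)
          * (∫ v in t..(t+1), v ^ β * (v - s) ^ γ)) (Set.Ioc (0:ℝ) 1) := by
      apply hgint2.mono' hfmeas
      rw [ae_restrict_iff' measurableSet_Ioc]
      filter_upwards with s hs
      rw [Real.norm_of_nonneg (hnn s hs)]
      exact hub s hs
    constructor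
    · rw [hFset]
      exact setIntegral_nonneg measurableSet_Ioc hnn
    · calc F t ≤ ∫ s in Set.Ioc (0:ℝ) 1, (Ca * Cb * t ^ (β+γ)) * s ^ (2*α + (β+γ+1)) := by
            rw [hFset]
            exact setIntegral_mono_on hfint hgint2 measurableSet_Ioc hub
        _ = (Ca * Cb * t ^ (β+γ)) * D := by rw [MeasureTheory.integral_const_mul]
        _ = K * t ^ (β+γ) := by rw [hK]; ring
  constructor
  · have h1 : Summable (fun n : ℕ => ((n:ℝ)) ^ (β+γ)) := Real.summable_nat_rpow.mpr hβγ
    have h2 := (_root_.summable_nat_add_iff 1).mpr h1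
    have h3 : Summable (fun n : ℕ => K * ((n:ℝ)+1) ^ (β+γ)) := by
      apply Summable.mul_left
      convert h2 using 2 with n
      case e'_3 => rfl
      push_cast
      ring
    apply Summable.of_nonneg_of_le _ _ h3
    · intro n
      exact (key ((n:ℝ)+1) (by linarith [Nat.cast_nonneg (α := ℝ) n])).1
    · intro n
      exact (key ((n:ℝ)+1) (by linarith [Nat.cast_nonneg (α := ℝ) n])).2
  · have hmono : (∫⁻ t in Set.Ici (1:ℝ), ENNReal.ofReal (F t))
        ≤ ∫⁻ t in Set.Ici (1:ℝ), ENNReal.ofReal (K * t ^ (β+γ)) := by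
      apply setLIntegral_mono
      · exact (by fun_prop : Measurable fun t : ℝ => K * t ^ (β+γ)).ennreal_ofReal
      · intro t ht
        exact ENNReal.ofReal_le_ofReal (key t ht).2
    have hIoi : (∫⁻ t in Set.Ici (1:ℝ), ENNReal.ofReal (K * t ^ (β+γ)))
        = ∫⁻ t in Set.Ioi (1:ℝ), ENNReal.ofReal (K * t ^ (β+γ)) := by
      rw [← Measure.restrict_congr_set Ioi_ae_eq_Ici]
    have hint : IntegrableOn (fun t : ℝ => K * t ^ (β+γ)) (Set.Ioi (1:ℝ)) :=
      (integrableOn_Ioi_rpow_of_lt hβγ one_pos).const_mul _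
    calc (∫⁻ t in Set.Ici (1:ℝ), ENNReal.ofReal (F t))
        ≤ ∫⁻ t in Set.Ici (1:ℝ), ENNReal.ofReal (K * t ^ (β+γ)) := hmono
      _ = ∫⁻ t in Set.Ioi (1:ℝ), ENNReal.ofReal (K * t ^ (β+γ)) := hIoi
      _ < ⊤ := hint.setLIntegral_lt_top
end

section
/- Let α, β, γ be real numbers with α > -1/2, α + β + γ > -3/2, and γ > −1/2. For t ≥ 0 define V(t) = ∫₀^{t+1} s^{2α} (∫_{max(s,t)}^{t+1} u^β (u−s)^γ du)² ds. Then lim_{t→+∞} V(t) / t^{2α+2β+2γ+1} = B(2α+1, 2γ+1), where B(a,b) = Γ(a)Γ(b)/Γ(a+b) is the Beta function. -/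
open MeasureTheory Filter intervalIntegral Set

noncomputable def inn (β γ t x : ℝ) : ℝ :=
  ∫ u in Set.Ioc (max ((t+1)*x) t) (t+1), u ^ β * (u - (t+1)*x) ^ γ

lemma inn_stronglyMeasurable (β γ t : ℝ) : StronglyMeasurable (inn β γ t) := by
  have hS : MeasurableSet {q : ℝ × ℝ | max ((t+1)*q.1) t < q.2 ∧ q.2 ≤ t+1} := by
    apply MeasurableSet.inter
    · exact measurableSet_lt ((measurable_fst.const_mul _).max measurable_const) measurable_snd
    · exact measurableSet_le measurable_snd measurable_const
  have hg : Measurable fun q : ℝ × ℝ => q.2 ^ β * (q.2 - (t+1)*q.1) ^ γ := by measurability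
  have hF : StronglyMeasurable fun q : ℝ × ℝ =>
      Set.indicator {q : ℝ × ℝ | max ((t+1)*q.1) t < q.2 ∧ q.2 ≤ t+1}
        (fun q => q.2 ^ β * (q.2 - (t+1)*q.1) ^ γ) q :=
    (hg.indicator hS).stronglyMeasurable
  have h2 := hF.integral_prod_right' (ν := volume)
  have : inn β γ t = fun x => ∫ u, Set.indicator
      {q : ℝ × ℝ | max ((t+1)*q.1) t < q.2 ∧ q.2 ≤ t+1}
      (fun q => q.2 ^ β * (q.2 - (t+1)*q.1) ^ γ) (x, u) := by
    funext x
    rw [inn, ← MeasureTheory.integral_indicator measurableSet_Ioc]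
    congr 1
  rw [this]
  exact h2

lemma shift_integrable {γ : ℝ} (hγ : -1 < γ) (s a b : ℝ) :
    IntervalIntegrable (fun u : ℝ => (u - s) ^ γ) volume a b := by
  simpa using (intervalIntegral.intervalIntegrable_rpow' (a := a - s) (b := b - s) hγ).comp_sub_right s

lemma rpow_shift_integral_le {γ : ℝ} (hγ : -1 < γ) {t s : ℝ} (ht : 1 ≤ t) (hs0 : 0 ≤ s)
    (hs : s ≤ t+1) :
    ∫ u in Set.Ioc (max s t) (t+1), (u - s) ^ γ ≤ (2/(γ+1) + 2^|γ|) * (t+1-s) ^ γ := by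
  set a := max s t with ha
  have hat : a ≤ t + 1 := max_le (by linarith) (by linarith)
  have hsa : s ≤ a := le_max_left _ _
  have hγ1 : (0:ℝ) < γ + 1 := by linarith
  have hL0 : (0:ℝ) ≤ a - s := by linarith
  have hLU : a - s ≤ t + 1 - s := by linarith
  have hU0 : (0:ℝ) ≤ t + 1 - s := le_trans hL0 hLU
  have hUg : (0:ℝ) ≤ (t+1-s) ^ γ := Real.rpow_nonneg hU0 _
  have h2g : (0:ℝ) ≤ 2 / (γ+1) * (t+1-s) ^ γ := by positivity
  have h2g' : (0:ℝ) ≤ 2^|γ| * (t+1-s) ^ γ := by positivity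
  rw [add_mul]
  rcases le_or_gt (t + 1 - s) 2 with hU2 | hU2
  · -- use exact antiderivative
    have hval : ∫ u in Set.Ioc a (t+1), (u - s) ^ γ
        = ((t+1-s) ^ (γ+1) - (a-s) ^ (γ+1)) / (γ+1) := by
      rw [← intervalIntegral.integral_of_le hat,
        intervalIntegral.integral_comp_sub_right (fun v => v ^ γ) s,
        integral_rpow (Or.inl hγ)]
    rw [hval]
    have h1 : (t+1-s) ^ (γ+1) = (t+1-s) ^ γ * (t+1-s) := by
      rw [Real.rpow_add' hU0 (by linarith)]
      simp
    have h2 : (0:ℝ) ≤ (a-s) ^ (γ+1) := Real.rpow_nonneg hL0 _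
    have h3 : ((t+1-s) ^ (γ+1) - (a-s) ^ (γ+1)) / (γ+1) ≤ (t+1-s) ^ γ * 2 / (γ+1) := by
      apply div_le_div_of_nonneg_right ?_ hγ1.le
      · rw [h1]
        nlinarith [mul_le_mul_of_nonneg_left hU2 hUg]
    refine h3.trans ?_
    have : (t+1-s) ^ γ * 2 / (γ+1) = 2/(γ+1) * (t+1-s) ^ γ := by ring
    rw [this]
    linarith
  · -- constant bound
    have hst : s ≤ t := by linarith
    have ha' : a = t := max_eq_right hst
    have hbound : ∀ u ∈ Set.Ioc a (t+1), (u - s) ^ γ ≤ 2^|γ| * (t+1-s) ^ γ := by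
      intro u hu
      have hus : a - s ≤ u - s := by have := hu.1.le; linarith
      have hus' : u - s ≤ t + 1 - s := by have := hu.2; linarith
      rcases le_or_gt 0 γ with hγ0 | hγ0
      · calc (u-s) ^ γ ≤ (t+1-s) ^ γ := Real.rpow_le_rpow (by linarith) hus' hγ0
          _ ≤ 2^|γ| * (t+1-s) ^ γ := by
            nth_rewrite 1 [← one_mul ((t+1-s) ^ γ)]
            exact mul_le_mul_of_nonneg_right (Real.one_le_rpow one_le_two (abs_nonneg _)) hUg
      · have h1 : (u-s) ^ γ ≤ (a-s) ^ γ :=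
          Real.rpow_le_rpow_of_nonpos (by rw [ha']; linarith) hus hγ0.le
        have h2 : ((t+1-s)/2) ^ γ = (t+1-s) ^ γ / 2 ^ γ :=
          Real.div_rpow hU0 (by norm_num) γ
        have h3 : (a-s) ^ γ ≤ ((t+1-s)/2) ^ γ := by
          apply Real.rpow_le_rpow_of_nonpos (by positivity) ?_ hγ0.le
          rw [ha']; linarith
        have h4 : (t+1-s) ^ γ / 2 ^ γ = 2^|γ| * (t+1-s) ^ γ := by
          rw [abs_of_neg hγ0, Real.rpow_neg (by norm_num)]
          field_simp
        linarith
    have hint : IntegrableOn (fun u : ℝ => (u - s) ^ γ) (Set.Ioc a (t+1)) := by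
      rw [← intervalIntegrable_iff_integrableOn_Ioc_of_le hat]
      exact shift_integrable hγ s a (t+1)
    calc ∫ u in Set.Ioc a (t+1), (u - s) ^ γ
        ≤ ∫ _u in Set.Ioc a (t+1), 2^|γ| * (t+1-s) ^ γ :=
          setIntegral_mono_on hint (integrableOn_const (by
            rw [Real.volume_Ioc]; exact ENNReal.ofReal_ne_top)) measurableSet_Ioc hbound
      _ = 2^|γ| * (t+1-s) ^ γ := by
          rw [setIntegral_const, measureReal_def, Real.volume_Ioc, ha']
          norm_num
      _ ≤ 2/(γ+1) * (t+1-s) ^ γ + 2^|γ| * (t+1-s) ^ γ := by linarith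

lemma aux_pow (β : ℝ) {t u : ℝ} (ht : 1 ≤ t) (h1 : t ≤ u) (h2 : u ≤ 2*t) :
    u ^ β ≤ 2^|β| * t ^ β := by
  have ht0 : (0:ℝ) < t := by linarith
  have htp : (0:ℝ) ≤ t ^ β := Real.rpow_nonneg ht0.le _
  rcases le_or_gt 0 β with hβ | hβ
  · calc u ^ β ≤ (2*t) ^ β := Real.rpow_le_rpow (by linarith) h2 hβ
      _ = 2^β * t^β := Real.mul_rpow (by norm_num) ht0.le
      _ ≤ 2^|β| * t^β := by
        apply mul_le_mul_of_nonneg_right _ htp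
        exact Real.rpow_le_rpow_of_exponent_le one_le_two (le_abs_self β)
  · calc u ^ β ≤ t ^ β := Real.rpow_le_rpow_of_nonpos ht0 h1 hβ.le
      _ ≤ 2^|β| * t^β := by
        nth_rewrite 1 [← one_mul (t ^ β)]
        exact mul_le_mul_of_nonneg_right (Real.one_le_rpow one_le_two (abs_nonneg _)) htp

lemma inn_le {β γ : ℝ} (hγ : -1 < γ) {t x : ℝ} (ht : 1 ≤ t) (hx : x ∈ Set.Ioc (0:ℝ) 1) :
    inn β γ t x ≤ (2^|β| * 2^|γ| * (2/(γ+1) + 2^|γ|)) * t ^ (β+γ) * (1-x) ^ γ := by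
  obtain ⟨hx0, hx1⟩ := hx
  have ht0 : (0:ℝ) < t := by linarith
  have hγ1 : (0:ℝ) < γ + 1 := by linarith
  simp only [inn]
  set s := (t+1)*x with hsdef
  have hs0 : 0 ≤ s := mul_nonneg (by linarith) hx0.le
  have hst1 : s ≤ t + 1 := by nlinarith
  set a := max s t with hadef
  have hat : a ≤ t + 1 := max_le hst1 (by linarith)
  have hmono : ∀ u ∈ Set.Ioc a (t+1), u ^ β * (u - s) ^ γ ≤ (2^|β| * t ^ β) * (u - s) ^ γ := by
    intro u hu
    have h1 : t ≤ u := (lt_of_le_of_lt (le_max_right s t) hu.1).le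
    have h2 : u ≤ 2*t := by have := hu.2; linarith
    refine mul_le_mul_of_nonneg_right (aux_pow β ht h1 h2) (Real.rpow_nonneg ?_ _)
    have := lt_of_le_of_lt (le_max_left s t) hu.1
    linarith
  have hint2 : IntegrableOn (fun u : ℝ => (2^|β| * t ^ β) * (u - s) ^ γ) (Set.Ioc a (t+1)) := by
    rw [← intervalIntegrable_iff_integrableOn_Ioc_of_le hat]
    exact (shift_integrable hγ s a (t+1)).const_mul _
  have hint1 : IntegrableOn (fun u : ℝ => u ^ β * (u - s) ^ γ) (Set.Ioc a (t+1)) := by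
    rw [← intervalIntegrable_iff_integrableOn_Ioc_of_le hat]
    apply IntervalIntegrable.continuousOn_mul (shift_integrable hγ s a (t+1))
    apply ContinuousOn.rpow_const continuousOn_id
    intro u hu
    rw [Set.uIcc_of_le hat] at hu
    have : t ≤ u := le_trans (le_max_right s t) hu.1
    exact Or.inl (by simp only [id_eq]; exact ne_of_gt (by linarith))
  have step1 : (∫ u in Set.Ioc a (t+1), u ^ β * (u - s) ^ γ)
      ≤ (2^|β| * t ^ β) * ∫ u in Set.Ioc a (t+1), (u - s) ^ γ := by
    rw [← MeasureTheory.integral_const_mul]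
    exact setIntegral_mono_on hint1 hint2 measurableSet_Ioc hmono
  have step2 := rpow_shift_integral_le hγ ht hs0 hst1
  have hC : (0:ℝ) ≤ 2^|β| * t ^ β := by positivity
  have step3 : (∫ u in Set.Ioc a (t+1), u ^ β * (u - s) ^ γ)
      ≤ (2^|β| * t ^ β) * ((2/(γ+1) + 2^|γ|) * (t+1-s) ^ γ) :=
    step1.trans (mul_le_mul_of_nonneg_left step2 hC)
  have h4 : t + 1 - s = (t+1)*(1-x) := by rw [hsdef]; ring
  have h5 : (t+1-s) ^ γ = (t+1) ^ γ * (1-x) ^ γ := by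
    rw [h4]; exact Real.mul_rpow (by linarith) (by linarith)
  have h6 : (t+1) ^ γ ≤ 2^|γ| * t ^ γ := aux_pow γ ht (by linarith) (by linarith)
  have h7 : (0:ℝ) ≤ (1-x) ^ γ := Real.rpow_nonneg (by linarith) _
  have h8 : (t+1-s) ^ γ ≤ 2^|γ| * t ^ γ * (1-x) ^ γ := by
    rw [h5]; exact mul_le_mul_of_nonneg_right h6 h7
  have hC2 : (0:ℝ) ≤ (2^|β| * t ^ β) * (2/(γ+1) + 2^|γ|) := by positivity
  calc (∫ u in Set.Ioc a (t+1), u ^ β * (u - s) ^ γ)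
      ≤ (2^|β| * t ^ β) * ((2/(γ+1) + 2^|γ|) * (t+1-s) ^ γ) := step3
    _ = ((2^|β| * t ^ β) * (2/(γ+1) + 2^|γ|)) * (t+1-s)^γ := by ring
    _ ≤ ((2^|β| * t ^ β) * (2/(γ+1) + 2^|γ|)) * (2^|γ| * t ^ γ * (1-x) ^ γ) :=
        mul_le_mul_of_nonneg_left h8 hC2
    _ = (2^|β| * 2^|γ| * (2/(γ+1) + 2^|γ|)) * (t^β * t^γ) * (1-x) ^ γ := by ring
    _ = (2^|β| * 2^|γ| * (2/(γ+1) + 2^|γ|)) * t ^ (β+γ) * (1-x) ^ γ := by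
        rw [← Real.rpow_add ht0]

lemma min_div_pos {p q c : ℝ} (hc : 0 < c) : min p q / c = min (p/c) (q/c) := by
  rcases le_total p q with h | h
  · rw [min_eq_left h, min_eq_left (by gcongr)]
  · rw [min_eq_right h, min_eq_right (by gcongr)]

lemma max_div_pos {p q c : ℝ} (hc : 0 < c) : max p q / c = max (p/c) (q/c) := by
  rcases le_total p q with h | h
  · rw [max_eq_right h, max_eq_right (by gcongr)]
  · rw [max_eq_left h, max_eq_left (by gcongr)]

lemma w_tendsto : Tendsto (fun t : ℝ => (t+1)/t) atTop (nhds 1) := by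
  have h : Tendsto (fun t : ℝ => 1 + t⁻¹) atTop (nhds 1) := by
    simpa using tendsto_const_nhds.add tendsto_inv_atTop_zero (f := fun t : ℝ => (1:ℝ))
  apply h.congr'
  filter_upwards [eventually_gt_atTop (0:ℝ)] with t ht
  field_simp

lemma inn_tendsto {β γ : ℝ} (hγ : -1 < γ) {x : ℝ} (hx : x ∈ Set.Ioo (0:ℝ) 1) :
    Tendsto (fun t => inn β γ t x / t ^ (β+γ)) atTop (nhds ((1-x) ^ γ)) := by
  obtain ⟨hx0, hx1⟩ := hx
  have hx1' : 0 < 1 - x := by linarith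
  set w : ℝ → ℝ := fun t => (t+1)/t with hw
  have hw1 : Tendsto w atTop (nhds 1) := w_tendsto
  have hA : Tendsto (fun t => min 1 ((w t)^β)) atTop (nhds 1) := by
    have := (tendsto_const_nhds : Tendsto (fun _ : ℝ => (1:ℝ)) atTop (nhds 1)).min
      (hw1.rpow_const (p := β) (Or.inl one_ne_zero))
    simpa [Real.one_rpow] using this
  have hA' : Tendsto (fun t => max 1 ((w t)^β)) atTop (nhds 1) := by
    have := (tendsto_const_nhds : Tendsto (fun _ : ℝ => (1:ℝ)) atTop (nhds 1)).max
      (hw1.rpow_const (p := β) (Or.inl one_ne_zero))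
    simpa [Real.one_rpow] using this
  have hB1 : Tendsto (fun t => (1 - w t * x)^γ) atTop (nhds ((1-x)^γ)) := by
    have : Tendsto (fun t => 1 - w t * x) atTop (nhds (1 - x)) := by
      simpa using (tendsto_const_nhds : Tendsto (fun _ : ℝ => (1:ℝ)) atTop (nhds 1)).sub
        (hw1.mul_const x)
    exact this.rpow_const (Or.inl (ne_of_gt hx1'))
  have hB2 : Tendsto (fun t => (w t * (1-x))^γ) atTop (nhds ((1-x)^γ)) := by
    have : Tendsto (fun t => w t * (1-x)) atTop (nhds (1 - x)) := by
      simpa using hw1.mul_const (1-x)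
    exact this.rpow_const (Or.inl (ne_of_gt hx1'))
  have hlo : Tendsto (fun t => min 1 ((w t)^β) * min ((1 - w t * x)^γ) ((w t * (1-x))^γ))
      atTop (nhds ((1-x)^γ)) := by
    have := hA.mul (hB1.min hB2)
    simpa using this
  have hhi : Tendsto (fun t => max 1 ((w t)^β) * max ((1 - w t * x)^γ) ((w t * (1-x))^γ))
      atTop (nhds ((1-x)^γ)) := by
    have := hA'.mul (hB1.max hB2)
    simpa using this
  have key : ∀ t : ℝ, 1 ≤ t → x/(1-x) < t →
      min 1 ((w t)^β) * min ((1 - w t * x)^γ) ((w t * (1-x))^γ) ≤ inn β γ t x / t ^ (β+γ)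
      ∧ inn β γ t x / t ^ (β+γ)
        ≤ max 1 ((w t)^β) * max ((1 - w t * x)^γ) ((w t * (1-x))^γ) := by
    intro t ht hts
    have ht0 : (0:ℝ) < t := by linarith
    set s := (t+1)*x with hsdef
    have hs0 : 0 < s := by positivity
    have hst : s < t := by
      rw [hsdef]
      rw [div_lt_iff₀ hx1'] at hts
      nlinarith
    have hmax : max s t = t := max_eq_right hst.le
    have htβ : (0:ℝ) < t ^ β := Real.rpow_pos_of_pos ht0 _
    have htγ : (0:ℝ) < t ^ γ := Real.rpow_pos_of_pos ht0 _
    have htβγ : (0:ℝ) < t ^ (β+γ) := Real.rpow_pos_of_pos ht0 _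
    have hts0 : 0 < t - s := by linarith
    have hIeq : inn β γ t x = ∫ u in Set.Ioc t (t+1), u ^ β * (u - s) ^ γ := by
      rw [inn, hmax]
    have hint : IntegrableOn (fun u : ℝ => u ^ β * (u - s) ^ γ) (Set.Ioc t (t+1)) := by
      rw [← intervalIntegrable_iff_integrableOn_Ioc_of_le (by linarith : t ≤ t+1)]
      apply IntervalIntegrable.continuousOn_mul (shift_integrable hγ s t (t+1))
      apply ContinuousOn.rpow_const continuousOn_id
      intro u hu
      rw [Set.uIcc_of_le (by linarith : t ≤ t+1)] at hu
      exact Or.inl (by simp only [id_eq]; exact ne_of_gt (by linarith [hu.1]))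
    -- pointwise bounds
    have hlow : ∀ u ∈ Set.Ioc t (t+1),
        min (t^β) ((t+1)^β) * min ((t-s)^γ) ((t+1-s)^γ) ≤ u ^ β * (u - s) ^ γ := by
      intro u hu
      have hu1 : t ≤ u := hu.1.le
      have hu2 : u ≤ t+1 := hu.2
      have hβb : min (t^β) ((t+1)^β) ≤ u ^ β := by
        rcases le_or_gt 0 β with hβ | hβ
        · exact (min_le_left _ _).trans (Real.rpow_le_rpow ht0.le hu1 hβ)
        · exact (min_le_right _ _).trans (Real.rpow_le_rpow_of_nonpos (by linarith) hu2 hβ.le)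
      have hγb : min ((t-s)^γ) ((t+1-s)^γ) ≤ (u - s) ^ γ := by
        rcases le_or_gt 0 γ with hγ0 | hγ0
        · exact (min_le_left _ _).trans (Real.rpow_le_rpow hts0.le (by linarith) hγ0)
        · exact (min_le_right _ _).trans
            (Real.rpow_le_rpow_of_nonpos (by linarith) (by linarith) hγ0.le)
      exact mul_le_mul hβb hγb (le_min (Real.rpow_nonneg hts0.le _)
        (Real.rpow_nonneg (by linarith) _)) (Real.rpow_nonneg (by linarith) _)
    have hup : ∀ u ∈ Set.Ioc t (t+1),
        u ^ β * (u - s) ^ γ ≤ max (t^β) ((t+1)^β) * max ((t-s)^γ) ((t+1-s)^γ) := by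
      intro u hu
      have hu1 : t ≤ u := hu.1.le
      have hu2 : u ≤ t+1 := hu.2
      have hβb : u ^ β ≤ max (t^β) ((t+1)^β) := by
        rcases le_or_gt 0 β with hβ | hβ
        · exact (Real.rpow_le_rpow (by linarith) hu2 hβ).trans (le_max_right _ _)
        · exact (Real.rpow_le_rpow_of_nonpos ht0 hu1 hβ.le).trans (le_max_left _ _)
      have hγb : (u - s) ^ γ ≤ max ((t-s)^γ) ((t+1-s)^γ) := by
        rcases le_or_gt 0 γ with hγ0 | hγ0
        · exact (Real.rpow_le_rpow (by linarith) (by linarith) hγ0).trans (le_max_right _ _)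
        · exact (Real.rpow_le_rpow_of_nonpos hts0 (by linarith) hγ0.le).trans (le_max_left _ _)
      exact mul_le_mul hβb hγb (Real.rpow_nonneg (by linarith) _)
        (le_trans (Real.rpow_nonneg ht0.le _) (le_max_left _ _))
    -- integrate the bounds
    have hμ : (volume (Set.Ioc t (t+1))).toReal = 1 := by
      rw [Real.volume_Ioc]
      norm_num
    have hconst : ∀ c : ℝ, IntegrableOn (fun _ : ℝ => c) (Set.Ioc t (t+1)) :=
      fun c => integrableOn_const (by rw [Real.volume_Ioc]; exact ENNReal.ofReal_ne_top)
    have hIlow : min (t^β) ((t+1)^β) * min ((t-s)^γ) ((t+1-s)^γ) ≤ inn β γ t x := by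
      rw [hIeq]
      calc min (t^β) ((t+1)^β) * min ((t-s)^γ) ((t+1-s)^γ)
          = ∫ _u in Set.Ioc t (t+1), min (t^β) ((t+1)^β) * min ((t-s)^γ) ((t+1-s)^γ) := by
            rw [setIntegral_const, measureReal_def, hμ, one_smul]
        _ ≤ ∫ u in Set.Ioc t (t+1), u ^ β * (u - s) ^ γ :=
            setIntegral_mono_on (hconst _) hint measurableSet_Ioc hlow
    have hIup : inn β γ t x ≤ max (t^β) ((t+1)^β) * max ((t-s)^γ) ((t+1-s)^γ) := by
      rw [hIeq]
      calc ∫ u in Set.Ioc t (t+1), u ^ β * (u - s) ^ γ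
          ≤ ∫ _u in Set.Ioc t (t+1), max (t^β) ((t+1)^β) * max ((t-s)^γ) ((t+1-s)^γ) :=
            setIntegral_mono_on hint (hconst _) measurableSet_Ioc hup
        _ = max (t^β) ((t+1)^β) * max ((t-s)^γ) ((t+1-s)^γ) := by
            rw [setIntegral_const, measureReal_def, hμ, one_smul]
    -- algebraic identities
    have e1 : min (t^β) ((t+1)^β) / t^β = min 1 ((w t)^β) := by
      rw [min_div_pos htβ, div_self (ne_of_gt htβ), ← Real.div_rpow (by linarith) ht0.le]
    have e1' : max (t^β) ((t+1)^β) / t^β = max 1 ((w t)^β) := by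
      rw [max_div_pos htβ, div_self (ne_of_gt htβ), ← Real.div_rpow (by linarith) ht0.le]
    have ew1 : (t-s)/t = 1 - w t * x := by
      simp only [hw, hsdef]
      field_simp
    have ew2 : (t+1-s)/t = w t * (1-x) := by
      simp only [hw, hsdef]
      field_simp
    have e2 : min ((t-s)^γ) ((t+1-s)^γ) / t^γ = min ((1 - w t * x)^γ) ((w t * (1-x))^γ) := by
      rw [min_div_pos htγ, ← Real.div_rpow hts0.le ht0.le, ← Real.div_rpow (by linarith) ht0.le,
        ew1, ew2]
    have e2' : max ((t-s)^γ) ((t+1-s)^γ) / t^γ = max ((1 - w t * x)^γ) ((w t * (1-x))^γ) := by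
      rw [max_div_pos htγ, ← Real.div_rpow hts0.le ht0.le, ← Real.div_rpow (by linarith) ht0.le,
        ew1, ew2]
    constructor
    · calc min 1 ((w t)^β) * min ((1 - w t * x)^γ) ((w t * (1-x))^γ)
          = (min (t^β) ((t+1)^β) * min ((t-s)^γ) ((t+1-s)^γ)) / (t^β * t^γ) := by
            rw [mul_div_mul_comm, e1, e2]
        _ = (min (t^β) ((t+1)^β) * min ((t-s)^γ) ((t+1-s)^γ)) / t^(β+γ) := by
            rw [Real.rpow_add ht0]
        _ ≤ inn β γ t x / t^(β+γ) := by gcongr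
    · calc inn β γ t x / t^(β+γ)
          ≤ (max (t^β) ((t+1)^β) * max ((t-s)^γ) ((t+1-s)^γ)) / t^(β+γ) := by gcongr
        _ = (max (t^β) ((t+1)^β) * max ((t-s)^γ) ((t+1-s)^γ)) / (t^β * t^γ) := by
            rw [Real.rpow_add ht0]
        _ = max 1 ((w t)^β) * max ((1 - w t * x)^γ) ((w t * (1-x))^γ) := by
            rw [mul_div_mul_comm, e1', e2']
  refine tendsto_of_tendsto_of_tendsto_of_le_of_le' hlo hhi ?_ ?_
  · filter_upwards [eventually_ge_atTop (1:ℝ), eventually_gt_atTop (x/(1-x))] with t ht hts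
    exact (key t ht hts).1
  · filter_upwards [eventually_ge_atTop (1:ℝ), eventually_gt_atTop (x/(1-x))] with t ht hts
    exact (key t ht hts).2

lemma beta_cong (p q : ℝ) : Set.EqOn (fun x : ℝ => ((x:ℂ) ^ ((p:ℂ)+1-1) * ((1:ℂ)-(x:ℂ)) ^ ((q:ℂ)+1-1)))
    (fun x : ℝ => ((x ^ p * (1-x) ^ q : ℝ) : ℂ)) (Set.uIcc (0:ℝ) 1) := by
  intro x hx
  rw [Set.uIcc_of_le (by norm_num : (0:ℝ) ≤ 1)] at hx
  have hx0 : (0:ℝ) ≤ x := hx.1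
  have hx1 : (0:ℝ) ≤ 1 - x := by linarith [hx.2]
  simp only [add_sub_cancel_right]
  rw [← Complex.ofReal_cpow hx0, show ((1:ℂ) - (x:ℂ)) = ((1 - x : ℝ) : ℂ) by push_cast; ring,
    ← Complex.ofReal_cpow hx1]
  push_cast
  ring

lemma betaValue {p q : ℝ} (hp : -1 < p) (hq : -1 < q) :
    ∫ x in Set.Ioc (0:ℝ) 1, x ^ p * (1-x) ^ q
      = Real.Gamma (p+1) * Real.Gamma (q+1) / Real.Gamma (p+q+2) := by
  have hp' : 0 < ((p:ℂ)+1).re := by simp; linarith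
  have hq' : 0 < ((q:ℂ)+1).re := by simp; linarith
  have h := Complex.Gamma_mul_Gamma_eq_betaIntegral hp' hq'
  have hbeta : Complex.betaIntegral ((p:ℂ)+1) ((q:ℂ)+1)
      = ((∫ x in (0:ℝ)..1, x ^ p * (1-x) ^ q : ℝ) : ℂ) := by
    rw [Complex.betaIntegral]
    rw [intervalIntegral.integral_congr (beta_cong p q)]
    exact intervalIntegral.integral_ofReal
  rw [hbeta] at h
  have hcast : ((p:ℂ)+1) + ((q:ℂ)+1) = ((p+q+2 : ℝ) : ℂ) := by push_cast; ring
  rw [hcast] at h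
  rw [show ((p:ℂ)+1) = ((p+1:ℝ):ℂ) by push_cast; ring,
    show ((q:ℂ)+1) = ((q+1:ℝ):ℂ) by push_cast; ring] at h
  rw [Complex.Gamma_ofReal, Complex.Gamma_ofReal, Complex.Gamma_ofReal] at h
  have h' : Real.Gamma (p+1) * Real.Gamma (q+1)
      = Real.Gamma (p+q+2) * ∫ x in (0:ℝ)..1, x ^ p * (1-x) ^ q := by
    exact_mod_cast h
  have hΓ : Real.Gamma (p+q+2) ≠ 0 :=
    ne_of_gt (Real.Gamma_pos_of_pos (by linarith))
  rw [← intervalIntegral.integral_of_le (by norm_num : (0:ℝ) ≤ 1)]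
  field_simp [h']
  rw [h']; ring

lemma betaIntegrable {p q : ℝ} (hp : -1 < p) (hq : -1 < q) :
    IntegrableOn (fun x : ℝ => x ^ p * (1-x) ^ q) (Set.Ioc 0 1) := by
  have h := Complex.betaIntegral_convergent (u := (p:ℂ)+1) (v := (q:ℂ)+1)
    (by simp; linarith) (by simp; linarith)
  rw [intervalIntegrable_iff_integrableOn_Ioc_of_le (by norm_num : (0:ℝ) ≤ 1)] at h
  have h2 : IntegrableOn (fun x : ℝ => ((x ^ p * (1-x) ^ q : ℝ) : ℂ)) (Set.Ioc 0 1) := by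
    apply h.congr_fun ?_ measurableSet_Ioc
    intro x hx
    exact beta_cong p q (by rw [Set.uIcc_of_le (by norm_num : (0:ℝ) ≤ 1)]; exact Set.Ioc_subset_Icc_self hx)
  have h3 := h2.re
  simpa [IntegrableOn] using h3

lemma inn_nonneg (β γ t x : ℝ) (ht : 0 ≤ t) : 0 ≤ inn β γ t x := by
  apply setIntegral_nonneg measurableSet_Ioc
  intro u hu
  have h1 : 0 < u := lt_of_le_of_lt (le_trans ht (le_max_right _ _)) hu.1
  have h2 : 0 ≤ u - (t+1)*x := sub_nonneg.2 (le_trans (le_max_left _ _) hu.1.le)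
  exact mul_nonneg (Real.rpow_nonneg h1.le _) (Real.rpow_nonneg h2 _)

lemma V_eq (α β γ : ℝ) (V : ℝ → ℝ)
    (hV : ∀ t : ℝ, V t = ∫ s in (0:ℝ)..(t+1), s ^ (2*α) *
      (∫ u in (max s t)..(t+1), u ^ β * (u - s) ^ γ) ^ 2)
    {t : ℝ} (ht : 1 ≤ t) :
    V t / t ^ (2*α+2*β+2*γ+1)
      = ((t+1)/t) ^ (2*α+1)
        * ∫ x in Set.Ioc (0:ℝ) 1, x ^ (2*α) * (inn β γ t x / t ^ (β+γ))^2 := by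
  have ht0 : (0:ℝ) < t := by linarith
  have hc0 : (0:ℝ) < t + 1 := by linarith
  set f : ℝ → ℝ := fun s => s ^ (2*α) *
      (∫ u in (max s t)..(t+1), u ^ β * (u - s) ^ γ) ^ 2 with hf
  have hcomp : (∫ x in (0:ℝ)..1, f ((t+1) * x))
      = (t+1)⁻¹ • ∫ s in (0:ℝ)..(t+1), f s := by
    have := intervalIntegral.integral_comp_mul_left (a := (0:ℝ)) (b := 1)
      (f := f) (ne_of_gt hc0)
    simpa using this
  have hEq : Set.EqOn (fun x => f ((t+1)*x))
      (fun x => (t+1)^(2*α) * (x^(2*α) * (inn β γ t x)^2)) (Set.uIcc (0:ℝ) 1) := by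
    intro x hx
    rw [Set.uIcc_of_le (by norm_num : (0:ℝ) ≤ 1)] at hx
    have hx0 : 0 ≤ x := hx.1
    have hx1 : x ≤ 1 := hx.2
    have hmax : max ((t+1)*x) t ≤ t+1 := max_le (by nlinarith) (by linarith)
    simp only [hf]
    rw [Real.mul_rpow hc0.le hx0, intervalIntegral.integral_of_le hmax]
    show (t+1)^(2*α) * x^(2*α) * (inn β γ t x)^2 = _
    ring
  have hJ : (∫ x in (0:ℝ)..1, f ((t+1)*x))
      = (t+1)^(2*α) * ∫ x in Set.Ioc (0:ℝ) 1, x^(2*α) * (inn β γ t x)^2 := by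
    rw [intervalIntegral.integral_congr hEq, intervalIntegral.integral_const_mul,
      intervalIntegral.integral_of_le (by norm_num : (0:ℝ) ≤ 1)]
  set J := ∫ x in Set.Ioc (0:ℝ) 1, x^(2*α) * (inn β γ t x)^2 with hJdef
  have hVt : V t = (t+1)^(2*α+1) * J := by
    have h2 : V t = (t+1) * ∫ x in (0:ℝ)..1, f ((t+1)*x) := by
      rw [hV t, hcomp, smul_eq_mul, ← mul_assoc, mul_inv_cancel₀ (ne_of_gt hc0), one_mul]
    rw [h2, hJ, Real.rpow_add hc0, Real.rpow_one]
    ring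
  have hRint : (∫ x in Set.Ioc (0:ℝ) 1, x ^ (2*α) * (inn β γ t x / t ^ (β+γ))^2)
      = J / (t^(β+γ))^2 := by
    simp_rw [div_pow, ← mul_div_assoc]
    rw [MeasureTheory.integral_div]
  have hc2 : (t^(β+γ))^(2:ℕ) = t^(2*β+2*γ) := by
    rw [← Real.rpow_natCast (t^(β+γ)) 2, ← Real.rpow_mul ht0.le]
    congr 1
    push_cast
    ring
  have hsplit : t ^ (2*α+2*β+2*γ+1) = t^(2*α+1) * t^(2*β+2*γ) := by
    rw [← Real.rpow_add ht0]; ring_nf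
  rw [hVt, hRint, Real.div_rpow hc0.le ht0.le, hc2, hsplit]
  have h1 : t^(2*α+1) ≠ 0 := ne_of_gt (Real.rpow_pos_of_pos ht0 _)
  have h2 : t^(2*β+2*γ) ≠ 0 := ne_of_gt (Real.rpow_pos_of_pos ht0 _)
  field_simp
  try ring

lemma sq_rpow {y γ : ℝ} (hy : 0 ≤ y) : (y^γ)^2 = y^(2*γ) := by
  rw [← Real.rpow_natCast (y^γ) 2, ← Real.rpow_mul hy]
  congr 1
  push_cast
  ring

set_option maxHeartbeats 1000000 in
/-- Lemma 3.4, case `γ > -1/2`: asymptotics of the incremental variance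
`E(X_{t+1} - X_t)²` of the Gaussian Volterra process. -/
theorem stmt_6 (α β γ : ℝ) (hα : -(1/2 : ℝ) < α)
    (hαβγ : -(3/2 : ℝ) < α + β + γ) (hγ' : -(1/2 : ℝ) < γ)
    (V : ℝ → ℝ)
    (hV : ∀ t : ℝ, V t = ∫ s in (0:ℝ)..(t+1), s ^ (2*α) *
      (∫ u in (max s t)..(t+1), u ^ β * (u - s) ^ γ) ^ 2) :
    Tendsto (fun t : ℝ => V t / t ^ (2*α+2*β+2*γ+1)) atTop
      (nhds (Real.Gamma (2*α+1) * Real.Gamma (2*γ+1) / Real.Gamma (2*α+2*γ+2))) := by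
  have hα2 : (-1:ℝ) < 2*α := by linarith
  have hγ2 : (-1:ℝ) < 2*γ := by linarith
  have hγ1 : (-1:ℝ) < γ := by linarith
  have hγp : (0:ℝ) < γ + 1 := by linarith
  set C : ℝ := 2^|β| * 2^|γ| * (2/(γ+1) + 2^|γ|) with hC
  have hC0 : 0 < C := by positivity
  set μ := volume.restrict (Set.Ioc (0:ℝ) 1) with hμ
  set F : ℝ → ℝ → ℝ := fun t x => x ^ (2*α) * (inn β γ t x / t ^ (β+γ))^2 with hF
  set bound : ℝ → ℝ := fun x => C^2 * (x ^ (2*α) * (1-x)^(2*γ)) with hbound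
  have hmeas : ∀ᶠ t in atTop, AEStronglyMeasurable (F t) μ := by
    filter_upwards with t
    have h1 : Measurable fun x : ℝ => x ^ (2*α) := by fun_prop
    have h2 : Measurable fun x : ℝ => (inn β γ t x / t ^ (β+γ))^2 :=
      ((inn_stronglyMeasurable β γ t).measurable.div_const _).pow_const 2
    exact (h1.mul h2).aestronglyMeasurable
  have h_bound : ∀ᶠ t in atTop, ∀ᵐ x ∂μ, ‖F t x‖ ≤ bound x := by
    filter_upwards [eventually_ge_atTop (1:ℝ)] with t ht
    rw [hμ, ae_restrict_iff' measurableSet_Ioc]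
    filter_upwards with x hx
    have hx0 : 0 < x := hx.1
    have hx1 : x ≤ 1 := hx.2
    have h1 : 0 ≤ inn β γ t x := inn_nonneg β γ t x (by linarith)
    have htp : 0 < t ^ (β+γ) := Real.rpow_pos_of_pos (by linarith) _
    have h2 : inn β γ t x / t^(β+γ) ≤ C * (1-x)^γ := by
      rw [div_le_iff₀ htp]
      calc inn β γ t x ≤ C * t^(β+γ) * (1-x)^γ := inn_le hγ1 ht hx
        _ = C * (1-x)^γ * t^(β+γ) := by ring
    have h3 : ‖F t x‖ = F t x := by
      rw [Real.norm_eq_abs, abs_of_nonneg]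
      positivity
    rw [h3]
    have h4 : (inn β γ t x / t^(β+γ))^2 ≤ (C * (1-x)^γ)^2 :=
      pow_le_pow_left₀ (by positivity) h2 2
    have h5 : (C * (1-x)^γ)^2 = C^2 * (1-x)^(2*γ) := by
      rw [mul_pow, sq_rpow (by linarith : (0:ℝ) ≤ 1 - x)]
    calc F t x ≤ x ^ (2*α) * (C * (1-x)^γ)^2 :=
          mul_le_mul_of_nonneg_left h4 (Real.rpow_nonneg hx0.le _)
      _ = bound x := by rw [hbound, h5]; ring
  have h_int : Integrable bound μ :=
    ((betaIntegrable hα2 hγ2).const_mul (C^2))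
  have h_lim : ∀ᵐ x ∂μ, Tendsto (fun t => F t x) atTop
      (nhds (x ^ (2*α) * (1-x)^(2*γ))) := by
    have hae1 : ∀ᵐ x ∂μ, x ∈ Set.Ioc (0:ℝ) 1 := ae_restrict_mem measurableSet_Ioc
    have hae2 : ∀ᵐ x ∂μ, x ≠ (1:ℝ) := by
      apply ae_restrict_of_ae
      rw [ae_iff]
      have : {x : ℝ | ¬ x ≠ (1:ℝ)} = {1} := by ext y; simp
      rw [this]
      exact Real.volume_singleton
    filter_upwards [hae1, hae2] with x hx hx1
    have hxo : x ∈ Set.Ioo (0:ℝ) 1 := ⟨hx.1, lt_of_le_of_ne hx.2 hx1⟩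
    have h := (inn_tendsto (β := β) hγ1 hxo).pow 2
    have h2 := (tendsto_const_nhds :
      Tendsto (fun _ : ℝ => x ^ (2*α)) atTop (nhds (x ^ (2*α)))).mul h
    rw [sq_rpow (by linarith [hxo.2] : (0:ℝ) ≤ 1 - x)] at h2
    exact h2
  have hDCT := MeasureTheory.tendsto_integral_filter_of_dominated_convergence bound hmeas h_bound h_int h_lim
  have hval : (∫ x, x ^ (2*α) * (1-x)^(2*γ) ∂μ)
      = Real.Gamma (2*α+1) * Real.Gamma (2*γ+1) / Real.Gamma (2*α+2*γ+2) := by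
    rw [hμ]
    exact betaValue hα2 hγ2
  rw [hval] at hDCT
  have hw : Tendsto (fun t : ℝ => ((t+1)/t)^(2*α+1)) atTop (nhds 1) := by
    have := w_tendsto.rpow_const (p := 2*α+1) (Or.inl one_ne_zero)
    simpa using this
  have hmul := hw.mul hDCT
  rw [one_mul] at hmul
  apply hmul.congr'
  filter_upwards [eventually_ge_atTop (1:ℝ)] with t ht
  exact (V_eq α β γ V hV ht).symm
end

section
/- Let α, β, γ be real numbers with α > -1/2, γ > -1, α + β + γ > -3/2, and min(γ, −1/2) < α − 1. Define, for t ≥ 1, F(t) = ∫₀¹ s^{2α} (∫ₛ¹ u^β (u−s)^γ du) (∫ₜ^{t+1} v^β (v−s)^γ dv) ds, V(t) = ∫₀^{t+1} s^{2α} (∫_{max(s,t)}^{t+1} u^β (u−s)^γ du)² ds, C = ∫₀¹ s^{2α} (∫ₛ¹ u^β (u−s)^γ du)² ds, and r(t) = F(t) / (√C · √V(t)). Then the series ∑_{n=1}^∞ r(n) converges and the integral ∫₁^∞ r(t) dt is finite. -/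
open MeasureTheory Filter intervalIntegral Set

private lemma rpow_ub_window {t x c p : ℝ} (ht : 0 < t) (hc : 1 ≤ c)
    (h1 : t ≤ c * x) (h2 : x ≤ c * t) : x ^ p ≤ c ^ |p| * t ^ p := by
  have hc0 : 0 < c := lt_of_lt_of_le one_pos hc
  have hx0 : 0 < x := by nlinarith
  rcases le_or_gt 0 p with hp | hp
  · calc x ^ p ≤ (c * t) ^ p := Real.rpow_le_rpow hx0.le h2 hp
      _ = c ^ p * t ^ p := Real.mul_rpow hc0.le ht.le
      _ = c ^ |p| * t ^ p := by rw [abs_of_nonneg hp]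
  · have hdiv : t / c ≤ x := (div_le_iff₀ hc0).2 (by linarith [mul_comm c x])
    calc x ^ p ≤ (t / c) ^ p := Real.rpow_le_rpow_of_nonpos (by positivity) hdiv hp.le
      _ = t ^ p / c ^ p := Real.div_rpow ht.le hc0.le p
      _ = t ^ p * c ^ (-p) := by rw [Real.rpow_neg hc0.le, div_eq_mul_inv]
      _ = c ^ |p| * t ^ p := by rw [abs_of_neg hp]; ring

private lemma rpow_lb_window {t x c p : ℝ} (ht : 0 < t) (hc : 1 ≤ c)
    (h1 : t ≤ c * x) (h2 : x ≤ c * t) : (c ^ |p|)⁻¹ * t ^ p ≤ x ^ p := by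
  have hc0 : 0 < c := lt_of_lt_of_le one_pos hc
  have hx0 : 0 < x := by nlinarith
  rcases le_or_gt 0 p with hp | hp
  · have hdiv : t / c ≤ x := (div_le_iff₀ hc0).2 (by linarith [mul_comm c x])
    calc (c ^ |p|)⁻¹ * t ^ p = (t / c) ^ p := by
          rw [Real.div_rpow ht.le hc0.le p, abs_of_nonneg hp, div_eq_mul_inv, mul_comm]
      _ ≤ x ^ p := Real.rpow_le_rpow (by positivity) hdiv hp
  · calc (c ^ |p|)⁻¹ * t ^ p = (c * t) ^ p := by
          rw [Real.mul_rpow hc0.le ht.le, abs_of_neg hp, ← Real.rpow_neg_one (c ^ (-p)), ← Real.rpow_mul hc0.le]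
          norm_num
      _ ≤ x ^ p := Real.rpow_le_rpow_of_nonpos hx0 h2 hp.le

private lemma intInt_shift {s a b γ : ℝ} (hγ : -1 < γ) :
    IntervalIntegrable (fun u => (u - s) ^ γ) volume a b := by
  have := (intervalIntegral.intervalIntegrable_rpow' (a := a - s) (b := b - s) hγ).comp_sub_right s
  simpa using this

private lemma int_shift_val {s d γ : ℝ} (hγ : -1 < γ) :
    ∫ u in s..d, (u - s) ^ γ = (d - s) ^ (γ + 1) / (γ + 1) := by
  rw [show (fun u => (u - s) ^ γ) = fun u => (fun x => x ^ γ) (u - s) from rfl,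
    intervalIntegral.integral_comp_sub_right (fun x => x ^ γ) s]
  rw [integral_rpow (Or.inl hγ)]
  rw [sub_self, Real.zero_rpow (by linarith : γ + 1 ≠ 0)]
  ring

private lemma intInt_cont {β γ s a b : ℝ} (ha : 0 < a) (hsa : s < a) (hab : a ≤ b) :
    IntervalIntegrable (fun v => v ^ β * (v - s) ^ γ) volume a b := by
  apply ContinuousOn.intervalIntegrable
  apply ContinuousOn.mul
  · apply ContinuousOn.rpow_const continuousOn_id
    intro x hx
    rw [uIcc_of_le hab] at hx
    exact Or.inl (ne_of_gt (lt_of_lt_of_le ha hx.1))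
  · apply ContinuousOn.rpow_const (continuousOn_id.sub continuousOn_const)
    intro x hx
    rw [uIcc_of_le hab] at hx
    exact Or.inl (sub_ne_zero.2 (ne_of_gt (lt_of_lt_of_le hsa hx.1)))

private lemma g_bound {β γ q : ℝ} (hγ : -1 < γ) (hq : q < 0) (hq2 : q ≤ β + γ + 1)
    {s : ℝ} (hs0 : 0 < s) (hs1 : s ≤ 1) :
    (∫ u in s..1, u ^ β * (u - s) ^ γ) ≤ (2 ^ |β| / (γ + 1) + 2 ^ |γ| / (-q)) * s ^ q := by
  have hγ1 : (0:ℝ) < γ + 1 := by linarith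
  have hqpos : (0:ℝ) < -q := by linarith
  by_cases hint : IntervalIntegrable (fun u => u ^ β * (u - s) ^ γ) volume s 1
  swap
  · rw [intervalIntegral.integral_undef hint]
    positivity
  have piece1 : ∀ d : ℝ, s ≤ d → d ≤ 2 * s → d ≤ 1 →
      IntervalIntegrable (fun u => u ^ β * (u - s) ^ γ) volume s d →
      (∫ u in s..d, u ^ β * (u - s) ^ γ) ≤ 2 ^ |β| / (γ + 1) * s ^ q := by
    intro d hsd hd2s hd1 hintd
    have h1 : (∫ u in s..d, u ^ β * (u - s) ^ γ) ≤
        ∫ u in s..d, 2 ^ |β| * s ^ β * (u - s) ^ γ := by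
      apply intervalIntegral.integral_mono_on hsd hintd
        ((intInt_shift hγ).const_mul _)
      intro u hu
      have hub : u ^ β ≤ 2 ^ |β| * s ^ β :=
        rpow_ub_window hs0 one_le_two (by linarith [hu.1]) (by linarith [hu.2])
      exact mul_le_mul_of_nonneg_right hub (Real.rpow_nonneg (by linarith [hu.1]) _)
    have h2 : (∫ u in s..d, 2 ^ |β| * s ^ β * (u - s) ^ γ)
        = 2 ^ |β| * s ^ β * ((d - s) ^ (γ + 1) / (γ + 1)) := by
      rw [show (fun u => 2 ^ |β| * s ^ β * (u - s) ^ γ)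
          = fun u => (2 ^ |β| * s ^ β) * (u - s) ^ γ from rfl,
        intervalIntegral.integral_const_mul, int_shift_val hγ]
    have h3 : (d - s) ^ (γ + 1) ≤ s ^ (γ + 1) :=
      Real.rpow_le_rpow (by linarith) (by linarith) hγ1.le
    have h4 : s ^ β * s ^ (γ + 1) = s ^ (β + γ + 1) := by
      rw [← Real.rpow_add hs0]; ring_nf
    have h5 : s ^ (β + γ + 1) ≤ s ^ q := Real.rpow_le_rpow_of_exponent_ge hs0 hs1 hq2
    calc (∫ u in s..d, u ^ β * (u - s) ^ γ)
        ≤ 2 ^ |β| * s ^ β * ((d - s) ^ (γ + 1) / (γ + 1)) := by rw [← h2]; exact h1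
      _ ≤ 2 ^ |β| * s ^ β * (s ^ (γ + 1) / (γ + 1)) := by
          have hb : (0:ℝ) ≤ 2 ^ |β| * s ^ β := by positivity
          apply mul_le_mul_of_nonneg_left _ hb
          gcongr
      _ = 2 ^ |β| / (γ + 1) * (s ^ β * s ^ (γ + 1)) := by ring
      _ = 2 ^ |β| / (γ + 1) * s ^ (β + γ + 1) := by rw [h4]
      _ ≤ 2 ^ |β| / (γ + 1) * s ^ q := by
          apply mul_le_mul_of_nonneg_left h5 (by positivity)
  rcases le_or_gt 1 (2 * s) with h2s | h2s
  · calc (∫ u in s..1, u ^ β * (u - s) ^ γ) ≤ 2 ^ |β| / (γ + 1) * s ^ q :=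
        piece1 1 hs1 h2s le_rfl hint
      _ ≤ (2 ^ |β| / (γ + 1) + 2 ^ |γ| / (-q)) * s ^ q := by
        apply mul_le_mul_of_nonneg_right (le_add_of_nonneg_right (by positivity))
          (Real.rpow_nonneg hs0.le q)
  · have hs2 : s ≤ 2 * s := by linarith
    have hsub1 : IntervalIntegrable (fun u => u ^ β * (u - s) ^ γ) volume s (2*s) := by
      apply hint.mono_set
      apply uIcc_subset_uIcc <;> rw [uIcc_of_le hs1] <;> constructor <;> linarith
    have hsub2 : IntervalIntegrable (fun u => u ^ β * (u - s) ^ γ) volume (2*s) 1 := by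
      apply hint.mono_set
      apply uIcc_subset_uIcc <;> rw [uIcc_of_le hs1] <;> constructor <;> linarith
    have hsplit := intervalIntegral.integral_add_adjacent_intervals hsub1 hsub2
    have hp1 := piece1 (2*s) hs2 le_rfl h2s.le hsub1
    have hp2 : (∫ u in (2*s)..1, u ^ β * (u - s) ^ γ) ≤ 2 ^ |γ| / (-q) * s ^ q := by
      have hq0 : q ≠ 0 := ne_of_lt hq
      have hq1 : q - 1 ≠ -1 := by intro h; apply hq0; linarith [sub_eq_iff_eq_add.mp h]
      have h0notin : (0:ℝ) ∉ uIcc (2*s) 1 := by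
        rw [uIcc_of_le h2s.le]; intro h; linarith [h.1]
      have hcont : IntervalIntegrable (fun u => 2 ^ |γ| * u ^ (q - 1)) volume (2*s) 1 := by
        apply IntervalIntegrable.const_mul
        apply ContinuousOn.intervalIntegrable
        apply ContinuousOn.rpow_const continuousOn_id
        intro x hx
        rw [uIcc_of_le h2s.le] at hx
        exact Or.inl (by simp only [id]; intro h; rw [h] at hx; linarith [hx.1])
      have hmono : (∫ u in (2*s)..1, u ^ β * (u - s) ^ γ) ≤
          ∫ u in (2*s)..1, 2 ^ |γ| * u ^ (q - 1) := by
        apply intervalIntegral.integral_mono_on h2s.le hsub2 hcont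
        intro u hu
        have hu0 : 0 < u := by linarith [hu.1]
        have h1 : (u - s) ^ γ ≤ 2 ^ |γ| * u ^ γ :=
          rpow_ub_window hu0 one_le_two (by linarith [hu.1]) (by linarith [hu.1])
        calc u ^ β * (u - s) ^ γ ≤ u ^ β * (2 ^ |γ| * u ^ γ) :=
              mul_le_mul_of_nonneg_left h1 (Real.rpow_nonneg hu0.le _)
          _ = 2 ^ |γ| * (u ^ β * u ^ γ) := by ring
          _ = 2 ^ |γ| * u ^ (β + γ) := by rw [← Real.rpow_add hu0]
          _ ≤ 2 ^ |γ| * u ^ (q - 1) := by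
              apply mul_le_mul_of_nonneg_left
                (Real.rpow_le_rpow_of_exponent_ge hu0 hu.2 (by linarith)) (by positivity)
      have hval : (∫ u in (2*s)..1, 2 ^ |γ| * u ^ (q - 1))
          = 2 ^ |γ| * (((1:ℝ) ^ (q - 1 + 1) - (2*s) ^ (q - 1 + 1)) / (q - 1 + 1)) := by
        rw [intervalIntegral.integral_const_mul, integral_rpow (Or.inr ⟨hq1, h0notin⟩)]
      have h2q : (2*s) ^ q = 2 ^ q * s ^ q := Real.mul_rpow (by norm_num) hs0.le
      have h2q1 : (2:ℝ) ^ q ≤ 1 := Real.rpow_le_one_of_one_le_of_nonpos one_le_two hq.le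
      have hsq : 0 < s ^ q := Real.rpow_pos_of_pos hs0 q
      have h2qpos : (0:ℝ) < 2 ^ q := Real.rpow_pos_of_pos (by norm_num) q
      calc (∫ u in (2*s)..1, u ^ β * (u - s) ^ γ)
          ≤ 2 ^ |γ| * (((1:ℝ) ^ (q - 1 + 1) - (2*s) ^ (q - 1 + 1)) / (q - 1 + 1)) := by
            rw [← hval]; exact hmono
        _ = 2 ^ |γ| * ((2 ^ q * s ^ q - 1) / (-q)) := by
            rw [show q - 1 + 1 = q by ring, Real.one_rpow, h2q]
            rw [show (1 - 2 ^ q * s ^ q) / q = (2 ^ q * s ^ q - 1) / (-q) by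
              rw [div_neg, ← neg_div]; ring_nf]
        _ ≤ 2 ^ |γ| * ((s ^ q) / (-q)) := by
            have : 2 ^ q * s ^ q - 1 ≤ s ^ q := by nlinarith
            apply mul_le_mul_of_nonneg_left _ (by positivity)
            gcongr
        _ = 2 ^ |γ| / (-q) * s ^ q := by ring
    have hfin : 2 ^ |β| / (γ + 1) * s ^ q + 2 ^ |γ| / (-q) * s ^ q
        = (2 ^ |β| / (γ + 1) + 2 ^ |γ| / (-q)) * s ^ q := by ring
    linarith [hsplit, hp1, hp2]

private lemma h_bound {β γ : ℝ} (hγ : -1 < γ) {s t : ℝ} (ht : 1 < t)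
    (hs0 : 0 ≤ s) (hs1 : s ≤ 1) :
    (∫ v in t..t+1, v ^ β * (v - s) ^ γ) ≤
      (2 ^ |β| * 2 ^ |γ| + 3 ^ |β| * 3 ^ (γ + 1) / (γ + 1) * 2 ^ |γ|) * t ^ (β + γ) := by
  have ht0 : (0:ℝ) < t := by linarith
  have hγ1 : (0:ℝ) < γ + 1 := by linarith
  have htp : (0:ℝ) ≤ t ^ (β + γ) := Real.rpow_nonneg ht0.le _
  have hterm1 : (0:ℝ) ≤ 2 ^ |β| * 2 ^ |γ| := by positivity
  have hterm2 : (0:ℝ) ≤ 3 ^ |β| * 3 ^ (γ + 1) / (γ + 1) * 2 ^ |γ| := by positivity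
  have hint : IntervalIntegrable (fun v => v ^ β * (v - s) ^ γ) volume t (t+1) :=
    intInt_cont ht0 (lt_of_le_of_lt hs1 ht) (by linarith)
  rcases le_or_gt 2 t with h2 | h2
  · -- t ≥ 2
    have hpt : ∀ v ∈ Icc t (t+1), v ^ β * (v - s) ^ γ ≤ 2 ^ |β| * t ^ β * (2 ^ |γ| * t ^ γ) := by
      intro v hv
      have hb : v ^ β ≤ 2 ^ |β| * t ^ β :=
        rpow_ub_window ht0 one_le_two (by linarith [hv.1]) (by linarith [hv.2])
      have hg : (v - s) ^ γ ≤ 2 ^ |γ| * t ^ γ :=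
        rpow_ub_window ht0 one_le_two (by linarith [hv.1]) (by linarith [hv.2])
      exact mul_le_mul hb hg (Real.rpow_nonneg (by linarith [hv.1]) _) (by positivity)
    calc (∫ v in t..t+1, v ^ β * (v - s) ^ γ)
        ≤ ∫ _ in t..t+1, 2 ^ |β| * t ^ β * (2 ^ |γ| * t ^ γ) :=
          intervalIntegral.integral_mono_on (by linarith) hint intervalIntegrable_const hpt
      _ = 2 ^ |β| * t ^ β * (2 ^ |γ| * t ^ γ) := by
          rw [intervalIntegral.integral_const]; simp
      _ = 2 ^ |β| * 2 ^ |γ| * (t ^ β * t ^ γ) := by ring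
      _ = 2 ^ |β| * 2 ^ |γ| * t ^ (β + γ) := by rw [← Real.rpow_add ht0]
      _ ≤ (2 ^ |β| * 2 ^ |γ| + 3 ^ |β| * 3 ^ (γ + 1) / (γ + 1) * 2 ^ |γ|) * t ^ (β + γ) := by
          apply mul_le_mul_of_nonneg_right (le_add_of_nonneg_right hterm2) htp
  · -- 1 < t < 2
    have hpt : ∀ v ∈ Icc t (t+1), v ^ β * (v - s) ^ γ ≤ 3 ^ |β| * t ^ β * (v - s) ^ γ := by
      intro v hv
      have hb : v ^ β ≤ 3 ^ |β| * t ^ β :=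
        rpow_ub_window ht0 (by norm_num) (by linarith [hv.1]) (by linarith [hv.2])
      exact mul_le_mul_of_nonneg_right hb (Real.rpow_nonneg (by linarith [hv.1]) _)
    have hstep2 : (∫ v in t..t+1, (v - s) ^ γ) ≤ 3 ^ (γ + 1) / (γ + 1) := by
      have hmono : (∫ v in t..t+1, (v - s) ^ γ) ≤ ∫ v in s..t+1, (v - s) ^ γ := by
        apply intervalIntegral.integral_mono_interval (le_trans hs1 ht.le) (by linarith) le_rfl
        · filter_upwards [ae_restrict_mem measurableSet_Ioc] with v hv
          exact Real.rpow_nonneg (by linarith [hv.1]) _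
        · exact intInt_shift hγ
      rw [int_shift_val hγ] at hmono
      have : (t + 1 - s) ^ (γ + 1) ≤ 3 ^ (γ + 1) :=
        Real.rpow_le_rpow (by linarith) (by linarith) hγ1.le
      calc (∫ v in t..t+1, (v - s) ^ γ) ≤ (t + 1 - s) ^ (γ + 1) / (γ + 1) := hmono
        _ ≤ 3 ^ (γ + 1) / (γ + 1) := by gcongr
    have htneg : t ^ (-γ) ≤ 2 ^ |γ| := by
      have := rpow_ub_window (t := 1) (x := t) (c := 2) (p := -γ) one_pos one_le_two
        (by linarith) (by linarith)
      simpa [abs_neg] using this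
    have hbase : t ^ β = t ^ (β + γ) * t ^ (-γ) := by
      rw [← Real.rpow_add ht0]; ring_nf
    calc (∫ v in t..t+1, v ^ β * (v - s) ^ γ)
        ≤ ∫ v in t..t+1, 3 ^ |β| * t ^ β * (v - s) ^ γ := by
          apply intervalIntegral.integral_mono_on (by linarith) hint _ hpt
          exact (intInt_shift hγ).const_mul _
      _ = 3 ^ |β| * t ^ β * ∫ v in t..t+1, (v - s) ^ γ := by
          rw [intervalIntegral.integral_const_mul]
      _ ≤ 3 ^ |β| * t ^ β * (3 ^ (γ + 1) / (γ + 1)) := by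
          apply mul_le_mul_of_nonneg_left hstep2 (by positivity)
      _ = 3 ^ |β| * (3 ^ (γ + 1) / (γ + 1)) * (t ^ (β + γ) * t ^ (-γ)) := by
          rw [← hbase]; ring
      _ ≤ 3 ^ |β| * (3 ^ (γ + 1) / (γ + 1)) * (t ^ (β + γ) * 2 ^ |γ|) := by
          apply mul_le_mul_of_nonneg_left _ (by positivity)
          exact mul_le_mul_of_nonneg_left htneg htp
      _ = 3 ^ |β| * 3 ^ (γ + 1) / (γ + 1) * 2 ^ |γ| * t ^ (β + γ) := by ring
      _ ≤ (2 ^ |β| * 2 ^ |γ| + 3 ^ |β| * 3 ^ (γ + 1) / (γ + 1) * 2 ^ |γ|) * t ^ (β + γ) := by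
          apply mul_le_mul_of_nonneg_right (le_add_of_nonneg_left hterm1) htp

private lemma F_bound {α β γ : ℝ} (hα : -(1/2:ℝ) < α) (hγ : -1 < γ)
    (hαβγ : -(3/2:ℝ) < α + β + γ) :
    ∃ KF : ℝ, 0 ≤ KF ∧ ∀ t : ℝ, 1 < t →
      (∫ s in (0:ℝ)..1, s ^ (2*α) * (∫ u in s..1, u ^ β * (u - s) ^ γ) *
        (∫ v in t..(t+1), v ^ β * (v - s) ^ γ)) ≤ KF * t ^ (β + γ) := by
  have hγ1 : (0:ℝ) < γ + 1 := by linarith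
  set q := min (β + γ + 1) (-((2*α+1)/4)) with hqdef
  have hq : q < 0 := lt_of_le_of_lt (min_le_right _ _) (by linarith)
  have hq2 : q ≤ β + γ + 1 := min_le_left _ _
  have h2aq : -1 < 2*α + q := by
    rcases min_cases (β + γ + 1) (-((2*α+1)/4)) with ⟨h, _⟩ | ⟨h, _⟩ <;>
      rw [hqdef, h] <;> linarith
  set Kg := 2 ^ |β| / (γ + 1) + 2 ^ |γ| / (-q) with hKgdef
  set Kh := 2 ^ |β| * 2 ^ |γ| + 3 ^ |β| * 3 ^ (γ + 1) / (γ + 1) * 2 ^ |γ| with hKhdef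
  have hKg0 : 0 ≤ Kg := by
    apply add_nonneg
    · exact div_nonneg (Real.rpow_nonneg (by norm_num) _) hγ1.le
    · exact div_nonneg (Real.rpow_nonneg (by norm_num) _) (by linarith)
  have hKh0 : 0 ≤ Kh := by
    apply add_nonneg
    · positivity
    · positivity
  have hKF0 : 0 ≤ Kg * Kh / (2*α + q + 1) :=
    div_nonneg (mul_nonneg hKg0 hKh0) (by linarith)
  refine ⟨Kg * Kh / (2*α + q + 1), hKF0, ?_⟩
  intro t ht
  have ht0 : (0:ℝ) < t := by linarith
  have htp : (0:ℝ) ≤ t ^ (β + γ) := Real.rpow_nonneg ht0.le _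
  by_cases hFint : IntervalIntegrable
      (fun s => s ^ (2*α) * (∫ u in s..1, u ^ β * (u - s) ^ γ) *
        (∫ v in t..(t+1), v ^ β * (v - s) ^ γ)) volume 0 1
  swap
  · rw [intervalIntegral.integral_undef hFint]
    exact mul_nonneg hKF0 htp
  · have hmaj : IntegrableOn (fun s : ℝ => Kg * Kh * t ^ (β + γ) * s ^ (2*α + q))
        (Ioc (0:ℝ) 1) volume := by
      have := (intervalIntegral.intervalIntegrable_rpow' (a:=0) (b:=1) h2aq).const_mul
        (Kg * Kh * t ^ (β + γ))
      exact (intervalIntegrable_iff_integrableOn_Ioc_of_le zero_le_one).1 this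
    have hIoc := (intervalIntegrable_iff_integrableOn_Ioc_of_le zero_le_one).1 hFint
    have hmono : (∫ s in (0:ℝ)..1, s ^ (2*α) * (∫ u in s..1, u ^ β * (u - s) ^ γ) *
          (∫ v in t..(t+1), v ^ β * (v - s) ^ γ)) ≤
        ∫ s in (0:ℝ)..1, Kg * Kh * t ^ (β + γ) * s ^ (2*α + q) := by
      rw [intervalIntegral.integral_of_le zero_le_one,
        intervalIntegral.integral_of_le zero_le_one]
      apply setIntegral_mono_on hIoc hmaj measurableSet_Ioc
      intro s hs
      have hs0 : 0 < s := hs.1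
      have hg := g_bound hγ hq hq2 hs0 hs.2
      have hh := h_bound (β := β) (s := s) (t := t) hγ ht hs0.le hs.2
      have hgnn : 0 ≤ (∫ u in s..1, u ^ β * (u - s) ^ γ) := by
        apply intervalIntegral.integral_nonneg hs.2
        intro u hu
        exact mul_nonneg (Real.rpow_nonneg (by linarith [hu.1]) _)
          (Real.rpow_nonneg (by linarith [hu.1]) _)
      have hhnn : 0 ≤ (∫ v in t..t+1, v ^ β * (v - s) ^ γ) := by
        apply intervalIntegral.integral_nonneg (by linarith)
        intro v hv
        exact mul_nonneg (Real.rpow_nonneg (by linarith [hv.1]) _)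
          (Real.rpow_nonneg (by linarith [hv.1, hs.2]) _)
      have hs2a : (0:ℝ) ≤ s ^ (2*α) := Real.rpow_nonneg hs0.le _
      have hsq : (0:ℝ) ≤ s ^ q := Real.rpow_nonneg hs0.le _
      calc s ^ (2*α) * (∫ u in s..1, u ^ β * (u - s) ^ γ) *
            (∫ v in t..(t+1), v ^ β * (v - s) ^ γ)
          ≤ s ^ (2*α) * (Kg * s ^ q) * (Kh * t ^ (β + γ)) := by
            apply mul_le_mul (mul_le_mul_of_nonneg_left hg hs2a) hh hhnn
            exact mul_nonneg hs2a (mul_nonneg hKg0 hsq)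
        _ = Kg * Kh * t ^ (β + γ) * (s ^ (2*α) * s ^ q) := by ring
        _ = Kg * Kh * t ^ (β + γ) * s ^ (2*α + q) := by rw [← Real.rpow_add hs0]
    have hval : (∫ s in (0:ℝ)..1, Kg * Kh * t ^ (β + γ) * s ^ (2*α + q))
        = Kg * Kh * t ^ (β + γ) * (1 / (2*α + q + 1)) := by
      rw [intervalIntegral.integral_const_mul, integral_rpow (Or.inl h2aq),
        Real.one_rpow, Real.zero_rpow (by linarith : 2*α + q + 1 ≠ 0)]
      norm_num
    calc (∫ s in (0:ℝ)..1, s ^ (2*α) * (∫ u in s..1, u ^ β * (u - s) ^ γ) *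
          (∫ v in t..(t+1), v ^ β * (v - s) ^ γ))
        ≤ ∫ s in (0:ℝ)..1, Kg * Kh * t ^ (β + γ) * s ^ (2*α + q) := hmono
      _ = Kg * Kh * t ^ (β + γ) * (1 / (2*α + q + 1)) := hval
      _ = Kg * Kh / (2*α + q + 1) * t ^ (β + γ) := by ring

private lemma V_lower_core {α β γ t w1 w2 cg eg : ℝ} (ht : 1 < t)
    (hw1 : 0 < w1) (hw12 : w1 ≤ w2) (hw2t : w2 < t)
    (hs_lb : t ≤ 2 * w1) (hcg : 0 < cg)
    (hgap : ∀ s ∈ Icc w1 w2, ∀ u ∈ Icc t (t+1), cg * t ^ eg ≤ (u - s) ^ γ)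
    (hint : IntervalIntegrable
      (fun s => s ^ (2*α) * (∫ u in (max s t)..(t+1), u ^ β * (u - s) ^ γ) ^ 2)
      volume 0 (t+1)) :
    (w2 - w1) * ((2 ^ |2*α|)⁻¹ * t ^ (2*α) * ((2 ^ |β|)⁻¹ * t ^ β * (cg * t ^ eg)) ^ 2)
      ≤ ∫ s in (0:ℝ)..(t+1), s ^ (2*α) * (∫ u in (max s t)..(t+1), u ^ β * (u - s) ^ γ) ^ 2 := by
  have ht0 : (0:ℝ) < t := by linarith
  set D : ℝ := (2 ^ |2*α|)⁻¹ * t ^ (2*α) * ((2 ^ |β|)⁻¹ * t ^ β * (cg * t ^ eg)) ^ 2 with hD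
  have hBnn : (0:ℝ) ≤ (2 ^ |β|)⁻¹ * t ^ β * (cg * t ^ eg) := by
    apply mul_nonneg (mul_nonneg (by positivity) (Real.rpow_nonneg ht0.le _))
    exact mul_nonneg hcg.le (Real.rpow_nonneg ht0.le _)
  have hs_all : ∀ s ∈ Icc w1 w2,
      D ≤ s ^ (2*α) * (∫ u in (max s t)..(t+1), u ^ β * (u - s) ^ γ) ^ 2 := by
    intro s hs
    have hst : s < t := lt_of_le_of_lt hs.2 hw2t
    have hmax : max s t = t := max_eq_right hst.le
    rw [hmax]
    have hinner : (2 ^ |β|)⁻¹ * t ^ β * (cg * t ^ eg) ≤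
        ∫ u in t..(t+1), u ^ β * (u - s) ^ γ := by
      have hptw : ∀ u ∈ Icc t (t+1),
          (2 ^ |β|)⁻¹ * t ^ β * (cg * t ^ eg) ≤ u ^ β * (u - s) ^ γ := by
        intro u hu
        have hu0 : 0 < u := lt_of_lt_of_le ht0 hu.1
        have hb : (2 ^ |β|)⁻¹ * t ^ β ≤ u ^ β :=
          rpow_lb_window ht0 one_le_two (by linarith [hu.1]) (by linarith [hu.2])
        exact mul_le_mul hb (hgap s hs u hu)
          (mul_nonneg hcg.le (Real.rpow_nonneg ht0.le _)) (Real.rpow_nonneg hu0.le _)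
      calc (2 ^ |β|)⁻¹ * t ^ β * (cg * t ^ eg)
          = ∫ _ in t..(t+1), (2 ^ |β|)⁻¹ * t ^ β * (cg * t ^ eg) := by
            rw [intervalIntegral.integral_const]; simp
        _ ≤ ∫ u in t..(t+1), u ^ β * (u - s) ^ γ :=
            intervalIntegral.integral_mono_on (by linarith) intervalIntegrable_const
              (intInt_cont ht0 hst (by linarith)) hptw
    have hsa : (2 ^ |2*α|)⁻¹ * t ^ (2*α) ≤ s ^ (2*α) :=
      rpow_lb_window ht0 one_le_two (by linarith [hs.1]) (by linarith [hs.2])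
    rw [hD]
    apply mul_le_mul hsa (pow_le_pow_left₀ hBnn hinner 2) (by positivity)
      (Real.rpow_nonneg (by linarith [hs.1]) _)
  have hsub : IntervalIntegrable
      (fun s => s ^ (2*α) * (∫ u in (max s t)..(t+1), u ^ β * (u - s) ^ γ) ^ 2)
      volume w1 w2 := by
    apply hint.mono_set
    apply uIcc_subset_uIcc <;> rw [uIcc_of_le (by linarith : (0:ℝ) ≤ t+1)] <;>
      constructor <;> linarith
  have h1 : (w2 - w1) * D ≤ ∫ s in w1..w2,
      s ^ (2*α) * (∫ u in (max s t)..(t+1), u ^ β * (u - s) ^ γ) ^ 2 := by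
    calc (w2 - w1) * D = ∫ _ in w1..w2, D := by rw [intervalIntegral.integral_const]; simp
      _ ≤ _ := intervalIntegral.integral_mono_on hw12 intervalIntegrable_const hsub hs_all
  have h2 : (∫ s in w1..w2,
      s ^ (2*α) * (∫ u in (max s t)..(t+1), u ^ β * (u - s) ^ γ) ^ 2) ≤
      ∫ s in (0:ℝ)..(t+1), s ^ (2*α) * (∫ u in (max s t)..(t+1), u ^ β * (u - s) ^ γ) ^ 2 := by
    apply intervalIntegral.integral_mono_interval hw1.le hw12 (by linarith)
    · filter_upwards [ae_restrict_mem measurableSet_Ioc] with s hs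
      exact mul_nonneg (Real.rpow_nonneg (le_of_lt hs.1) _) (sq_nonneg _)
    · exact hint
  linarith

private lemma V_lower_I {α β γ t : ℝ} (ht : 1 < t)
    (hint : IntervalIntegrable
      (fun s => s ^ (2*α) * (∫ u in (max s t)..(t+1), u ^ β * (u - s) ^ γ) ^ 2)
      volume 0 (t+1)) :
    (1/4) * (2 ^ |2*α|)⁻¹ * ((2 ^ |β|)⁻¹ * (4 ^ |γ|)⁻¹) ^ 2 * t ^ (2*α + 2*β)
      ≤ ∫ s in (0:ℝ)..(t+1), s ^ (2*α) * (∫ u in (max s t)..(t+1), u ^ β * (u - s) ^ γ) ^ 2 := by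
  have ht0 : (0:ℝ) < t := by linarith
  have hgap : ∀ s ∈ Icc (t - 1/2) (t - 1/4), ∀ u ∈ Icc t (t+1),
      (4 ^ |γ|)⁻¹ * t ^ (0:ℝ) ≤ (u - s) ^ γ := by
    intro s hs u hu
    rw [Real.rpow_zero, mul_one]
    have := rpow_lb_window (t := 1) (x := u - s) (c := 4) (p := γ) one_pos (by norm_num)
      (by linarith [hs.2, hu.1]) (by linarith [hs.1, hu.2])
    simpa using this
  have hcore := V_lower_core (α := α) (β := β) ht (by linarith) (by linarith) (by linarith)
    (by linarith) (by positivity) hgap hint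
  have ht2 : t ^ (2*α + 2*β) = t ^ (2*α) * (t ^ β * t ^ β) := by
    rw [show 2*α + 2*β = 2*α + (β + β) by ring, Real.rpow_add ht0, Real.rpow_add ht0]
  calc (1/4) * (2 ^ |2*α|)⁻¹ * ((2 ^ |β|)⁻¹ * (4 ^ |γ|)⁻¹) ^ 2 * t ^ (2*α + 2*β)
      = (t - 1/4 - (t - 1/2)) *
        ((2 ^ |2*α|)⁻¹ * t ^ (2*α) * ((2 ^ |β|)⁻¹ * t ^ β * ((4 ^ |γ|)⁻¹ * t ^ (0:ℝ))) ^ 2) := by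
        rw [Real.rpow_zero, ht2]; ring
    _ ≤ _ := hcore

private lemma V_lower_II {α β γ t : ℝ} (ht : 1 < t)
    (hint : IntervalIntegrable
      (fun s => s ^ (2*α) * (∫ u in (max s t)..(t+1), u ^ β * (u - s) ^ γ) ^ 2)
      volume 0 (t+1)) :
    (1/4) * (2 ^ |2*α|)⁻¹ * ((2 ^ |β|)⁻¹ * (4 ^ |γ|)⁻¹) ^ 2 * t ^ (2*α + 2*β + 2*γ + 1)
      ≤ ∫ s in (0:ℝ)..(t+1), s ^ (2*α) * (∫ u in (max s t)..(t+1), u ^ β * (u - s) ^ γ) ^ 2 := by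
  have ht0 : (0:ℝ) < t := by linarith
  have hgap : ∀ s ∈ Icc (t/2) (3*t/4), ∀ u ∈ Icc t (t+1),
      (4 ^ |γ|)⁻¹ * t ^ γ ≤ (u - s) ^ γ := by
    intro s hs u hu
    exact rpow_lb_window ht0 (by norm_num) (by linarith [hs.2, hu.1]) (by linarith [hs.1, hu.2])
  have hcore := V_lower_core (α := α) (β := β) ht (by linarith) (by linarith) (by linarith)
    (by linarith) (by positivity) hgap hint
  have ht2 : t ^ (2*α + 2*β + 2*γ + 1) = t ^ (2*α) * (t ^ β * t ^ β) * (t ^ γ * t ^ γ) * t := by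
    rw [show 2*α + 2*β + 2*γ + 1 = 2*α + (β + β) + (γ + γ) + (1:ℝ) by ring,
      Real.rpow_add ht0, Real.rpow_add ht0, Real.rpow_add ht0, Real.rpow_add ht0, Real.rpow_add ht0,
      Real.rpow_one]
  calc (1/4) * (2 ^ |2*α|)⁻¹ * ((2 ^ |β|)⁻¹ * (4 ^ |γ|)⁻¹) ^ 2 * t ^ (2*α + 2*β + 2*γ + 1)
      = (3*t/4 - t/2) *
        ((2 ^ |2*α|)⁻¹ * t ^ (2*α) * ((2 ^ |β|)⁻¹ * t ^ β * ((4 ^ |γ|)⁻¹ * t ^ γ)) ^ 2) := by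
        rw [ht2]; ring
    _ ≤ _ := hcore
/-- Theorem 3.5 (consequence): if `min(γ, -1/2) < α - 1`, then
`∑_{n≥1} corr(X₁, X_{n+1} - X_n)` converges and
`∫₁^∞ corr(X₁, X_{t+1} - X_t) dt` is finite. -/
theorem stmt_10 (α β γ : ℝ) (hα : -(1/2 : ℝ) < α) (hγ : -1 < γ)
    (hαβγ : -(3/2 : ℝ) < α + β + γ) (hcond : min γ (-(1/2 : ℝ)) < α - 1)
    (F V r : ℝ → ℝ) (C : ℝ)
    (hF : ∀ t : ℝ, F t = ∫ s in (0:ℝ)..1, s ^ (2*α) *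
      (∫ u in s..1, u ^ β * (u - s) ^ γ) *
      (∫ v in t..(t+1), v ^ β * (v - s) ^ γ))
    (hV : ∀ t : ℝ, V t = ∫ s in (0:ℝ)..(t+1), s ^ (2*α) *
      (∫ u in (max s t)..(t+1), u ^ β * (u - s) ^ γ) ^ 2)
    (hC : C = ∫ s in (0:ℝ)..1, s ^ (2*α) *
      (∫ u in s..1, u ^ β * (u - s) ^ γ) ^ 2)
    (hr : ∀ t : ℝ, r t = F t / (Real.sqrt C * Real.sqrt (V t))) :
    (Summable fun n : ℕ => r (n + 1)) ∧
    (∫⁻ t in Set.Ici (1:ℝ), ENNReal.ofReal (r t)) < ⊤ := by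
  set e : ℝ := min γ (-(1/2:ℝ)) - α with hedef
  have he : e < -1 := by rw [hedef]; linarith
  -- nonnegativity of r on [1, ∞)
  have hrnn : ∀ t : ℝ, 1 ≤ t → 0 ≤ r t := by
    intro t ht
    rw [hr t]
    apply div_nonneg _ (mul_nonneg (Real.sqrt_nonneg _) (Real.sqrt_nonneg _))
    rw [hF t]
    apply intervalIntegral.integral_nonneg zero_le_one
    intro s hs
    apply mul_nonneg (mul_nonneg (Real.rpow_nonneg hs.1 _) _) _
    · apply intervalIntegral.integral_nonneg hs.2
      intro u hu
      exact mul_nonneg (Real.rpow_nonneg (le_trans hs.1 hu.1) _)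
        (Real.rpow_nonneg (by linarith [hu.1]) _)
    · apply intervalIntegral.integral_nonneg (by linarith : t ≤ t+1)
      intro v hv
      exact mul_nonneg (Real.rpow_nonneg (by linarith [hv.1]) _)
        (Real.rpow_nonneg (by linarith [hv.1, hs.2]) _)
  -- the key quantitative bound
  have main : ∃ K : ℝ, 0 ≤ K ∧ ∀ t : ℝ, 1 < t → r t ≤ K * t ^ e := by
    by_cases hC0 : Real.sqrt C = 0
    · refine ⟨0, le_rfl, ?_⟩
      intro t ht
      rw [hr t, hC0, zero_mul, div_zero, zero_mul]
    · have hCpos : 0 < Real.sqrt C := lt_of_le_of_ne (Real.sqrt_nonneg C) (Ne.symm hC0)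
      obtain ⟨KF, hKF0, hKF⟩ := F_bound hα hγ hαβγ
      set KV : ℝ := (1/4) * (2 ^ |2*α|)⁻¹ * ((2 ^ |β|)⁻¹ * (4 ^ |γ|)⁻¹) ^ 2 with hKVdef
      have hKV0 : 0 < KV := by rw [hKVdef]; positivity
      set b : ℝ := if γ ≤ -(1/2:ℝ) then 2*α + 2*β else 2*α + 2*β + 2*γ + 1 with hbdef
      have hbe : β + γ - b / 2 = e := by
        rw [hbdef, hedef]
        rcases le_or_gt γ (-(1/2:ℝ)) with h | h
        · rw [if_pos h, min_eq_left h]; ring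
        · rw [if_neg (not_le.2 h), min_eq_right h.le]; ring
      have hK0 : 0 ≤ KF / (Real.sqrt C * Real.sqrt KV) :=
        div_nonneg hKF0 (mul_nonneg (Real.sqrt_nonneg _) (Real.sqrt_nonneg _))
      refine ⟨KF / (Real.sqrt C * Real.sqrt KV), hK0, ?_⟩
      intro t ht
      have ht0 : (0:ℝ) < t := by linarith
      by_cases hV0 : Real.sqrt (V t) = 0
      · rw [hr t, hV0, mul_zero, div_zero]
        exact mul_nonneg hK0 (Real.rpow_nonneg ht0.le _)
      · have hVint : IntervalIntegrable (fun s => s ^ (2*α) *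
            (∫ u in (max s t)..(t+1), u ^ β * (u - s) ^ γ) ^ 2) volume 0 (t+1) := by
          by_contra hcon
          exact hV0 (by rw [hV t, intervalIntegral.integral_undef hcon, Real.sqrt_zero])
        have hVlow : KV * t ^ b ≤ V t := by
          rw [hV t, hbdef]
          rcases le_or_gt γ (-(1/2:ℝ)) with h | h
          · rw [if_pos h]; exact V_lower_I ht hVint
          · rw [if_neg (not_le.2 h)]; exact V_lower_II ht hVint
        have hsV : Real.sqrt KV * t ^ (b/2) ≤ Real.sqrt (V t) := by
          have h1 : Real.sqrt (KV * t ^ b) ≤ Real.sqrt (V t) := Real.sqrt_le_sqrt hVlow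
          have h2 : Real.sqrt (KV * t ^ b) = Real.sqrt KV * Real.sqrt (t ^ b) :=
            Real.sqrt_mul hKV0.le _
          have h3 : Real.sqrt (t ^ b) = t ^ (b/2) := by
            rw [Real.sqrt_eq_rpow, ← Real.rpow_mul ht0.le,
              show b * (1/2) = b/2 by ring]
          rw [h2, h3] at h1
          exact h1
        have hden2 : 0 < Real.sqrt C * (Real.sqrt KV * t ^ (b/2)) :=
          mul_pos hCpos (mul_pos (Real.sqrt_pos.2 hKV0) (Real.rpow_pos_of_pos ht0 _))
        rw [hr t]
        calc F t / (Real.sqrt C * Real.sqrt (V t))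
            ≤ (KF * t ^ (β+γ)) / (Real.sqrt C * (Real.sqrt KV * t ^ (b/2))) := by
              apply div_le_div₀ (mul_nonneg hKF0 (Real.rpow_nonneg ht0.le _)) _ hden2
                (mul_le_mul_of_nonneg_left hsV (Real.sqrt_nonneg C))
              rw [hF t]; exact hKF t ht
          _ = KF / (Real.sqrt C * Real.sqrt KV) * (t ^ (β+γ) / t ^ (b/2)) := by ring
          _ = KF / (Real.sqrt C * Real.sqrt KV) * t ^ e := by
              rw [← Real.rpow_sub ht0, hbe]
  obtain ⟨K, hK0, hK⟩ := main
  constructor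
  · -- summability
    rw [← summable_nat_add_iff 1]
    have hsum : Summable (fun n : ℕ => K * (((n:ℝ) + 1) + 1) ^ e) := by
      have hs : Summable (fun n : ℕ => ((n + 2 : ℕ) : ℝ) ^ e) :=
        (summable_nat_add_iff 2).2 (Real.summable_nat_rpow.2 he)
      have := hs.mul_left K
      convert this using 2
      · rfl
      push_cast
      ring_nf
    refine Summable.of_nonneg_of_le (fun n => hrnn _ (by push_cast; linarith))
      (fun n => ?_) hsum
    have h2 : (1:ℝ) < ((n:ℝ) + 1) + 1 := by
      have h0 : (0:ℝ) ≤ (n:ℝ) := Nat.cast_nonneg n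
      linarith
    have := hK (((n:ℝ) + 1) + 1) h2
    convert this using 3 <;> push_cast <;> ring
  · -- finiteness of the integral
    have hIci : (∫⁻ t in Set.Ici (1:ℝ), ENNReal.ofReal (r t)) =
        ∫⁻ t in Set.Ioi (1:ℝ), ENNReal.ofReal (r t) :=
      (setLIntegral_congr (Ioi_ae_eq_Ici)).symm
    rw [hIci]
    have hle : (∫⁻ t in Set.Ioi (1:ℝ), ENNReal.ofReal (r t)) ≤
        ∫⁻ t in Set.Ioi (1:ℝ), ENNReal.ofReal (K * t ^ e) :=
      setLIntegral_mono' measurableSet_Ioi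
        (fun t ht => ENNReal.ofReal_le_ofReal (hK t ht))
    have hint : Integrable (fun t : ℝ => K * t ^ e)
        (volume.restrict (Set.Ioi (1:ℝ))) :=
      (integrableOn_Ioi_rpow_of_lt he one_pos).const_mul K
    exact lt_of_le_of_lt hle hint.lintegral_lt_top
end

section
/- Let α, β, γ be real numbers with α > -1/2, α + β + γ > -3/2, γ > −1/2, and let θ > 0. Define G(T) = e^{−2θT} ∫₀ᵀ s^{2α} (∫ₛᵀ e^{θt} t^β (t−s)^γ dt)² ds for T > 0. Then lim_{T→+∞} G(T) / T^{2α+2β+2γ+1} = ς² / θ², where ς² = Γ(2α+1)Γ(2γ+1) / Γ(2α+2γ+2). -/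
set_option maxHeartbeats 1000000

open MeasureTheory Filter intervalIntegral Set


lemma rpow_le_add {c d a : ℝ} (p : ℝ) (hc : 0 < c) (h1 : c ≤ a) (h2 : a ≤ d) :
    a ^ p ≤ c ^ p + d ^ p := by
  rcases le_or_gt 0 p with hp | hp
  · have h := Real.rpow_le_rpow (hc.le.trans h1) h2 hp
    have : (0:ℝ) ≤ c ^ p := Real.rpow_nonneg hc.le p
    linarith
  · have h := Real.rpow_le_rpow_of_nonpos hc h1 hp.le
    have : (0:ℝ) ≤ d ^ p := Real.rpow_nonneg (hc.le.trans (h1.trans h2)) p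
    linarith

lemma xexp_le {c x : ℝ} (hc : 0 < c) (hx : 0 ≤ x) : x * Real.exp (-(c * x)) ≤ 1 / c := by
  have h1 : c * x ≤ Real.exp (c * x) := by
    have := Real.add_one_le_exp (c * x); linarith
  calc x * Real.exp (-(c * x)) = (c * x) * Real.exp (-(c * x)) / c := by
        field_simp
    _ ≤ Real.exp (c * x) * Real.exp (-(c * x)) / c := by
        gcongr
    _ = 1 / c := by rw [← Real.exp_add]; simp

lemma beta_integrable {p q : ℝ} (hp : -1 < p) (hq : -1 < q) :
    IntervalIntegrable (fun u : ℝ => u ^ p * (1 - u) ^ q) volume 0 1 := by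
  have h1 : IntervalIntegrable (fun u : ℝ => u ^ p * (1 - u) ^ q) volume 0 (1/2) := by
    apply (intervalIntegrable_rpow' hp).mul_continuousOn
    apply ContinuousOn.rpow_const (by fun_prop)
    intro x hx
    rw [uIcc_of_le (by norm_num)] at hx
    left; have := hx.2; intro h; nlinarith [hx.1]
  have h2 : IntervalIntegrable (fun u : ℝ => u ^ p * (1 - u) ^ q) volume (1/2) 1 := by
    have base : IntervalIntegrable (fun u : ℝ => (1 - u) ^ q) volume 1 (1/2) := by
      have h := (intervalIntegrable_rpow' (a := (0:ℝ)) (b := 1/2) hq).comp_sub_left 1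
      norm_num at h; exact h
    apply base.symm.continuousOn_mul
    apply ContinuousOn.rpow_const (by fun_prop)
    intro x hx
    rw [uIcc_of_le (by norm_num)] at hx
    left; intro h; rw [h] at hx; norm_num at hx
  exact h1.trans h2

lemma real_beta {a b : ℝ} (ha : 0 < a) (hb : 0 < b) :
    ∫ u in (0:ℝ)..1, u ^ (a - 1) * (1 - u) ^ (b - 1) =
      Real.Gamma a * Real.Gamma b / Real.Gamma (a + b) := by
  have key := Complex.Gamma_mul_Gamma_eq_betaIntegral (s := (a:ℂ)) (t := (b:ℂ))
    (by simpa using ha) (by simpa using hb)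
  have hbeta : Complex.betaIntegral (a:ℂ) (b:ℂ)
      = ((∫ u in (0:ℝ)..1, u ^ (a - 1) * (1 - u) ^ (b - 1) : ℝ) : ℂ) := by
    rw [Complex.betaIntegral, ← intervalIntegral.integral_ofReal]
    apply intervalIntegral.integral_congr
    intro x hx
    rw [uIcc_of_le (by norm_num)] at hx
    have hx2 : (0:ℝ) ≤ 1 - x := by linarith [hx.2]
    show (x:ℂ) ^ ((a:ℂ) - 1) * (1 - (x:ℂ)) ^ ((b:ℂ) - 1)
        = ((x ^ (a - 1) * (1 - x) ^ (b - 1) : ℝ) : ℂ)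
    push_cast [Complex.ofReal_cpow hx.1, Complex.ofReal_cpow hx2]
    ring
  rw [hbeta, ← Complex.ofReal_add, Complex.Gamma_ofReal, Complex.Gamma_ofReal,
    Complex.Gamma_ofReal, ← Complex.ofReal_mul, ← Complex.ofReal_mul] at key
  have h2 := Complex.ofReal_injective key
  have hne : Real.Gamma (a + b) ≠ 0 := (Real.Gamma_pos_of_pos (by linarith)).ne'
  field_simp
  linarith [h2]


lemma rpow_sub_integral {L a b γ : ℝ} (hγ : -1 < γ) :
    ∫ x in a..b, (L - x) ^ γ = ((L - a) ^ (γ + 1) - (L - b) ^ (γ + 1)) / (γ + 1) := by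
  have h := intervalIntegral.integral_comp_sub_left (fun y : ℝ => y ^ γ) L
    (a := a) (b := b)
  rw [h, integral_rpow (Or.inl hγ)]

lemma rpow_sub_intble {L a b γ : ℝ} (hγ : -1 < γ) :
    IntervalIntegrable (fun x => (L - x) ^ γ) volume a b := by
  have h := (intervalIntegrable_rpow' (a := L - a) (b := L - b) hγ).comp_sub_left L
  simpa [sub_sub_cancel] using h

lemma exp_neg_intble {θ a b : ℝ} :
    IntervalIntegrable (fun x => Real.exp (-(θ * x))) volume a b :=
  (Continuous.intervalIntegrable (by fun_prop) a b)

lemma integral_exp_neg_mul {θ : ℝ} (hθ : 0 < θ) (m : ℝ) :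
    ∫ x in (0:ℝ)..m, Real.exp (-(θ * x)) = (1 - Real.exp (-(θ * m))) / θ := by
  have hd : ∀ x ∈ uIcc (0:ℝ) m, HasDerivAt (fun x => -Real.exp (-(θ * x)) / θ)
      (Real.exp (-(θ * x))) x := by
    intro x _
    have h1 : HasDerivAt (fun x : ℝ => -(θ * x)) (-θ) x := by
      exact (((hasDerivAt_id x).const_mul θ).neg).congr_deriv (by ring)
    have h2 := (h1.exp).neg.div_const θ
    exact h2.congr_deriv (by rw [div_eq_iff hθ.ne']; ring)
  rw [intervalIntegral.integral_eq_sub_of_hasDerivAt hd exp_neg_intble]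
  simp [mul_zero]
  ring

lemma int_exp_Ioi {θ : ℝ} (hθ : 0 < θ) :
    ∫ x in Ioi (0:ℝ), Real.exp (-(θ * x)) = 1 / θ := by
  have h := MeasureTheory.integral_comp_mul_left_Ioi (fun y : ℝ => Real.exp (-y)) 0 hθ
  simp only [mul_zero] at h
  rw [show (fun x => Real.exp (-(θ * x))) = (fun x => Real.exp (-(θ * x))) from rfl]
  calc ∫ x in Ioi (0:ℝ), Real.exp (-(θ * x)) = θ⁻¹ • ∫ x in Ioi (0:ℝ), Real.exp (-x) := h
    _ = 1 / θ := by rw [integral_exp_neg_Ioi_zero]; simp [one_div]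

lemma inner_intble {θ β γ T L a b : ℝ} (hγ : -1 < γ) (hab : a ≤ b) (hbL : b ≤ L)
    (hLT : L < T) :
    IntervalIntegrable (fun x => Real.exp (-(θ * x)) * (T - x) ^ β * (L - x) ^ γ)
      volume a b := by
  apply (rpow_sub_intble hγ).continuousOn_mul
  apply ContinuousOn.mul (by fun_prop)
  apply ContinuousOn.rpow_const (by fun_prop)
  intro x hx
  rw [uIcc_of_le hab] at hx
  left
  have : x ≤ b := hx.2
  intro h; nlinarith

lemma integral_exp_neg_le {θ : ℝ} (hθ : 0 < θ) (m : ℝ) :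
    ∫ x in (0:ℝ)..m, Real.exp (-(θ * x)) ≤ 1 / θ := by
  rw [integral_exp_neg_mul hθ]
  have := Real.exp_pos (-(θ * m))
  gcongr
  linarith

lemma abs_int_le {a b : ℝ} {f g : ℝ → ℝ} (hab : a ≤ b)
    (h : ∀ x ∈ Icc a b, |f x| ≤ g x) (hg : IntervalIntegrable g volume a b)
    (hg0 : ∀ x ∈ Icc a b, 0 ≤ g x) :
    |∫ x in a..b, f x| ≤ ∫ x in a..b, g x := by
  have h1 : ∀ᵐ x ∂(volume.restrict (Set.uIoc a b)), ‖f x‖ ≤ g x := by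
    refine Filter.eventually_of_mem (self_mem_ae_restrict measurableSet_uIoc) ?_
    intro x hx
    rw [Set.uIoc_of_le hab] at hx
    exact h x ⟨hx.1.le, hx.2⟩
  have h2 := intervalIntegral.norm_integral_le_abs_of_norm_le h1 hg
  rw [Real.norm_eq_abs] at h2
  exact h2.trans (le_of_eq (abs_of_nonneg (intervalIntegral.integral_nonneg hab hg0)))

lemma mul3_le {A B C B' C' : ℝ} (hA : 0 ≤ A) (hB : 0 ≤ B) (hC : 0 ≤ C)
    (h1 : B ≤ B') (h2 : C ≤ C') : A * B * C ≤ A * B' * C' :=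
  mul_le_mul (mul_le_mul_of_nonneg_left h1 hA) h2 hC
    (mul_nonneg hA (hB.trans h1))

lemma main_part_bound {β γ θ T u : ℝ} (hγ : -1 < γ) (hθ : 0 < θ) (hT : 0 < T)
    (hu0 : 0 < u) (hu1 : u < 1) :
    T ^ (-(β+γ)) * |∫ x in (0:ℝ)..(T*(1-u)/2),
        Real.exp (-(θ * x)) * (T - x) ^ β * (T*(1-u) - x) ^ γ|
      ≤ ((1/2:ℝ)^β + 1) * (((1/2:ℝ)^γ + 1) / θ) * (1-u)^γ := by
  have h1u : (0:ℝ) < 1 - u := by linarith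
  have hL : 0 < T*(1-u) := mul_pos hT h1u
  have hLT : T*(1-u) < T := by nlinarith
  set L := T*(1-u) with hLdef
  have hstep : |∫ x in (0:ℝ)..(L/2),
      Real.exp (-(θ * x)) * (T - x) ^ β * (L - x) ^ γ|
      ≤ ∫ x in (0:ℝ)..(L/2),
        ((T/2)^β + T^β) * ((((L/2))^γ + L^γ) * Real.exp (-(θ * x))) := by
    apply abs_int_le (by linarith)
    · intro x hx
      obtain ⟨hx0, hx2⟩ := hx
      have hTx : T/2 ≤ T - x := by linarith
      have hLx : L/2 ≤ L - x := by linarith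
      have hf0 : 0 ≤ Real.exp (-(θ * x)) * (T - x) ^ β * (L - x) ^ γ :=
        mul_nonneg (mul_nonneg (Real.exp_nonneg _) (Real.rpow_nonneg (by linarith) _))
          (Real.rpow_nonneg (by linarith) _)
      rw [abs_of_nonneg hf0]
      have b1 : (T - x) ^ β ≤ (T/2)^β + T^β :=
        rpow_le_add β (by linarith) hTx (by linarith)
      have b2 : (L - x) ^ γ ≤ (L/2)^γ + L^γ :=
        rpow_le_add γ (by linarith) hLx (by linarith)
      have n1 : (0:ℝ) ≤ Real.exp (-(θ * x)) := Real.exp_nonneg _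
      have n2 : (0:ℝ) ≤ (L - x) ^ γ := Real.rpow_nonneg (by linarith) _
      have n3 : (0:ℝ) ≤ (T - x) ^ β := Real.rpow_nonneg (by linarith) _
      nlinarith [mul_le_mul_of_nonneg_left b1 n1,
        mul_le_mul_of_nonneg_right b2 (mul_nonneg n1 (n3.trans b1))]
    · exact (exp_neg_intble.const_mul _).const_mul _
    · intro x _
      have : (0:ℝ) ≤ (T/2)^β + T^β := by
        have := Real.rpow_nonneg (by linarith : (0:ℝ) ≤ T/2) β
        have := Real.rpow_nonneg hT.le β
        linarith
      have : (0:ℝ) ≤ (L/2)^γ + L^γ := by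
        have := Real.rpow_nonneg (by linarith : (0:ℝ) ≤ L/2) γ
        have := Real.rpow_nonneg hL.le γ
        linarith
      positivity
  rw [intervalIntegral.integral_const_mul, intervalIntegral.integral_const_mul] at hstep
  have A0 : (0:ℝ) ≤ (T/2)^β + T^β := by
    have := Real.rpow_nonneg (by linarith : (0:ℝ) ≤ T/2) β
    have := Real.rpow_nonneg hT.le β
    linarith
  have B0 : (0:ℝ) ≤ (L/2)^γ + L^γ := by
    have := Real.rpow_nonneg (by linarith : (0:ℝ) ≤ L/2) γ
    have := Real.rpow_nonneg hL.le γ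
    linarith
  have hstep2 : |∫ x in (0:ℝ)..(L/2),
      Real.exp (-(θ * x)) * (T - x) ^ β * (L - x) ^ γ|
      ≤ ((T/2)^β + T^β) * (((L/2)^γ + L^γ) * (1/θ)) := by
    refine hstep.trans ?_
    exact mul_le_mul_of_nonneg_left
      (mul_le_mul_of_nonneg_left (integral_exp_neg_le hθ _) B0) A0
  have hTn : (0:ℝ) ≤ T ^ (-(β+γ)) := Real.rpow_nonneg hT.le _
  refine (mul_le_mul_of_nonneg_left hstep2 hTn).trans (le_of_eq ?_)
  have eA : (T/2:ℝ)^β = (1/2:ℝ)^β * T^β := by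
    rw [show (T/2:ℝ) = (1/2) * T by ring, Real.mul_rpow (by norm_num) hT.le]
  have eB : ((L/2):ℝ)^γ = (1/2:ℝ)^γ * ((1-u)^γ * T^γ) := by
    rw [show (L/2:ℝ) = (1/2) * ((1-u) * T) by rw [hLdef]; ring,
      Real.mul_rpow (by norm_num) (by nlinarith), Real.mul_rpow h1u.le hT.le]
  have eL : (L:ℝ)^γ = (1-u)^γ * T^γ := by
    rw [show (L:ℝ) = (1-u) * T by rw [hLdef]; ring, Real.mul_rpow h1u.le hT.le]
  have hC : T^(-(β+γ)) * (T^β * T^γ) = 1 := by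
    rw [← Real.rpow_add hT, ← Real.rpow_add hT,
      show -(β+γ) + (β + γ) = 0 by ring, Real.rpow_zero]
  rw [eA, eB, eL]
  linear_combination (((1/2:ℝ)^β + 1) * (((1/2:ℝ)^γ + 1) * (1/θ)) * (1-u)^γ) * hC

lemma tail_bound_big {β γ θ T u : ℝ} (hγ : -1 < γ) (hθ : 0 < θ) (hT : 0 < T)
    (hu0 : 0 < u) (hu1 : u < 1) (hu3 : 1/3 ≤ u) :
    T ^ (-(β+γ)) * |∫ x in (T*(1-u)/2)..(T*(1-u)),
        Real.exp (-(θ * x)) * (T - x) ^ β * (T*(1-u) - x) ^ γ|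
      ≤ ((1/2:ℝ)^(γ+1)/(γ+1) * ((1/3:ℝ)^β + 2) * (2/θ)) * (1-u)^γ := by
  have h1u : (0:ℝ) < 1 - u := by linarith
  have hL : 0 < T*(1-u) := mul_pos hT h1u
  have hLT : T*(1-u) < T := by nlinarith
  have hTu : 0 < T*u := mul_pos hT hu0
  set L := T*(1-u) with hLdef
  set E := Real.exp (-(θ * (L/2))) with hEdef
  have hE0 : 0 ≤ E := Real.exp_nonneg _
  have nA : (0:ℝ) ≤ (T*u)^β + T^β := by
    have := Real.rpow_nonneg hTu.le β; have := Real.rpow_nonneg hT.le β; linarith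
  have hstep : |∫ x in (L/2)..L, Real.exp (-(θ * x)) * (T - x) ^ β * (L - x) ^ γ|
      ≤ ∫ x in (L/2)..L, (E * ((T*u)^β + T^β)) * (L - x) ^ γ := by
    apply abs_int_le (by linarith)
    · rintro x ⟨hx1, hx2⟩
      have hTx : T*u ≤ T - x := by rw [hLdef] at hx2; nlinarith
      have hTx2 : T - x ≤ T := by nlinarith
      have hLx : 0 ≤ L - x := by linarith
      have hf0 : 0 ≤ Real.exp (-(θ * x)) * (T - x) ^ β * (L - x) ^ γ :=
        mul_nonneg (mul_nonneg (Real.exp_nonneg _) (Real.rpow_nonneg (by linarith) _))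
          (Real.rpow_nonneg hLx _)
      rw [abs_of_nonneg hf0]
      have b1 : (T - x) ^ β ≤ (T*u)^β + T^β := rpow_le_add β hTu hTx hTx2
      have bE : Real.exp (-(θ * x)) ≤ E := by
        rw [hEdef]; exact Real.exp_le_exp.mpr (by nlinarith)
      have n2 : (0:ℝ) ≤ (L - x) ^ γ := Real.rpow_nonneg hLx _
      have n3 : (0:ℝ) ≤ (T - x) ^ β := Real.rpow_nonneg (by linarith) _
      exact mul_le_mul_of_nonneg_right (mul_le_mul bE b1 n3 hE0) n2
    · exact (rpow_sub_intble hγ).const_mul _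
    · rintro x ⟨hx1, hx2⟩
      exact mul_nonneg (mul_nonneg hE0 nA) (Real.rpow_nonneg (by linarith) _)
  rw [intervalIntegral.integral_const_mul, rpow_sub_integral hγ,
    show L - L/2 = L/2 by ring, sub_self,
    Real.zero_rpow (by linarith : γ + 1 ≠ 0), sub_zero] at hstep
  have hTn : (0:ℝ) ≤ T ^ (-(β+γ)) := Real.rpow_nonneg hT.le _
  refine (mul_le_mul_of_nonneg_left hstep hTn).trans ?_
  have e3 : (T*u)^β = T^β * u^β := Real.mul_rpow hT.le hu0.le
  have e4 : ((L/2):ℝ)^(γ+1) = (1/2:ℝ)^(γ+1) * (((1-u)^γ * (1-u)) * (T^γ * T)) := by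
    rw [show (L/2:ℝ) = (1/2) * ((1-u) * T) by rw [hLdef]; ring,
      Real.mul_rpow (by norm_num) (by positivity),
      Real.mul_rpow h1u.le hT.le,
      Real.rpow_add h1u, Real.rpow_add hT, Real.rpow_one, Real.rpow_one]
    try ring
  have hC : T^(-(β+γ)) * (T^β * T^γ) = 1 := by
    rw [← Real.rpow_add hT, ← Real.rpow_add hT,
      show -(β+γ) + (β + γ) = 0 by ring, Real.rpow_zero]
  have key : (1-u) * T * E ≤ 2/θ := by
    have h := xexp_le (show (0:ℝ) < θ/2 by linarith) hL.le
    rw [show θ/2 * L = θ * (L/2) by ring, one_div_div] at h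
    calc (1-u) * T * E = L * E := by rw [hLdef]; ring
      _ ≤ 2/θ := h
  have ub : u^β ≤ (1/3:ℝ)^β + 1 := by
    have h := rpow_le_add β (by norm_num) hu3 hu1.le
    rwa [Real.one_rpow] at h
  have eq1 : T^(-(β+γ)) * (E * ((T*u)^β + T^β) * ((L/2)^(γ+1)/(γ+1)))
      = ((1/2:ℝ)^(γ+1)/(γ+1) * (1-u)^γ) * (u^β + 1) * ((1-u) * T * E) := by
    rw [e3, e4]
    linear_combination (E * (u^β + 1) * (1/2:ℝ)^(γ+1) * (1-u)^γ * (1-u) * T / (γ+1)) * hC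
  rw [eq1]
  have hA0 : (0:ℝ) ≤ (1/2:ℝ)^(γ+1)/(γ+1) * (1-u)^γ :=
    mul_nonneg (div_nonneg (Real.rpow_nonneg (by norm_num) _) (by linarith))
      (Real.rpow_nonneg h1u.le _)
  have hB0 : (0:ℝ) ≤ u^β + 1 := by
    have := Real.rpow_nonneg hu0.le β; linarith
  have hC0 : (0:ℝ) ≤ (1-u) * T * E := mul_nonneg (mul_nonneg h1u.le hT.le) hE0
  exact (mul3_le (B' := (1/3:ℝ)^β + 2) (C' := 2/θ) hA0 hB0 hC0 (by linarith) key).trans_eq (by ring)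

lemma tail_bound_small {β γ θ T u ε : ℝ} (hγ : -1 < γ) (hθ : 0 < θ) (hT : 0 < T)
    (hu0 : 0 < u) (hu3 : u ≤ 1/3) (hε : 0 ≤ ε) (hp : -1 < β + γ + ε) :
    T ^ (-(β+γ)) * |∫ x in (T*(1-u)/2)..(T*(1-u)),
        Real.exp (-(θ * x)) * (T - x) ^ β * (T*(1-u) - x) ^ γ|
      ≤ ((1 + (2:ℝ)^β) / (γ+1) * (3/θ)) * u^(β+γ+1)
        + ((((1/2:ℝ)^γ + 1) * (2:ℝ)^(-ε) / (β+γ+ε+1)) * (3/θ)) * u^(-ε) := by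
  have hu1 : u < 1 := by linarith
  have h1u : (0:ℝ) < 1 - u := by linarith
  have hL : 0 < T*(1-u) := mul_pos hT h1u
  have hLT : T*(1-u) < T := by nlinarith
  have hTu : 0 < T*u := mul_pos hT hu0
  set L := T*(1-u) with hLdef
  set m := T*(1-2*u) with hmdef
  have hLm : L/2 ≤ m := by rw [hLdef, hmdef]; nlinarith
  have hmL : m ≤ L := by rw [hLdef, hmdef]; nlinarith
  have hmT : m ≤ T := by rw [hmdef]; nlinarith
  set E := Real.exp (-(θ * (L/2))) with hEdef
  have hE0 : 0 ≤ E := Real.exp_nonneg _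
  have hTE : T * E ≤ 3/θ := by
    have h := xexp_le (show (0:ℝ) < θ/3 by linarith) hT.le
    rw [one_div_div] at h
    calc T * E ≤ T * Real.exp (-(θ/3 * T)) := by
          apply mul_le_mul_of_nonneg_left _ hT.le
          rw [hEdef]
          apply Real.exp_le_exp.mpr
          rw [hLdef]; nlinarith
      _ ≤ 3/θ := h
  -- split the integral
  have hi1 : IntervalIntegrable
      (fun x => Real.exp (-(θ * x)) * (T - x) ^ β * (L - x) ^ γ) volume (L/2) m :=
    inner_intble hγ hLm hmL hLT
  have hi2 : IntervalIntegrable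
      (fun x => Real.exp (-(θ * x)) * (T - x) ^ β * (L - x) ^ γ) volume m L :=
    inner_intble hγ hmL le_rfl hLT
  have hsplit : (∫ x in (L/2)..L, Real.exp (-(θ * x)) * (T - x) ^ β * (L - x) ^ γ)
      = (∫ x in (L/2)..m, Real.exp (-(θ * x)) * (T - x) ^ β * (L - x) ^ γ)
        + ∫ x in m..L, Real.exp (-(θ * x)) * (T - x) ^ β * (L - x) ^ γ :=
    (intervalIntegral.integral_add_adjacent_intervals hi1 hi2).symm
  -- piece 2 bound
  have hP2 : |∫ x in m..L, Real.exp (-(θ * x)) * (T - x) ^ β * (L - x) ^ γ|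
      ≤ (E * ((T*u)^β + (2*(T*u))^β)) * ((T*u)^(γ+1)/(γ+1)) := by
    have hstep : |∫ x in m..L, Real.exp (-(θ * x)) * (T - x) ^ β * (L - x) ^ γ|
        ≤ ∫ x in m..L, (E * ((T*u)^β + (2*(T*u))^β)) * (L - x) ^ γ := by
      apply abs_int_le hmL
      · rintro x ⟨hx1, hx2⟩
        have hTx : T*u ≤ T - x := by rw [hLdef] at hx2; nlinarith
        have hTx2 : T - x ≤ 2*(T*u) := by rw [hmdef] at hx1; nlinarith
        have hLx : 0 ≤ L - x := by linarith
        have hf0 : 0 ≤ Real.exp (-(θ * x)) * (T - x) ^ β * (L - x) ^ γ :=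
          mul_nonneg (mul_nonneg (Real.exp_nonneg _) (Real.rpow_nonneg (by linarith) _))
            (Real.rpow_nonneg hLx _)
        rw [abs_of_nonneg hf0]
        have b1 : (T - x) ^ β ≤ (T*u)^β + (2*(T*u))^β := rpow_le_add β hTu hTx hTx2
        have bE : Real.exp (-(θ * x)) ≤ E := by
          rw [hEdef]; exact Real.exp_le_exp.mpr (by nlinarith)
        have n2 : (0:ℝ) ≤ (L - x) ^ γ := Real.rpow_nonneg hLx _
        have n3 : (0:ℝ) ≤ (T - x) ^ β := Real.rpow_nonneg (by linarith) _
        exact mul_le_mul_of_nonneg_right (mul_le_mul bE b1 n3 hE0) n2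
      · exact (rpow_sub_intble hγ).const_mul _
      · rintro x ⟨hx1, hx2⟩
        have nA : (0:ℝ) ≤ (T*u)^β + (2*(T*u))^β := by
          have := Real.rpow_nonneg hTu.le β
          have := Real.rpow_nonneg (by linarith : (0:ℝ) ≤ 2*(T*u)) β
          linarith
        exact mul_nonneg (mul_nonneg hE0 nA) (Real.rpow_nonneg (by linarith) _)
    rw [intervalIntegral.integral_const_mul, rpow_sub_integral hγ, sub_self,
      Real.zero_rpow (by linarith : γ + 1 ≠ 0), sub_zero,
      show L - m = T*u by rw [hLdef, hmdef]; ring] at hstep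
    exact hstep
  -- piece 1 bound
  have hP1 : |∫ x in (L/2)..m, Real.exp (-(θ * x)) * (T - x) ^ β * (L - x) ^ γ|
      ≤ (E * (((1/2:ℝ)^γ + 1) * (2*(T*u))^(-ε))) * (T^(β+γ+ε+1)/(β+γ+ε+1)) := by
    have hstep : |∫ x in (L/2)..m, Real.exp (-(θ * x)) * (T - x) ^ β * (L - x) ^ γ|
        ≤ ∫ x in (L/2)..m,
            (E * (((1/2:ℝ)^γ + 1) * (2*(T*u))^(-ε))) * (T - x) ^ (β+γ+ε) := by
      apply abs_int_le hLm
      · rintro x ⟨hx1, hx2⟩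
        have hx2' : x ≤ m := hx2
        have hTx : 2*(T*u) ≤ T - x := by rw [hmdef] at hx2'; nlinarith
        have hTx0 : 0 < T - x := by nlinarith
        have hLx : (T - x)/2 ≤ L - x := by
          rw [hmdef] at hx2'; rw [hLdef]; nlinarith
        have hLxT : L - x ≤ T - x := by rw [hLdef]; nlinarith
        have hf0 : 0 ≤ Real.exp (-(θ * x)) * (T - x) ^ β * (L - x) ^ γ :=
          mul_nonneg (mul_nonneg (Real.exp_nonneg _) (Real.rpow_nonneg hTx0.le _))
            (Real.rpow_nonneg (by linarith) _)
        rw [abs_of_nonneg hf0]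
        have b2 : (L - x) ^ γ ≤ ((1/2:ℝ)^γ + 1) * (T - x)^γ := by
          have h := rpow_le_add γ (by linarith : (0:ℝ) < (T-x)/2) hLx hLxT
          have e : ((T-x)/2) ^ γ = (1/2:ℝ)^γ * (T-x)^γ := by
            rw [show (T-x)/2 = (1/2) * (T-x) by ring,
              Real.mul_rpow (by norm_num) hTx0.le]
          rw [e] at h
          nlinarith [Real.rpow_nonneg hTx0.le γ]
        have bE : Real.exp (-(θ * x)) ≤ E := by
          rw [hEdef]; exact Real.exp_le_exp.mpr (by nlinarith)
        have b4 : (T - x) ^ (β+γ) ≤ (2*(T*u))^(-ε) * (T - x)^(β+γ+ε) := by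
          have e : (T - x) ^ (β+γ) = (T - x)^(β+γ+ε) * (T-x)^(-ε) := by
            rw [← Real.rpow_add hTx0]; ring_nf
          rw [e]
          have h5 : (T - x)^(-ε) ≤ (2*(T*u))^(-ε) :=
            Real.rpow_le_rpow_of_nonpos (by linarith) hTx (neg_nonpos.mpr hε)
          have := mul_le_mul_of_nonneg_left h5 (Real.rpow_nonneg hTx0.le (β+γ+ε))
          linarith [this]
        -- combine
        have comb : Real.exp (-(θ * x)) * (T - x) ^ β * (L - x) ^ γ
            ≤ E * (((1/2:ℝ)^γ + 1) * ((T - x)^β * (T-x)^γ)) := by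
          have n3 : (0:ℝ) ≤ (T - x) ^ β := Real.rpow_nonneg hTx0.le _
          have n4 : (0:ℝ) ≤ (L - x) ^ γ := Real.rpow_nonneg (by linarith) _
          have nC : (0:ℝ) ≤ ((1/2:ℝ)^γ + 1) * (T - x)^γ := by
            have := Real.rpow_nonneg hTx0.le γ
            have := Real.rpow_nonneg (show (0:ℝ) ≤ 1/2 by norm_num) γ
            nlinarith
          calc Real.exp (-(θ * x)) * (T - x) ^ β * (L - x) ^ γ
              ≤ E * (T - x) ^ β * (((1/2:ℝ)^γ + 1) * (T - x)^γ) := by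
                apply mul_le_mul (mul_le_mul bE le_rfl n3 hE0) b2 n4
                exact mul_nonneg hE0 n3
            _ = E * (((1/2:ℝ)^γ + 1) * ((T - x)^β * (T-x)^γ)) := by ring
        have e6 : (T - x)^β * (T-x)^γ = (T-x)^(β+γ) := (Real.rpow_add hTx0 β γ).symm
        rw [e6] at comb
        refine comb.trans ?_
        have := mul_le_mul_of_nonneg_left b4
          (mul_nonneg hE0 (by positivity : (0:ℝ) ≤ (1/2:ℝ)^γ + 1))
        calc E * (((1/2:ℝ)^γ + 1) * (T-x)^(β+γ))
            = (E * ((1/2:ℝ)^γ + 1)) * (T-x)^(β+γ) := by ring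
          _ ≤ (E * ((1/2:ℝ)^γ + 1)) * ((2*(T*u))^(-ε) * (T - x)^(β+γ+ε)) := by
              apply mul_le_mul_of_nonneg_left b4
              exact mul_nonneg hE0 (by positivity)
          _ = (E * (((1/2:ℝ)^γ + 1) * (2*(T*u))^(-ε))) * (T - x)^(β+γ+ε) := by ring
      · have h := (rpow_sub_intble (L := T) (a := L/2) (b := m) hp).const_mul
          (E * (((1/2:ℝ)^γ + 1) * (2*(T*u))^(-ε)))
        exact h
      · rintro x ⟨hx1, hx2⟩
        have hTx0 : 0 < T - x := by
          have : x ≤ m := hx2; rw [hmdef] at this; nlinarith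
        apply mul_nonneg (mul_nonneg hE0 _) (Real.rpow_nonneg hTx0.le _)
        exact mul_nonneg (by positivity) (Real.rpow_nonneg (by linarith) _)
    rw [intervalIntegral.integral_const_mul] at hstep
    refine hstep.trans ?_
    apply mul_le_mul_of_nonneg_left
    · -- ∫ x in L/2..m, (T-x)^(β+γ+ε) ≤ T^(β+γ+ε+1)/(β+γ+ε+1)
      have mono : (∫ x in (L/2)..m, (T - x)^(β+γ+ε))
          ≤ ∫ x in (0:ℝ)..T, (T - x)^(β+γ+ε) := by
        apply intervalIntegral.integral_mono_interval (by linarith) hLm hmT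
        · refine Filter.eventually_of_mem (self_mem_ae_restrict measurableSet_Ioc) ?_
          intro x hx
          exact Real.rpow_nonneg (by linarith [hx.2]) _
        · exact rpow_sub_intble hp
      have val : (∫ x in (0:ℝ)..T, (T - x)^(β+γ+ε)) = T^(β+γ+ε+1)/(β+γ+ε+1) := by
        rw [rpow_sub_integral hp, sub_zero, sub_self,
          Real.zero_rpow (by linarith : β+γ+ε + 1 ≠ 0), sub_zero]
      linarith [mono, val.le, val.ge]
    · exact mul_nonneg hE0 (mul_nonneg (by positivity) (Real.rpow_nonneg (by linarith) _))
  -- assemble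
  have hTn : (0:ℝ) ≤ T ^ (-(β+γ)) := Real.rpow_nonneg hT.le _
  have habs : |∫ x in (L/2)..L, Real.exp (-(θ * x)) * (T - x) ^ β * (L - x) ^ γ|
      ≤ (E * (((1/2:ℝ)^γ + 1) * (2*(T*u))^(-ε))) * (T^(β+γ+ε+1)/(β+γ+ε+1))
        + (E * ((T*u)^β + (2*(T*u))^β)) * ((T*u)^(γ+1)/(γ+1)) := by
    rw [hsplit]
    exact (abs_add_le _ _).trans (by linarith [hP1, hP2])
  refine (mul_le_mul_of_nonneg_left habs hTn).trans ?_
  rw [mul_add]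
  have hC : T^(-(β+γ)) * (T^β * T^γ) = 1 := by
    rw [← Real.rpow_add hT, ← Real.rpow_add hT,
      show -(β+γ) + (β + γ) = 0 by ring, Real.rpow_zero]
  -- term 2
  have e3 : (T*u)^β = T^β * u^β := Real.mul_rpow hT.le hu0.le
  have e3' : (2*(T*u))^β = (2:ℝ)^β * (T^β * u^β) := by
    rw [Real.mul_rpow (by norm_num) hTu.le, e3]
  have e5 : (T*u)^(γ+1) = (T^γ * T) * (u^γ * u) := by
    rw [Real.mul_rpow hT.le hu0.le, Real.rpow_add hT, Real.rpow_add hu0,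
      Real.rpow_one, Real.rpow_one]
    try ring
  have euu : u^(β+γ+1) = u^β * (u^γ * u) := by
    rw [show β+γ+1 = β + (γ+1) by ring, Real.rpow_add hu0, Real.rpow_add hu0,
      Real.rpow_one]
  have ht2 : T^(-(β+γ)) * ((E * ((T*u)^β + (2*(T*u))^β)) * ((T*u)^(γ+1)/(γ+1)))
      = ((1 + (2:ℝ)^β) / (γ+1) * u^(β+γ+1)) * (T * E) := by
    rw [e3, e3', e5, euu]
    linear_combination (E * (u^β + (2:ℝ)^β * u^β) * (u^γ * u) * T / (γ+1)) * hC
  -- term 1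
  have e7 : (2*(T*u))^(-ε) = (2:ℝ)^(-ε) * (T^(-ε) * u^(-ε)) := by
    rw [Real.mul_rpow (by norm_num) hTu.le, Real.mul_rpow hT.le hu0.le]
  have hC2 : T^(-(β+γ)) * (T^(-ε) * T^(β+γ+ε+1)) = T := by
    rw [← Real.rpow_add hT, ← Real.rpow_add hT,
      show -(β+γ) + (-ε + (β+γ+ε+1)) = 1 by ring, Real.rpow_one]
  have ht1 : T^(-(β+γ)) * ((E * (((1/2:ℝ)^γ + 1) * (2*(T*u))^(-ε)))
        * (T^(β+γ+ε+1)/(β+γ+ε+1)))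
      = ((((1/2:ℝ)^γ + 1) * (2:ℝ)^(-ε) / (β+γ+ε+1)) * u^(-ε)) * (T * E) := by
    rw [e7]
    linear_combination (E * (((1/2:ℝ)^γ + 1) * ((2:ℝ)^(-ε) * u^(-ε))) / (β+γ+ε+1)) * hC2
  rw [ht1, ht2]
  have hq1 : (0:ℝ) ≤ (1 + (2:ℝ)^β) / (γ+1) * u^(β+γ+1) := by
    apply mul_nonneg (div_nonneg _ (by linarith)) (Real.rpow_nonneg hu0.le _)
    positivity
  have hq2 : (0:ℝ) ≤ (((1/2:ℝ)^γ + 1) * (2:ℝ)^(-ε) / (β+γ+ε+1)) * u^(-ε) := by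
    apply mul_nonneg (div_nonneg (by positivity) (by linarith)) (Real.rpow_nonneg hu0.le _)
  have g1 := mul_le_mul_of_nonneg_left hTE hq1
  have g2 := mul_le_mul_of_nonneg_left hTE hq2
  nlinarith [g1, g2]

noncomputable def Phi (β γ θ T u : ℝ) : ℝ :=
  T ^ (-(β+γ)) * ∫ x in (0:ℝ)..(T*(1-u)),
    Real.exp (-(θ * x)) * (T - x) ^ β * (T*(1-u) - x) ^ γ

lemma Phi_split {β γ θ T u : ℝ} (hγ : -1 < γ) (hT : 0 < T)
    (hu0 : 0 < u) (hu1 : u < 1) :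
    Phi β γ θ T u
      = T ^ (-(β+γ)) * (∫ x in (0:ℝ)..(T*(1-u)/2),
          Real.exp (-(θ * x)) * (T - x) ^ β * (T*(1-u) - x) ^ γ)
        + T ^ (-(β+γ)) * ∫ x in (T*(1-u)/2)..(T*(1-u)),
          Real.exp (-(θ * x)) * (T - x) ^ β * (T*(1-u) - x) ^ γ := by
  have h1u : (0:ℝ) < 1 - u := by linarith
  have hL : 0 < T*(1-u) := mul_pos hT h1u
  have hLT : T*(1-u) < T := by nlinarith
  rw [Phi, ← mul_add]
  congr 1
  exact (intervalIntegral.integral_add_adjacent_intervals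
    (inner_intble hγ (by linarith) (by linarith) hLT)
    (inner_intble hγ (by linarith) le_rfl hLT)).symm

lemma Phi_le {β γ θ ε : ℝ} (hγ : -1 < γ) (hθ : 0 < θ) (hε : 0 ≤ ε)
    (hp : -1 < β + γ + ε) :
    ∃ D : ℝ, 0 < D ∧ ∀ T u : ℝ, 0 < T → 0 < u → u < 1 →
      |Phi β γ θ T u| ≤ D * ((1-u)^γ + u^(β+γ+1) + u^(-ε) + 1) := by
  set D1 := ((1/2:ℝ)^β + 1) * (((1/2:ℝ)^γ + 1) / θ) with hD1
  set D2 := (1/2:ℝ)^(γ+1)/(γ+1) * ((1/3:ℝ)^β + 2) * (2/θ) with hD2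
  set D3 := (1 + (2:ℝ)^β) / (γ+1) * (3/θ) with hD3
  set D4 := (((1/2:ℝ)^γ + 1) * (2:ℝ)^(-ε) / (β+γ+ε+1)) * (3/θ) with hD4
  have hD1p : 0 < D1 := by rw [hD1]; positivity
  have hD2p : 0 < D2 := by
    rw [hD2]
    apply mul_pos (mul_pos (div_pos (by positivity) (by linarith)) (by positivity))
    positivity
  have hD3p : 0 < D3 := by
    apply mul_pos (div_pos (by positivity) (by linarith)); positivity
  have hD4p : 0 < D4 := by
    apply mul_pos (div_pos (by positivity) (by linarith)); positivity
  refine ⟨D1 + D2 + D3 + D4 + 1, by linarith, ?_⟩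
  intro T u hT hu0 hu1
  have h1u : (0:ℝ) < 1 - u := by linarith
  have n1 : (0:ℝ) ≤ (1-u)^γ := Real.rpow_nonneg h1u.le _
  have n2 : (0:ℝ) ≤ u^(β+γ+1) := Real.rpow_nonneg hu0.le _
  have n3 : (0:ℝ) ≤ u^(-ε) := Real.rpow_nonneg hu0.le _
  have hTn : (0:ℝ) ≤ T ^ (-(β+γ)) := Real.rpow_nonneg hT.le _
  have habs : |Phi β γ θ T u| ≤ T ^ (-(β+γ)) * |∫ x in (0:ℝ)..(T*(1-u)/2),
          Real.exp (-(θ * x)) * (T - x) ^ β * (T*(1-u) - x) ^ γ|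
        + T ^ (-(β+γ)) * |∫ x in (T*(1-u)/2)..(T*(1-u)),
          Real.exp (-(θ * x)) * (T - x) ^ β * (T*(1-u) - x) ^ γ| := by
    rw [Phi_split hγ hT hu0 hu1]
    refine (abs_add_le _ _).trans ?_
    rw [abs_mul, abs_mul, abs_of_nonneg hTn]
  have hmain := main_part_bound (β := β) (T := T) (u := u) hγ hθ hT hu0 hu1
  rcases le_or_gt u (1/3) with hu3 | hu3
  · have htail := tail_bound_small (β := β) (T := T) (u := u) hγ hθ hT hu0 hu3 hε hp
    nlinarith [habs]
  · have htail := tail_bound_big (β := β) (T := T) (u := u) hγ hθ hT hu0 hu1 hu3.le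
    nlinarith [habs]

lemma tail_bound_raw {β γ θ T u : ℝ} (hγ : -1 < γ) (hθ : 0 < θ) (hT : 0 < T)
    (hu0 : 0 < u) (hu1 : u < 1) :
    T ^ (-(β+γ)) * |∫ x in (T*(1-u)/2)..(T*(1-u)),
        Real.exp (-(θ * x)) * (T - x) ^ β * (T*(1-u) - x) ^ γ|
      ≤ ((u^β + 1) * ((1/2:ℝ)^(γ+1) * (1-u)^(γ+1)) / (γ+1))
          * (T * Real.exp (-(θ * (T*(1-u)/2)))) := by
  have h1u : (0:ℝ) < 1 - u := by linarith
  have hL : 0 < T*(1-u) := mul_pos hT h1u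
  have hLT : T*(1-u) < T := by nlinarith
  have hTu : 0 < T*u := mul_pos hT hu0
  set L := T*(1-u) with hLdef
  set E := Real.exp (-(θ * (L/2))) with hEdef
  have hE0 : 0 ≤ E := Real.exp_nonneg _
  have hstep : |∫ x in (L/2)..L, Real.exp (-(θ * x)) * (T - x) ^ β * (L - x) ^ γ|
      ≤ ∫ x in (L/2)..L, (E * ((T*u)^β + T^β)) * (L - x) ^ γ := by
    apply abs_int_le (by linarith)
    · rintro x ⟨hx1, hx2⟩
      have hTx : T*u ≤ T - x := by rw [hLdef] at hx2; nlinarith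
      have hTx2 : T - x ≤ T := by nlinarith
      have hLx : 0 ≤ L - x := by linarith
      have hf0 : 0 ≤ Real.exp (-(θ * x)) * (T - x) ^ β * (L - x) ^ γ :=
        mul_nonneg (mul_nonneg (Real.exp_nonneg _) (Real.rpow_nonneg (by linarith) _))
          (Real.rpow_nonneg hLx _)
      rw [abs_of_nonneg hf0]
      have b1 : (T - x) ^ β ≤ (T*u)^β + T^β := rpow_le_add β hTu hTx hTx2
      have bE : Real.exp (-(θ * x)) ≤ E := by
        rw [hEdef]; exact Real.exp_le_exp.mpr (by nlinarith)
      have n2 : (0:ℝ) ≤ (L - x) ^ γ := Real.rpow_nonneg hLx _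
      have n3 : (0:ℝ) ≤ (T - x) ^ β := Real.rpow_nonneg (by linarith) _
      exact mul_le_mul_of_nonneg_right (mul_le_mul bE b1 n3 hE0) n2
    · exact (rpow_sub_intble hγ).const_mul _
    · rintro x ⟨hx1, hx2⟩
      have nA : (0:ℝ) ≤ (T*u)^β + T^β := by
        have := Real.rpow_nonneg hTu.le β; have := Real.rpow_nonneg hT.le β; linarith
      exact mul_nonneg (mul_nonneg hE0 nA) (Real.rpow_nonneg (by linarith) _)
  rw [intervalIntegral.integral_const_mul, rpow_sub_integral hγ,
    show L - L/2 = L/2 by ring, sub_self,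
    Real.zero_rpow (by linarith : γ + 1 ≠ 0), sub_zero] at hstep
  have hTn : (0:ℝ) ≤ T ^ (-(β+γ)) := Real.rpow_nonneg hT.le _
  refine (mul_le_mul_of_nonneg_left hstep hTn).trans (le_of_eq ?_)
  have e3 : (T*u)^β = T^β * u^β := Real.mul_rpow hT.le hu0.le
  have e4 : ((L/2):ℝ)^(γ+1) = (1/2:ℝ)^(γ+1) * ((1-u)^(γ+1) * (T^γ * T)) := by
    rw [show (L/2:ℝ) = (1/2) * ((1-u) * T) by rw [hLdef]; ring,
      Real.mul_rpow (by norm_num) (by positivity),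
      Real.mul_rpow h1u.le hT.le, Real.rpow_add hT, Real.rpow_one]
    try ring
  have hC : T^(-(β+γ)) * (T^β * T^γ) = 1 := by
    rw [← Real.rpow_add hT, ← Real.rpow_add hT,
      show -(β+γ) + (β + γ) = 0 by ring, Real.rpow_zero]
  rw [e3, e4]
  linear_combination (E * (u^β + 1) * (1/2:ℝ)^(γ+1) * (1-u)^(γ+1) * T / (γ+1)) * hC

lemma Phi_tendsto {β γ θ u : ℝ} (hγ : -1 < γ) (hθ : 0 < θ) (hu0 : 0 < u)
    (hu1 : u < 1) :
    Tendsto (fun T => Phi β γ θ T u) atTop (nhds ((1-u)^γ / θ)) := by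
  have h1u : (0:ℝ) < 1 - u := by linarith
  -- tail tends to 0
  have htail : Tendsto (fun T => T ^ (-(β+γ)) * ∫ x in (T*(1-u)/2)..(T*(1-u)),
      Real.exp (-(θ * x)) * (T - x) ^ β * (T*(1-u) - x) ^ γ) atTop (nhds 0) := by
    have hc : 0 < θ*(1-u)/2 := by positivity
    apply squeeze_zero_norm'
      (a := fun T => ((u^β + 1) * ((1/2:ℝ)^(γ+1) * (1-u)^(γ+1)) / (γ+1))
        * (T ^ (1:ℝ) * Real.exp (-(θ*(1-u)/2) * T)))
    · filter_upwards [eventually_gt_atTop 0] with T hT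
      have h := tail_bound_raw (β := β) hγ hθ hT hu0 hu1
      rw [Real.norm_eq_abs, abs_mul,
        abs_of_nonneg (Real.rpow_nonneg hT.le (-(β+γ)))]
      refine h.trans (le_of_eq ?_)
      rw [Real.rpow_one, show -(θ*(1-u)/2) * T = -(θ * (T*(1-u)/2)) by ring]
    · have h := tendsto_rpow_mul_exp_neg_mul_atTop_nhds_zero 1 (θ*(1-u)/2) hc
      have h2 := h.const_mul ((u^β + 1) * ((1/2:ℝ)^(γ+1) * (1-u)^(γ+1)) / (γ+1))
      simpa using h2
  -- main part
  have hmain : Tendsto (fun T => T ^ (-(β+γ)) * ∫ x in (0:ℝ)..(T*(1-u)/2),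
      Real.exp (-(θ * x)) * (T - x) ^ β * (T*(1-u) - x) ^ γ) atTop
      (nhds ((1-u)^γ / θ)) := by
    set F : ℝ → ℝ → ℝ := fun T x => (Set.Ioc (0:ℝ) (T*(1-u)/2)).indicator
      (fun y => T ^ (-(β+γ)) * (Real.exp (-(θ * y)) * (T - y) ^ β * (T*(1-u) - y) ^ γ)) x
      with hF
    have key : Tendsto (fun T => ∫ x in Ioi (0:ℝ), F T x) atTop
        (nhds (∫ x in Ioi (0:ℝ), Real.exp (-(θ * x)) * (1-u)^γ)) := by
      apply MeasureTheory.tendsto_integral_filter_of_dominated_convergence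
        (bound := fun x => (((1/2:ℝ)^β + 1) * (((1/2:ℝ)^γ + 1) * (1-u)^γ))
          * Real.exp (-(θ * x)))
      · filter_upwards [eventually_gt_atTop 0] with T hT
        apply Measurable.aestronglyMeasurable
        exact Measurable.indicator (by fun_prop) measurableSet_Ioc
      · filter_upwards [eventually_gt_atTop 0] with T hT
        apply ae_of_all
        intro x
        simp only [hF]
        by_cases hx : x ∈ Set.Ioc (0:ℝ) (T*(1-u)/2)
        · rw [Set.indicator_of_mem hx]
          obtain ⟨hx0, hx2⟩ := hx
          have hTw : T*(1-u) ≤ T := by nlinarith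
          have hTx : T/2 ≤ T - x := by nlinarith
          have hLx : T*(1-u)/2 ≤ T*(1-u) - x := by linarith
          have hb0 : (0:ℝ) < T*(1-u)/2 := by positivity
          have hf0 : 0 ≤ T ^ (-(β+γ)) *
              (Real.exp (-(θ * x)) * (T - x) ^ β * (T*(1-u) - x) ^ γ) :=
            mul_nonneg (Real.rpow_nonneg hT.le _)
              (mul_nonneg (mul_nonneg (Real.exp_nonneg _)
                (Real.rpow_nonneg (by linarith) _)) (Real.rpow_nonneg (by linarith) _))
          rw [Real.norm_eq_abs, abs_of_nonneg hf0]
          have b1 : (T - x) ^ β ≤ (T/2)^β + T^β :=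
            rpow_le_add β (by linarith) hTx (by linarith)
          have b2 : (T*(1-u) - x) ^ γ ≤ (T*(1-u)/2)^γ + (T*(1-u))^γ :=
            rpow_le_add γ hb0 hLx (by linarith)
          have n1 : (0:ℝ) ≤ Real.exp (-(θ * x)) := Real.exp_nonneg _
          have n4 : (0:ℝ) ≤ (T*(1-u) - x) ^ γ := Real.rpow_nonneg (by linarith) _
          have nA : (0:ℝ) ≤ (T/2)^β + T^β := by
            have := Real.rpow_nonneg (by linarith : (0:ℝ) ≤ T/2) β
            have := Real.rpow_nonneg hT.le β; linarith
          have hprod : (T - x) ^ β * (T*(1-u) - x) ^ γ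
              ≤ ((T/2)^β + T^β) * ((T*(1-u)/2)^γ + (T*(1-u))^γ) :=
            mul_le_mul b1 b2 n4 nA
          have hTn : (0:ℝ) ≤ T ^ (-(β+γ)) := Real.rpow_nonneg hT.le _
          have step : T ^ (-(β+γ)) * ((T - x) ^ β * (T*(1-u) - x) ^ γ)
              ≤ T ^ (-(β+γ)) * (((T/2)^β + T^β) * ((T*(1-u)/2)^γ + (T*(1-u))^γ)) :=
            mul_le_mul_of_nonneg_left hprod hTn
          have heq : T ^ (-(β+γ)) * (((T/2)^β + T^β) * ((T*(1-u)/2)^γ + (T*(1-u))^γ))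
              = ((1/2:ℝ)^β + 1) * (((1/2:ℝ)^γ + 1) * (1-u)^γ) := by
            have eA : (T/2:ℝ)^β = (1/2:ℝ)^β * T^β := by
              rw [show (T/2:ℝ) = (1/2) * T by ring,
                Real.mul_rpow (by norm_num) hT.le]
            have eB : ((T*(1-u)/2):ℝ)^γ = (1/2:ℝ)^γ * ((1-u)^γ * T^γ) := by
              rw [show (T*(1-u)/2:ℝ) = (1/2) * ((1-u) * T) by ring,
                Real.mul_rpow (by norm_num) (by nlinarith),
                Real.mul_rpow h1u.le hT.le]
            have eC : ((T*(1-u)):ℝ)^γ = (1-u)^γ * T^γ := by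
              rw [show (T*(1-u):ℝ) = (1-u) * T by ring, Real.mul_rpow h1u.le hT.le]
            have hC : T^(-(β+γ)) * (T^β * T^γ) = 1 := by
              rw [← Real.rpow_add hT, ← Real.rpow_add hT,
                show -(β+γ) + (β + γ) = 0 by ring, Real.rpow_zero]
            rw [eA, eB, eC]
            linear_combination (((1/2:ℝ)^β + 1) * (((1/2:ℝ)^γ + 1) * (1-u)^γ)) * hC
          calc T ^ (-(β+γ)) * (Real.exp (-(θ * x)) * (T - x) ^ β * (T*(1-u) - x) ^ γ)
              = (T ^ (-(β+γ)) * ((T - x) ^ β * (T*(1-u) - x) ^ γ))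
                  * Real.exp (-(θ * x)) := by ring
            _ ≤ (T ^ (-(β+γ)) * (((T/2)^β + T^β) * ((T*(1-u)/2)^γ + (T*(1-u))^γ)))
                  * Real.exp (-(θ * x)) := mul_le_mul_of_nonneg_right step n1
            _ = (((1/2:ℝ)^β + 1) * (((1/2:ℝ)^γ + 1) * (1-u)^γ))
                  * Real.exp (-(θ * x)) := by rw [heq]
        · rw [Set.indicator_of_notMem hx]
          have : (0:ℝ) ≤ (((1/2:ℝ)^β + 1) * (((1/2:ℝ)^γ + 1) * (1-u)^γ))
              * Real.exp (-(θ * x)) := by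
            have h1 := Real.rpow_nonneg h1u.le γ
            have h2 := Real.rpow_nonneg (show (0:ℝ) ≤ 1/2 by norm_num) β
            have h3 := Real.rpow_nonneg (show (0:ℝ) ≤ 1/2 by norm_num) γ
            have h4 := Real.exp_nonneg (-(θ * x))
            positivity
          simpa using this
      · apply Integrable.const_mul
        have h : IntegrableOn (fun x => Real.exp (-(θ*x))) (Ioi (0:ℝ)) volume := by
          simpa [neg_mul] using exp_neg_integrableOn_Ioi 0 hθ
        exact h
      · refine (ae_restrict_mem measurableSet_Ioi).mono ?_
        intro x hx
        have hx0 : (0:ℝ) < x := hx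
        have hev : ∀ᶠ T in atTop,
            F T x = Real.exp (-(θ * x)) * (((T-x)/T)^β * ((T*(1-u)-x)/T)^γ) := by
          filter_upwards [eventually_gt_atTop 0, eventually_ge_atTop (2*x/(1-u))]
            with T hT0 hT2
          have hxw : x ≤ T*(1-u)/2 := by
            have h := mul_le_mul_of_nonneg_right hT2 h1u.le
            rw [div_mul_cancel₀] at h
            · nlinarith
            · exact h1u.ne'
          have hmem : x ∈ Set.Ioc (0:ℝ) (T*(1-u)/2) := ⟨hx0, hxw⟩
          simp only [hF]
          simp only [Set.indicator_of_mem hmem]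
          have hTx : 0 ≤ T - x := by nlinarith
          have hTwx : 0 ≤ T*(1-u) - x := by nlinarith
          rw [Real.div_rpow hTx hT0.le, Real.div_rpow hTwx hT0.le,
            show -(β+γ) = -β + -γ by ring, Real.rpow_add hT0,
            Real.rpow_neg hT0.le β, Real.rpow_neg hT0.le γ]
          have hbne : T^β ≠ 0 := (Real.rpow_pos_of_pos hT0 β).ne'
          have hgne : T^γ ≠ 0 := (Real.rpow_pos_of_pos hT0 γ).ne'
          field_simp
        rw [tendsto_congr' hev]
        have l1 : Tendsto (fun T : ℝ => (T-x)/T) atTop (nhds 1) := by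
          have h : Tendsto (fun T : ℝ => 1 - x/T) atTop (nhds (1 - 0)) :=
            tendsto_const_nhds.sub (Tendsto.div_atTop tendsto_const_nhds tendsto_id)
          rw [sub_zero] at h
          apply h.congr'
          filter_upwards [eventually_gt_atTop 0] with T hT
          field_simp
        have l2 : Tendsto (fun T : ℝ => (T*(1-u)-x)/T) atTop (nhds (1-u)) := by
          have h : Tendsto (fun T : ℝ => (1-u) - x/T) atTop (nhds ((1-u) - 0)) :=
            tendsto_const_nhds.sub (Tendsto.div_atTop tendsto_const_nhds tendsto_id)
          rw [sub_zero] at h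
          apply h.congr'
          filter_upwards [eventually_gt_atTop 0] with T hT
          field_simp
        have c1 : Tendsto (fun T : ℝ => ((T-x)/T)^β) atTop (nhds 1) := by
          have h := (Real.continuousAt_rpow_const 1 β (Or.inl one_ne_zero)).tendsto.comp l1
          simpa [Real.one_rpow, Function.comp_def] using h
        have c2 : Tendsto (fun T : ℝ => ((T*(1-u)-x)/T)^γ) atTop (nhds ((1-u)^γ)) :=
          (Real.continuousAt_rpow_const (1-u) γ (Or.inl h1u.ne')).tendsto.comp l2
        have h := (c1.mul c2).const_mul (Real.exp (-(θ * x)))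
        simpa using h
    -- identify limit and function
    have hval : ∫ x in Ioi (0:ℝ), Real.exp (-(θ * x)) * (1-u)^γ = (1-u)^γ / θ := by
      rw [MeasureTheory.integral_mul_const, int_exp_Ioi hθ]
      ring
    rw [hval] at key
    apply key.congr'
    filter_upwards [eventually_gt_atTop 0] with T hT
    have hb0 : (0:ℝ) ≤ T*(1-u)/2 := by positivity
    calc ∫ x in Ioi (0:ℝ), F T x
        = ∫ x in Ioc (0:ℝ) (T*(1-u)/2), T ^ (-(β+γ)) *
            (Real.exp (-(θ * x)) * (T - x) ^ β * (T*(1-u) - x) ^ γ) := by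
          simp only [hF]
          rw [MeasureTheory.integral_indicator measurableSet_Ioc,
            Measure.restrict_restrict measurableSet_Ioc,
            Set.inter_eq_self_of_subset_left Set.Ioc_subset_Ioi_self]
      _ = T ^ (-(β+γ)) * ∫ x in Ioc (0:ℝ) (T*(1-u)/2),
            Real.exp (-(θ * x)) * (T - x) ^ β * (T*(1-u) - x) ^ γ :=
          MeasureTheory.integral_const_mul _ _
      _ = T ^ (-(β+γ)) * ∫ x in (0:ℝ)..(T*(1-u)/2),
            Real.exp (-(θ * x)) * (T - x) ^ β * (T*(1-u) - x) ^ γ := by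
          rw [intervalIntegral.integral_of_le hb0]
  have hsum := hmain.add htail
  rw [add_zero] at hsum
  refine hsum.congr' ?_
  filter_upwards [eventually_gt_atTop 0] with T hT
  exact (Phi_split hγ hT hu0 hu1).symm

lemma Phi_meas {β γ θ T : ℝ} (hT : 0 < T) :
    AEStronglyMeasurable (fun u => Phi β γ θ T u)
      (volume.restrict (Ioo (0:ℝ) 1)) := by
  set K : ℝ → ℝ → ℝ := fun u x => ({p : ℝ × ℝ | 0 < p.2 ∧ p.2 ≤ T*(1-p.1)}.indicator
      (fun p => Real.exp (-(θ * p.2)) * (T - p.2)^β * (T*(1-p.1) - p.2)^γ)) (u, x)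
    with hK
  have hmeas : StronglyMeasurable (Function.uncurry K) := by
    apply Measurable.stronglyMeasurable
    apply Measurable.indicator (by fun_prop)
    apply MeasurableSet.inter
    · exact measurableSet_lt measurable_const measurable_snd
    · exact measurableSet_le measurable_snd (by fun_prop)
  have hsm : StronglyMeasurable (fun u : ℝ => T^(-(β+γ)) * ∫ x, K u x ∂volume) :=
    stronglyMeasurable_const.mul hmeas.integral_prod_right
  refine AEStronglyMeasurable.congr
    (f := fun u => T^(-(β+γ)) * ∫ x, K u x ∂volume)
    (hsm.aestronglyMeasurable.restrict) ?_
  filter_upwards [ae_restrict_mem measurableSet_Ioo] with u hu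
  obtain ⟨hu0, hu1⟩ := hu
  have h1u : (0:ℝ) < 1 - u := by linarith
  have hL : (0:ℝ) ≤ T*(1-u) := by positivity
  have hind : (fun x : ℝ => K u x)
      = fun x => (Set.Ioc (0:ℝ) (T*(1-u))).indicator
          (fun x => Real.exp (-(θ * x)) * (T - x)^β * (T*(1-u) - x)^γ) x := by
    funext x
    simp only [hK]
    by_cases hx : 0 < x ∧ x ≤ T*(1-u)
    · rw [Set.indicator_of_mem (by exact hx), Set.indicator_of_mem (by exact hx)]
    · rw [Set.indicator_of_notMem (by exact hx), Set.indicator_of_notMem (by exact hx)]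
  rw [Phi, intervalIntegral.integral_of_le hL, hind,
    MeasureTheory.integral_indicator measurableSet_Ioc]

lemma KI {β γ θ T : ℝ} (s : ℝ) :
    Real.exp (-(θ*T)) * ∫ t in s..T, Real.exp (θ*t) * t^β * (t-s)^γ
      = ∫ x in (0:ℝ)..(T - s), Real.exp (-(θ*x)) * (T - x)^β * ((T - s) - x)^γ := by
  have h := intervalIntegral.integral_comp_sub_left
    (a := (0:ℝ)) (b := T - s) (fun t => Real.exp (θ*t) * t^β * (t-s)^γ) T
  rw [sub_sub_cancel, sub_zero] at h
  rw [← h, ← intervalIntegral.integral_const_mul]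
  apply intervalIntegral.integral_congr
  intro x _
  show Real.exp (-(θ*T)) * (Real.exp (θ*(T - x)) * (T - x)^β * ((T - x) - s)^γ) = _
  rw [show (T - x) - s = (T - s) - x by ring, ← mul_assoc, ← mul_assoc,
    ← Real.exp_add, show -(θ*T) + θ*(T - x) = -(θ*x) by ring]

lemma scale_eq {α β γ θ T : ℝ} (hT : 0 < T) :
    (Real.exp (-(2*θ*T)) * ∫ s in (0:ℝ)..T, s ^ (2*α) *
      (∫ t in s..T, Real.exp (θ * t) * t ^ β * (t - s) ^ γ) ^ 2) / T ^ (2*α+2*β+2*γ+1)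
    = ∫ u in Ioo (0:ℝ) 1, u ^ (2*α) * (Phi β γ θ T u)^2 := by
  have hsub := intervalIntegral.integral_comp_mul_left (a := (0:ℝ)) (b := (1:ℝ))
    (fun s => s ^ (2*α) * (∫ t in s..T, Real.exp (θ * t) * t ^ β * (t - s) ^ γ) ^ 2)
    hT.ne'
  rw [mul_zero, mul_one, smul_eq_mul] at hsub
  have hOuter : (∫ s in (0:ℝ)..T, s ^ (2*α) *
      (∫ t in s..T, Real.exp (θ * t) * t ^ β * (t - s) ^ γ) ^ 2)
      = T * ∫ u in (0:ℝ)..1,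
        (fun s => s ^ (2*α) * (∫ t in s..T, Real.exp (θ * t) * t ^ β * (t - s) ^ γ) ^ 2)
          (T*u) := by
    rw [hsub, ← mul_assoc, mul_inv_cancel₀ hT.ne', one_mul]
  rw [div_eq_mul_inv, ← Real.rpow_neg hT.le, hOuter]
  have hc1 : ∀ X : ℝ, Real.exp (-(2*θ*T)) * (T * X) * T^(-(2*α+2*β+2*γ+1))
      = (T^(-(2*α+2*β+2*γ+1)) * T * Real.exp (-(2*θ*T))) * X := fun X => by ring
  rw [hc1, ← intervalIntegral.integral_const_mul,
    intervalIntegral.integral_of_le (by norm_num : (0:ℝ) ≤ 1),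
    MeasureTheory.integral_Ioc_eq_integral_Ioo]
  apply MeasureTheory.setIntegral_congr_fun measurableSet_Ioo
  intro u hu
  obtain ⟨hu0, hu1⟩ := hu
  show (T^(-(2*α+2*β+2*γ+1)) * T * Real.exp (-(2*θ*T)))
      * ((T*u) ^ (2*α) * (∫ t in (T*u)..T, Real.exp (θ * t) * t ^ β * (t - T*u) ^ γ) ^ 2)
    = u ^ (2*α) * (Phi β γ θ T u)^2
  have hI := KI (β := β) (γ := γ) (θ := θ) (T := T) (T*u)
  rw [show T - T*u = T*(1-u) by ring] at hI
  rw [Phi, ← hI, Real.mul_rpow hT.le hu0.le]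
  have hPow : T^(-(2*α+2*β+2*γ+1)) * T * T^(2*α) = T^(-(β+γ)) * T^(-(β+γ)) := by
    have h1 : T^(-(2*α+2*β+2*γ+1)) * T^(2*α+1) = T^(-(β+γ)) * T^(-(β+γ)) := by
      rw [← Real.rpow_add hT, ← Real.rpow_add hT]; congr 1; ring
    have h2 : T^(2*α+1) = T^(2*α) * T := by
      rw [Real.rpow_add hT, Real.rpow_one]
    linear_combination h1 - T^(-(2*α+2*β+2*γ+1)) * h2
  have hexp : Real.exp (-(2*θ*T)) = Real.exp (-(θ*T)) * Real.exp (-(θ*T)) := by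
    rw [← Real.exp_add]; congr 1; ring
  rw [hexp]
  linear_combination (u^(2*α) * (Real.exp (-(θ*T)))^2
    * (∫ t in (T*u)..T, Real.exp (θ * t) * t ^ β * (t - T*u) ^ γ)^2) * hPow


/-- Lemma 4.5, case `γ > -1/2`: asymptotics of
`E(e^{-θT} ∫₀ᵀ e^{θs} dX_s)²`. -/
theorem stmt_17 (α β γ θ : ℝ) (hα : -(1/2 : ℝ) < α)
    (hαβγ : -(3/2 : ℝ) < α + β + γ) (hγ' : -(1/2 : ℝ) < γ) (hθ : 0 < θ)
    (G : ℝ → ℝ)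
    (hG : ∀ T : ℝ, G T = Real.exp (-(2 * θ * T)) * ∫ s in (0:ℝ)..T, s ^ (2*α) *
      (∫ t in s..T, Real.exp (θ * t) * t ^ β * (t - s) ^ γ) ^ 2) :
    Tendsto (fun T : ℝ => G T / T ^ (2*α+2*β+2*γ+1)) atTop
      (nhds ((Real.Gamma (2*α+1) * Real.Gamma (2*γ+1) / Real.Gamma (2*α+2*γ+2))
        / θ ^ (2 : ℕ))) := by
  have hγ1 : (-1:ℝ) < γ := by linarith
  have h2α : (-1:ℝ) < 2*α := by linarith
  have h2γ : (-1:ℝ) < 2*γ := by linarith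
  obtain ⟨ε, hε0, hεα, hεp⟩ : ∃ ε : ℝ, 0 ≤ ε ∧ -1 < 2*α - 2*ε ∧ -1 < β + γ + ε := by
    refine ⟨(max (-(β+γ+1)) 0 + (α + 1/2))/2, ?_, ?_, ?_⟩
    · have := le_max_right (-(β+γ+1)) (0:ℝ); linarith
    · have h1 := max_lt (show -(β+γ+1) < α + 1/2 by linarith)
        (show (0:ℝ) < α + 1/2 by linarith)
      linarith
    · have := le_max_left (-(β+γ+1)) (0:ℝ); linarith
  obtain ⟨D, hD, hbound⟩ := Phi_le (β := β) (θ := θ) hγ1 hθ hε0 hεp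
  set gbar : ℝ → ℝ := fun u => 4*D^2 * (u^(2*α) * (1-u)^(2*γ))
    + 4*D^2 * u^(2*α+2*β+2*γ+2) + 4*D^2 * u^(2*α - 2*ε) + 4*D^2 * u^(2*α) with hgbar
  have hdct : Tendsto (fun T => ∫ u in Ioo (0:ℝ) 1, u^(2*α) * (Phi β γ θ T u)^2)
      atTop (nhds (∫ u in Ioo (0:ℝ) 1, u^(2*α) * ((1-u)^γ / θ)^2)) := by
    apply MeasureTheory.tendsto_integral_filter_of_dominated_convergence (bound := gbar)
    · filter_upwards [eventually_gt_atTop 0] with T hT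
      have h := Phi_meas (β := β) (γ := γ) (θ := θ) hT
      have hm : AEStronglyMeasurable (fun u : ℝ => u^(2*α))
          (volume.restrict (Ioo (0:ℝ) 1)) :=
        (by fun_prop : Measurable fun u : ℝ => u^(2*α)).aestronglyMeasurable
      exact (hm.mul (h.mul h)).congr (Filter.Eventually.of_forall fun u => by
        simp only [Pi.mul_apply]; ring)
    · filter_upwards [eventually_gt_atTop 0] with T hT
      filter_upwards [ae_restrict_mem measurableSet_Ioo] with u hu
      obtain ⟨hu0, hu1⟩ := hu
      have h1u : (0:ℝ) < 1 - u := by linarith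
      have hb := hbound T u hT hu0 hu1
      have ha0 : (0:ℝ) ≤ (1-u)^γ := Real.rpow_nonneg h1u.le _
      have hb0 : (0:ℝ) ≤ u^(β+γ+1) := Real.rpow_nonneg hu0.le _
      have hc0 : (0:ℝ) ≤ u^(-ε) := Real.rpow_nonneg hu0.le _
      have hA0 : (0:ℝ) ≤ u^(2*α) := Real.rpow_nonneg hu0.le _
      have hsq : (Phi β γ θ T u)^2
          ≤ D^2 * ((1-u)^γ + u^(β+γ+1) + u^(-ε) + 1)^2 := by
        have h1 : (Phi β γ θ T u)^2 = |Phi β γ θ T u|^2 := (sq_abs _).symm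
        rw [h1]
        calc |Phi β γ θ T u|^2 ≤ (D * ((1-u)^γ + u^(β+γ+1) + u^(-ε) + 1))^2 :=
              pow_le_pow_left₀ (abs_nonneg _) hb 2
          _ = D^2 * ((1-u)^γ + u^(β+γ+1) + u^(-ε) + 1)^2 := by ring
      have hψ : ((1-u)^γ + u^(β+γ+1) + u^(-ε) + 1)^2
          ≤ 4*(((1-u)^γ)^2 + (u^(β+γ+1))^2 + (u^(-ε))^2 + 1) := by
        nlinarith [sq_nonneg ((1-u)^γ - u^(β+γ+1)), sq_nonneg ((1-u)^γ - u^(-ε)),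
          sq_nonneg ((1-u)^γ - 1), sq_nonneg (u^(β+γ+1) - u^(-ε)),
          sq_nonneg (u^(β+γ+1) - 1), sq_nonneg (u^(-ε) - 1)]
      have ea : ((1-u)^γ)^2 = (1-u)^(2*γ) := by
        rw [sq, ← Real.rpow_add h1u, show γ+γ = 2*γ by ring]
      have eb : u^(2*α) * (u^(β+γ+1))^2 = u^(2*α+2*β+2*γ+2) := by
        rw [sq, ← Real.rpow_add hu0, ← Real.rpow_add hu0,
          show 2*α+(β+γ+1+(β+γ+1)) = 2*α+2*β+2*γ+2 by ring]
      have ec : u^(2*α) * (u^(-ε))^2 = u^(2*α - 2*ε) := by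
        rw [sq, ← Real.rpow_add hu0, ← Real.rpow_add hu0,
          show 2*α+(-ε+ -ε) = 2*α - 2*ε by ring]
      rw [Real.norm_eq_abs, abs_of_nonneg (mul_nonneg hA0 (sq_nonneg _))]
      calc u^(2*α) * (Phi β γ θ T u)^2
          ≤ u^(2*α) * (D^2 * ((1-u)^γ + u^(β+γ+1) + u^(-ε) + 1)^2) :=
            mul_le_mul_of_nonneg_left hsq hA0
        _ ≤ u^(2*α) * (D^2 * (4*(((1-u)^γ)^2 + (u^(β+γ+1))^2 + (u^(-ε))^2 + 1))) :=
            mul_le_mul_of_nonneg_left (mul_le_mul_of_nonneg_left hψ (sq_nonneg D)) hA0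
        _ = 4*D^2 * (u^(2*α) * ((1-u)^γ)^2) + 4*D^2 * (u^(2*α) * (u^(β+γ+1))^2)
            + 4*D^2 * (u^(2*α) * (u^(-ε))^2) + 4*D^2 * u^(2*α) := by ring
        _ = gbar u := by
            simp only [hgbar]
            rw [ea, eb, ec]
    · have t1 : IntegrableOn (fun u : ℝ => u^(2*α) * (1-u)^(2*γ))
          (Ioo (0:ℝ) 1) volume :=
        ((intervalIntegrable_iff_integrableOn_Ioc_of_le (by norm_num)).mp
          (beta_integrable h2α h2γ)).mono_set Ioo_subset_Ioc_self
      have t2 : IntegrableOn (fun u : ℝ => u^(2*α+2*β+2*γ+2)) (Ioo (0:ℝ) 1) volume :=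
        ((intervalIntegrable_iff_integrableOn_Ioc_of_le (by norm_num)).mp
          (intervalIntegrable_rpow' (by linarith))).mono_set Ioo_subset_Ioc_self
      have t3 : IntegrableOn (fun u : ℝ => u^(2*α - 2*ε)) (Ioo (0:ℝ) 1) volume :=
        ((intervalIntegrable_iff_integrableOn_Ioc_of_le (by norm_num)).mp
          (intervalIntegrable_rpow' (by linarith))).mono_set Ioo_subset_Ioc_self
      have t4 : IntegrableOn (fun u : ℝ => u^(2*α)) (Ioo (0:ℝ) 1) volume :=
        ((intervalIntegrable_iff_integrableOn_Ioc_of_le (by norm_num)).mp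
          (intervalIntegrable_rpow' (by linarith))).mono_set Ioo_subset_Ioc_self
      simp only [hgbar]
      exact (((t1.const_mul _).add (t2.const_mul _)).add (t3.const_mul _)).add
        (t4.const_mul _)
    · filter_upwards [ae_restrict_mem measurableSet_Ioo] with u hu
      exact ((Phi_tendsto hγ1 hθ hu.1 hu.2).pow 2).const_mul _
  have hval : ∫ u in Ioo (0:ℝ) 1, u^(2*α) * ((1-u)^γ / θ)^2
      = (Real.Gamma (2*α+1) * Real.Gamma (2*γ+1) / Real.Gamma (2*α+2*γ+2))
          / θ^(2:ℕ) := by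
    have hcong : ∫ u in Ioo (0:ℝ) 1, u^(2*α) * ((1-u)^γ / θ)^2
        = ∫ u in Ioo (0:ℝ) 1, (u^(2*α) * (1-u)^(2*γ)) * (θ^(2:ℕ))⁻¹ := by
      apply MeasureTheory.setIntegral_congr_fun measurableSet_Ioo
      intro u hu
      have h1u : (0:ℝ) < 1 - u := by linarith [hu.2]
      have ea : ((1-u)^γ)^2 = (1-u)^(2*γ) := by
        rw [sq, ← Real.rpow_add h1u, show γ+γ = 2*γ by ring]
      show u^(2*α) * ((1-u)^γ / θ)^2 = (u^(2*α) * (1-u)^(2*γ)) * (θ^(2:ℕ))⁻¹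
      rw [div_pow, ea]
      ring
    rw [hcong, MeasureTheory.integral_mul_const,
      ← MeasureTheory.integral_Ioc_eq_integral_Ioo,
      ← intervalIntegral.integral_of_le (by norm_num : (0:ℝ) ≤ 1)]
    have hbeta := real_beta (a := 2*α+1) (b := 2*γ+1) (by linarith) (by linarith)
    rw [show 2*α+1-1 = 2*α by ring, show 2*γ+1-1 = 2*γ by ring,
      show 2*α+1+(2*γ+1) = 2*α+2*γ+2 by ring] at hbeta
    rw [hbeta]
    ring
  rw [hval] at hdct
  apply hdct.congr'
  filter_upwards [eventually_gt_atTop 0] with T hT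
  rw [hG T]
  exact (scale_eq hT).symm
end
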